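/- arXiv:2301.01345 — 6 statements merged into one kernel-verified Lean document; each statement's English description precedes it below -/
import Mathlib

section
/- Let μ and ν be Borel probability measures on ℝ^d (d ≥ 1), each with finite support. If their half-space depths coincide at every point, i.e., D_μ(x) = D_ν(x) for all x ∈ ℝ^d, then μ = ν. -/
open MeasureTheory ProbabilityTheory Filter Topology
open scoped ENNReal RealInnerProductSpace

/-- Tukey's half-space depth of `x` with respect to `μ`:
`D_μ(x) = inf_{u ∈ S^{d-1}} μ{ y : ⟨u, y⟩ ≤ ⟨u, x⟩ }`. -/
noncomputable def halfSpaceDepth {d : ℕ} (μ : Measure (EuclideanSpace ℝ (Fin d)))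
    (x : EuclideanSpace ℝ (Fin d)) : ℝ :=
  ⨅ u : Metric.sphere (0 : EuclideanSpace ℝ (Fin d)) 1,
    (μ {y | ⟪(u : EuclideanSpace ℝ (Fin d)), y⟫ ≤ ⟪(u : EuclideanSpace ℝ (Fin d)), x⟫}).toReal

namespace TukeyAux

noncomputable instance lexLO (n : ℕ) : LinearOrder (Lex (Fin n → ℝ)) :=
  @Pi.Lex.linearOrder (Fin n) (fun _ => ℝ) _
    ⟨(IsWellFounded.wf : WellFounded fun a b : Fin n => a < b)⟩ _

variable {d : ℕ}

/-- The lexicographic "signature" of a point: first the inner product with `u`,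
then all coordinates. -/
noncomputable def phi (u y : EuclideanSpace ℝ (Fin d)) : Lex (Fin (d+1) → ℝ) :=
  toLex (Fin.cons ⟪u, y⟫ (fun i => y i))

/-- The lexicographic flag halfspace at `x` in direction data `u`. -/
def flagSet (u x : EuclideanSpace ℝ (Fin d)) : Set (EuclideanSpace ℝ (Fin d)) :=
  {y | phi u y ≤ phi u x}

lemma phi_injective (u : EuclideanSpace ℝ (Fin d)) : Function.Injective (phi u) := by
  intro y z h
  have h' : Fin.cons ⟪u, y⟫ (fun i => y i) = (Fin.cons ⟪u, z⟫ (fun i => z i) : Fin (d+1) → ℝ) :=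
    toLex.injective h
  ext i
  have := congrFun h' i.succ
  simpa [Fin.cons_succ] using this

lemma mem_flagSet_self (u x : EuclideanSpace ℝ (Fin d)) : x ∈ flagSet u x :=
  show phi u x ≤ phi u x from le_refl _

lemma flagSet_mono {u y x : EuclideanSpace ℝ (Fin d)} (h : phi u y ≤ phi u x) :
    flagSet u y ⊆ flagSet u x := fun _ hz => le_trans hz h

lemma lex_le_first {m : ℕ} {f g : Fin (m+1) → ℝ} (h : toLex f ≤ toLex g) : f 0 ≤ g 0 := by
  rcases eq_or_lt_of_le h with heq | hlt
  · exact le_of_eq (congrFun (toLex.injective heq) 0)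
  · obtain ⟨i, hpre, hi⟩ := hlt
    rcases eq_or_ne i 0 with rfl | hne
    · exact le_of_lt hi
    · exact le_of_eq (hpre 0 (Fin.pos_of_ne_zero hne))

lemma flagSet_subset_halfspace (u x : EuclideanSpace ℝ (Fin d)) :
    flagSet u x ⊆ {y | ⟪u, y⟫ ≤ ⟪u, x⟫} := by
  intro y hy
  have := lex_le_first (m := d) hy
  simpa [Fin.cons_zero] using this

lemma measure_eq_filter (μ : Measure (EuclideanSpace ℝ (Fin d)))
    (S₀ : Finset (EuclideanSpace ℝ (Fin d))) (hS : μ (↑S₀ : Set _)ᶜ = 0)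
    (A : Set (EuclideanSpace ℝ (Fin d))) [DecidablePred (· ∈ A)] :
    μ A = μ (↑(S₀.filter (· ∈ A)) : Set _) := by
  have h1 : (↑(S₀.filter (· ∈ A)) : Set _) = A ∩ ↑S₀ := by
    ext z; simp [Finset.mem_filter, and_comm]
  rw [h1]
  apply le_antisymm
  · calc μ A ≤ μ ((A ∩ ↑S₀) ∪ (↑S₀ : Set _)ᶜ) := by
          apply measure_mono; intro z hz
          by_cases h : z ∈ (↑S₀ : Set _)
          · exact Or.inl ⟨hz, h⟩
          · exact Or.inr h
      _ ≤ μ (A ∩ ↑S₀) + μ ((↑S₀ : Set _)ᶜ) := measure_union_le _ _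
      _ = μ (A ∩ ↑S₀) := by rw [hS, add_zero]
  · exact measure_mono Set.inter_subset_left

lemma measure_finset_coe (μ : Measure (EuclideanSpace ℝ (Fin d)))
    (F : Finset (EuclideanSpace ℝ (Fin d))) :
    μ (↑F : Set _) = ∑ s ∈ F, μ {s} := by
  classical
  induction F using Finset.induction_on with
  | empty => simp
  | insert a F hnot ih =>
    rw [Finset.coe_insert, Finset.sum_insert hnot, ← ih, Set.insert_eq,
      measure_union (by simpa using hnot) F.measurableSet]

lemma measure_toReal_eq (μ : Measure (EuclideanSpace ℝ (Fin d))) [IsProbabilityMeasure μ]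
    (S₀ : Finset (EuclideanSpace ℝ (Fin d))) (hS : μ (↑S₀ : Set _)ᶜ = 0)
    (A : Set (EuclideanSpace ℝ (Fin d))) [DecidablePred (· ∈ A)] :
    (μ A).toReal = ∑ s ∈ S₀.filter (· ∈ A), (μ {s}).toReal := by
  rw [measure_eq_filter μ S₀ hS A, measure_finset_coe, ENNReal.toReal_sum]
  intro s _
  exact measure_ne_top μ _

lemma sign_pos_eventually {m : ℕ} (c : Fin m → ℝ) (i : Fin m)
    (hpre : ∀ j, j < i → c j = 0) (hi : 0 < c i) :
    ∀ᶠ ε in 𝓝[>] (0:ℝ), 0 < ∑ j, c j * ε ^ (j : ℕ) := by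
  classical
  set M : ℝ := ∑ j, |c j| with hM
  have hM0 : 0 ≤ M := Finset.sum_nonneg fun j _ => abs_nonneg _
  have hε₀ : (0:ℝ) < min 1 (c i / (M + 1)) := by
    apply lt_min one_pos
    exact div_pos hi (by linarith)
  filter_upwards [Ioo_mem_nhdsGT hε₀] with ε hε
  obtain ⟨hε0, hεlt⟩ := hε
  have hε1 : ε ≤ 1 := le_of_lt (lt_of_lt_of_le hεlt (min_le_left _ _))
  have hεc : ε < c i / (M + 1) := lt_of_lt_of_le hεlt (min_le_right _ _)
  have key : ∀ j ∈ Finset.univ.erase i, -( |c j| * ε ^ ((i:ℕ)+1)) ≤ c j * ε ^ (j:ℕ) := by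
    intro j hj
    have hjne : j ≠ i := Finset.ne_of_mem_erase hj
    rcases lt_trichotomy j i with h | h | h
    · rw [hpre j h]; simp
    · exact absurd h hjne
    · have h1 : ε ^ (j:ℕ) ≤ ε ^ ((i:ℕ)+1) := by
        apply pow_le_pow_of_le_one (le_of_lt hε0) hε1
        exact h
      calc -( |c j| * ε ^ ((i:ℕ)+1)) ≤ -( |c j| * ε ^ (j:ℕ)) := by
              apply neg_le_neg
              exact mul_le_mul_of_nonneg_left h1 (abs_nonneg _)
        _ ≤ c j * ε ^ (j:ℕ) := by
              rw [neg_mul_eq_neg_mul]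
              exact mul_le_mul_of_nonneg_right (neg_abs_le _) (pow_nonneg (le_of_lt hε0) _)
  have hsum : ∑ j, c j * ε ^ (j:ℕ)
      = c i * ε ^ (i:ℕ) + ∑ j ∈ Finset.univ.erase i, c j * ε ^ (j:ℕ) := by
    rw [← Finset.add_sum_erase _ _ (Finset.mem_univ i)]
  rw [hsum]
  have htail : -(M * ε ^ ((i:ℕ)+1)) ≤ ∑ j ∈ Finset.univ.erase i, c j * ε ^ (j:ℕ) := by
    calc -(M * ε ^ ((i:ℕ)+1)) = -(∑ j, |c j| * ε ^ ((i:ℕ)+1)) := by rw [← Finset.sum_mul]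
      _ ≤ -(∑ j ∈ Finset.univ.erase i, |c j| * ε ^ ((i:ℕ)+1)) := by
          apply neg_le_neg
          apply Finset.sum_le_sum_of_subset_of_nonneg (Finset.erase_subset _ _)
          intro j _ _; positivity
      _ = ∑ j ∈ Finset.univ.erase i, -( |c j| * ε ^ ((i:ℕ)+1)) := by rw [Finset.sum_neg_distrib]
      _ ≤ _ := Finset.sum_le_sum key
  have hpow : 0 < ε ^ (i:ℕ) := pow_pos hε0 _
  have hmain : M * ε < c i := by
    have : ε * (M+1) < c i := by
      rw [lt_div_iff₀ (by linarith : (0:ℝ) < M + 1)] at hεc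
      exact hεc
    nlinarith
  have hps : ε ^ ((i:ℕ)+1) = ε ^ (i:ℕ) * ε := pow_succ ε (i:ℕ)
  rw [hps] at htail
  nlinarith [htail, mul_pos hpow (sub_pos.mpr hmain)]

lemma lex_lt_eventually {m : ℕ} {f g : Fin m → ℝ} (h : toLex f < toLex g) :
    ∀ᶠ ε in 𝓝[>] (0:ℝ), ∑ j, f j * ε ^ (j:ℕ) < ∑ j, g j * ε ^ (j:ℕ) := by
  obtain ⟨i, hpre, hi⟩ := h
  have := sign_pos_eventually (fun j => g j - f j) i
    (fun j hj => sub_eq_zero_of_eq (hpre j hj).symm) (by simpa using sub_pos.mpr hi)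
  filter_upwards [this] with ε hε
  have : ∑ j, (g j - f j) * ε ^ (j:ℕ) = ∑ j, g j * ε ^ (j:ℕ) - ∑ j, f j * ε ^ (j:ℕ) := by
    rw [← Finset.sum_sub_distrib]; congr 1; funext j; ring
  linarith [this ▸ hε]

noncomputable def wvec (u : EuclideanSpace ℝ (Fin d)) (ε : ℝ) : EuclideanSpace ℝ (Fin d) :=
  u + ∑ i : Fin d, (ε ^ ((i:ℕ)+1)) • EuclideanSpace.single i (1:ℝ)

lemma inner_wvec (u : EuclideanSpace ℝ (Fin d)) (ε : ℝ) (y : EuclideanSpace ℝ (Fin d)) :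
    ⟪wvec u ε, y⟫ = ∑ j : Fin (d+1),
      (Fin.cons ⟪u, y⟫ (fun i => y i) : Fin (d+1) → ℝ) j * ε ^ (j:ℕ) := by
  rw [Fin.sum_univ_succ]
  simp only [Fin.cons_zero, Fin.cons_succ, Fin.val_succ, Fin.val_zero, pow_zero, mul_one]
  unfold wvec
  rw [inner_add_left, sum_inner]
  congr 1
  apply Finset.sum_congr rfl
  intro i _
  rw [real_inner_smul_left, EuclideanSpace.inner_single_left]
  simp [mul_comm]

lemma exists_unit_vector (u : EuclideanSpace ℝ (Fin d)) (hu : ‖u‖ = 1)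
    (x : EuclideanSpace ℝ (Fin d)) (G : Finset (EuclideanSpace ℝ (Fin d))) :
    ∃ w : EuclideanSpace ℝ (Fin d), ‖w‖ = 1 ∧
      ∀ y ∈ G, (⟪w, y⟫ ≤ ⟪w, x⟫ ↔ phi u y ≤ phi u x) := by
  classical
  have hpos : ∀ᶠ ε in 𝓝[>] (0:ℝ), 0 < ⟪wvec u ε, u⟫ := by
    have h0 : (0:ℝ) < (Fin.cons ⟪u, u⟫ (fun i => u i) : Fin (d+1) → ℝ) 0 := by
      simp only [Fin.cons_zero]
      rw [real_inner_self_eq_norm_sq, hu]; norm_num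
    have := sign_pos_eventually (Fin.cons ⟪u, u⟫ (fun i => u i)) 0
      (fun j hj => absurd hj (by simp)) h0
    filter_upwards [this] with ε hε
    rw [inner_wvec]; exact hε
  have hiff : ∀ y ∈ G, ∀ᶠ ε in 𝓝[>] (0:ℝ),
      (⟪wvec u ε, y⟫ ≤ ⟪wvec u ε, x⟫ ↔ phi u y ≤ phi u x) := by
    intro y _
    rcases lt_trichotomy (phi u y) (phi u x) with h | h | h
    · filter_upwards [lex_lt_eventually h] with ε hε
      rw [inner_wvec, inner_wvec]
      exact iff_of_true (le_of_lt hε) (le_of_lt h)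
    · have : y = x := phi_injective u h
      subst this
      exact Filter.Eventually.of_forall fun ε => iff_of_true (le_refl _) (le_refl _)
    · filter_upwards [lex_lt_eventually h] with ε hε
      rw [inner_wvec, inner_wvec]
      exact iff_of_false (not_le.mpr hε) (not_le.mpr h)
  have hall : ∀ᶠ ε in 𝓝[>] (0:ℝ), (0 < ⟪wvec u ε, u⟫) ∧
      ∀ y ∈ G, (⟪wvec u ε, y⟫ ≤ ⟪wvec u ε, x⟫ ↔ phi u y ≤ phi u x) :=
    hpos.and ((eventually_all_finset G).mpr hiff)
  obtain ⟨ε, hε1, hε2⟩ := hall.exists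
  have hw0 : wvec u ε ≠ 0 := by
    intro h
    rw [h, inner_zero_left] at hε1
    exact lt_irrefl 0 hε1
  refine ⟨‖wvec u ε‖⁻¹ • wvec u ε, norm_smul_inv_norm hw0, ?_⟩
  intro y hy
  rw [real_inner_smul_left, real_inner_smul_left]
  have hinv : 0 < ‖wvec u ε‖⁻¹ := inv_pos.mpr (norm_pos_iff.mpr hw0)
  rw [mul_le_mul_iff_of_pos_left hinv]
  exact hε2 y hy

lemma depth_le_flag (μ : Measure (EuclideanSpace ℝ (Fin d))) [IsProbabilityMeasure μ]
    (S₀ : Finset (EuclideanSpace ℝ (Fin d))) (hS : μ (↑S₀ : Set _)ᶜ = 0)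
    (u : EuclideanSpace ℝ (Fin d)) (hu : ‖u‖ = 1) (x : EuclideanSpace ℝ (Fin d)) :
    halfSpaceDepth μ x ≤ (μ (flagSet u x)).toReal := by
  classical
  obtain ⟨w, hw, hiff⟩ := exists_unit_vector u hu x S₀
  have hset : μ {y | ⟪w, y⟫ ≤ ⟪w, x⟫} = μ (flagSet u x) := by
    rw [measure_eq_filter μ S₀ hS {y | ⟪w, y⟫ ≤ ⟪w, x⟫},
      measure_eq_filter μ S₀ hS (flagSet u x)]
    congr 1
    have : S₀.filter (· ∈ {y | ⟪w, y⟫ ≤ ⟪w, x⟫}) = S₀.filter (· ∈ flagSet u x) :=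
      Finset.filter_congr fun z hz => hiff z hz
    rw [this]
  have hmem : w ∈ Metric.sphere (0 : EuclideanSpace ℝ (Fin d)) 1 :=
    mem_sphere_zero_iff_norm.mpr hw
  have hbdd : BddBelow (Set.range fun v : Metric.sphere (0 : EuclideanSpace ℝ (Fin d)) 1 =>
      (μ {y | ⟪(v : EuclideanSpace ℝ (Fin d)), y⟫ ≤ ⟪(v : EuclideanSpace ℝ (Fin d)), x⟫}).toReal) := by
    refine ⟨0, ?_⟩
    rintro r ⟨v, rfl⟩
    exact ENNReal.toReal_nonneg
  have := ciInf_le hbdd (⟨w, hmem⟩ : Metric.sphere (0 : EuclideanSpace ℝ (Fin d)) 1)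
  unfold halfSpaceDepth
  calc (⨅ v : Metric.sphere (0 : EuclideanSpace ℝ (Fin d)) 1,
        (μ {y | ⟪(v : EuclideanSpace ℝ (Fin d)), y⟫ ≤ ⟪(v : EuclideanSpace ℝ (Fin d)), x⟫}).toReal)
      ≤ (μ {y | ⟪w, y⟫ ≤ ⟪w, x⟫}).toReal := this
    _ = (μ (flagSet u x)).toReal := by rw [hset]

lemma exists_min_flag (hd : 1 ≤ d) (μ : Measure (EuclideanSpace ℝ (Fin d)))
    [IsProbabilityMeasure μ]
    (S₀ : Finset (EuclideanSpace ℝ (Fin d))) (hS : μ (↑S₀ : Set _)ᶜ = 0)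
    (x : EuclideanSpace ℝ (Fin d)) :
    ∃ u, ‖u‖ = 1 ∧ (μ (flagSet u x)).toReal = halfSpaceDepth μ x := by
  classical
  have hex : ∃ u₀ : EuclideanSpace ℝ (Fin d), ‖u₀‖ = 1 :=
    ⟨EuclideanSpace.single ⟨0, hd⟩ 1, by simp⟩
  have hVfin : {r : ℝ | ∃ u, ‖u‖ = 1 ∧ r = (μ (flagSet u x)).toReal}.Finite := by
    apply Set.Finite.subset (((S₀.powerset).finite_toSet).image
      (fun B : Finset (EuclideanSpace ℝ (Fin d)) => (μ (↑B : Set _)).toReal))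
    rintro r ⟨u, hu, rfl⟩
    exact ⟨S₀.filter (· ∈ flagSet u x), Finset.mem_powerset.mpr (Finset.filter_subset _ _),
      by rw [measure_eq_filter μ S₀ hS (flagSet u x)]⟩
  have hVne : {r : ℝ | ∃ u, ‖u‖ = 1 ∧ r = (μ (flagSet u x)).toReal}.Nonempty := by
    obtain ⟨u₀, hu₀⟩ := hex
    exact ⟨_, u₀, hu₀, rfl⟩
  obtain ⟨r, hrV, hrmin⟩ := Set.exists_min_image _ id hVfin hVne
  haveI : Nonempty (Metric.sphere (0 : EuclideanSpace ℝ (Fin d)) 1) := by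
    obtain ⟨u₀, hu₀⟩ := hex
    exact ⟨⟨u₀, mem_sphere_zero_iff_norm.mpr hu₀⟩⟩
  obtain ⟨u₁, hu₁, hru⟩ := hrV
  refine ⟨u₁, hu₁, le_antisymm ?_ ?_⟩
  · rw [← hru]
    refine le_ciInf ?_
    rintro ⟨w, hwmem⟩
    have hwn : ‖w‖ = 1 := mem_sphere_zero_iff_norm.mp hwmem
    have h1 : r ≤ (μ (flagSet w x)).toReal := hrmin _ ⟨w, hwn, rfl⟩
    exact h1.trans ((ENNReal.toReal_le_toReal (measure_ne_top _ _) (measure_ne_top _ _)).mpr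
      (measure_mono (flagSet_subset_halfspace w x)))
  · exact depth_le_flag μ S₀ hS u₁ hu₁ x

lemma key (hd : 1 ≤ d) (μ ν : Measure (EuclideanSpace ℝ (Fin d)))
    [IsProbabilityMeasure μ] [IsProbabilityMeasure ν]
    (S₀ : Finset (EuclideanSpace ℝ (Fin d)))
    (hSμ : μ (↑S₀ : Set _)ᶜ = 0) (hSν : ν (↑S₀ : Set _)ᶜ = 0)
    (hdepth : ∀ x, halfSpaceDepth μ x = halfSpaceDepth ν x)
    (y : EuclideanSpace ℝ (Fin d)) (hy : (ν {y}).toReal < (μ {y}).toReal)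
    (hmin : ∀ z, μ {z} ≠ ν {z} → halfSpaceDepth μ y ≤ halfSpaceDepth μ z) : False := by
  classical
  have hyne : μ {y} ≠ ν {y} := fun h => by rw [h] at hy; exact lt_irrefl _ hy
  obtain ⟨u₁, hu₁, hval⟩ := exists_min_flag hd μ S₀ hSμ y
  set W := S₀.filter (fun z => z ∈ flagSet u₁ y ∧ μ {z} ≠ ν {z}) with hW
  have hyS₀ : y ∈ S₀ := by
    by_contra h
    have h1 : μ {y} ≤ μ ((↑S₀ : Set _)ᶜ) := measure_mono (by simpa using h)
    have h2 : μ {y} = 0 := le_antisymm (h1.trans_eq hSμ) zero_le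
    rw [h2] at hy
    simp at hy
    exact absurd hy (not_lt.mpr ENNReal.toReal_nonneg)
  have hyW : y ∈ W := Finset.mem_filter.mpr ⟨hyS₀, mem_flagSet_self u₁ y, hyne⟩
  obtain ⟨y₂, hy₂W, hy₂min⟩ := W.exists_min_image (fun z => phi u₁ z) ⟨y, hyW⟩
  obtain ⟨hy₂S₀, hy₂flag, hy₂ne⟩ := Finset.mem_filter.mp hy₂W
  have hsub : flagSet u₁ y₂ ⊆ flagSet u₁ y := flagSet_mono hy₂flag
  have a1 : halfSpaceDepth μ y₂ ≤ (μ (flagSet u₁ y₂)).toReal :=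
    depth_le_flag μ S₀ hSμ u₁ hu₁ y₂
  have a2 : (μ (flagSet u₁ y₂)).toReal ≤ (μ (flagSet u₁ y)).toReal :=
    (ENNReal.toReal_le_toReal (measure_ne_top _ _) (measure_ne_top _ _)).mpr
      (measure_mono hsub)
  have a4 : halfSpaceDepth μ y ≤ halfSpaceDepth μ y₂ := hmin y₂ hy₂ne
  have e2 : (μ (flagSet u₁ y₂)).toReal = (μ (flagSet u₁ y)).toReal :=
    le_antisymm a2 (by linarith)
  have e1 : (μ (flagSet u₁ y₂)).toReal = halfSpaceDepth μ y₂ :=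
    le_antisymm (by linarith) a1
  have b2 : halfSpaceDepth ν y₂ ≤ (ν (flagSet u₁ y₂)).toReal :=
    depth_le_flag ν S₀ hSν u₁ hu₁ y₂
  have hμν : (μ (flagSet u₁ y₂)).toReal ≤ (ν (flagSet u₁ y₂)).toReal := by
    rw [e1, hdepth y₂]; exact b2
  have hsumμ : (μ (flagSet u₁ y₂)).toReal
      = ∑ s ∈ S₀.filter (· ∈ flagSet u₁ y₂), (μ {s}).toReal :=
    measure_toReal_eq μ S₀ hSμ (flagSet u₁ y₂)
  have hsumν : (ν (flagSet u₁ y₂)).toReal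
      = ∑ s ∈ S₀.filter (· ∈ flagSet u₁ y₂), (ν {s}).toReal :=
    measure_toReal_eq ν S₀ hSν (flagSet u₁ y₂)
  have hy₂A : y₂ ∈ S₀.filter (· ∈ flagSet u₁ y₂) :=
    Finset.mem_filter.mpr ⟨hy₂S₀, mem_flagSet_self u₁ y₂⟩
  have hoff : ∀ z ∈ S₀.filter (· ∈ flagSet u₁ y₂), z ≠ y₂ →
      (μ {z}).toReal = (ν {z}).toReal := by
    intro z hz hzne
    obtain ⟨hzS₀, hzflag⟩ := Finset.mem_filter.mp hz
    by_contra h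
    have hzne' : μ {z} ≠ ν {z} := fun he => h (by rw [he])
    have hzW : z ∈ W := Finset.mem_filter.mpr ⟨hzS₀, hsub hzflag, hzne'⟩
    have h1 : phi u₁ y₂ ≤ phi u₁ z := hy₂min z hzW
    have h2 : phi u₁ z ≤ phi u₁ y₂ := hzflag
    exact hzne (phi_injective u₁ (le_antisymm h2 h1))
  -- conclude (μ {y₂}).toReal ≤ (ν {y₂}).toReal
  have hpq : (μ {y₂}).toReal ≤ (ν {y₂}).toReal := by
    have hμ' : (μ (flagSet u₁ y₂)).toReal = (μ {y₂}).toReal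
        + ∑ s ∈ (S₀.filter (· ∈ flagSet u₁ y₂)).erase y₂, (μ {s}).toReal := by
      rw [hsumμ]; exact (Finset.add_sum_erase _ _ hy₂A).symm
    have hν' : (ν (flagSet u₁ y₂)).toReal = (ν {y₂}).toReal
        + ∑ s ∈ (S₀.filter (· ∈ flagSet u₁ y₂)).erase y₂, (ν {s}).toReal := by
      rw [hsumν]; exact (Finset.add_sum_erase _ _ hy₂A).symm
    have heq : ∑ s ∈ (S₀.filter (· ∈ flagSet u₁ y₂)).erase y₂, (μ {s}).toReal
        = ∑ s ∈ (S₀.filter (· ∈ flagSet u₁ y₂)).erase y₂, (ν {s}).toReal := by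
      apply Finset.sum_congr rfl
      intro z hz
      exact hoff z (Finset.mem_of_mem_erase hz) (Finset.ne_of_mem_erase hz)
    rw [hμ', hν', heq] at hμν
    linarith
  have hpqs : (μ {y₂}).toReal < (ν {y₂}).toReal := by
    rcases lt_or_eq_of_le hpq with h | h
    · exact h
    · exact absurd ((ENNReal.toReal_eq_toReal_iff' (measure_ne_top _ _) (measure_ne_top _ _)).mp h)
        hy₂ne
  have hy₂ney : y₂ ≠ y := by
    intro h
    rw [h] at hpqs
    linarith
  have hphi_lt : phi u₁ y₂ < phi u₁ y :=
    lt_of_le_of_ne hy₂flag fun h => hy₂ney (phi_injective u₁ h)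
  have hynot : y ∉ flagSet u₁ y₂ := fun h => (not_le.mpr hphi_lt) h
  -- y has zero μ-mass
  have hAA' : S₀.filter (· ∈ flagSet u₁ y₂) ⊆ S₀.filter (· ∈ flagSet u₁ y) := by
    intro z hz
    obtain ⟨h1, h2⟩ := Finset.mem_filter.mp hz
    exact Finset.mem_filter.mpr ⟨h1, hsub h2⟩
  have hsum2 : ∑ s ∈ S₀.filter (· ∈ flagSet u₁ y), (μ {s}).toReal
      = ∑ s ∈ S₀.filter (· ∈ flagSet u₁ y₂), (μ {s}).toReal := by
    rw [← measure_toReal_eq μ S₀ hSμ (flagSet u₁ y), ← measure_toReal_eq μ S₀ hSμ (flagSet u₁ y₂)]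
    exact e2.symm
  have hsdiff : ∑ s ∈ (S₀.filter (· ∈ flagSet u₁ y)) \ (S₀.filter (· ∈ flagSet u₁ y₂)),
      (μ {s}).toReal = 0 := by
    have := Finset.sum_sdiff (f := fun s => (μ {s}).toReal) hAA'
    linarith [hsum2, this]
  have hymem : y ∈ (S₀.filter (· ∈ flagSet u₁ y)) \ (S₀.filter (· ∈ flagSet u₁ y₂)) := by
    rw [Finset.mem_sdiff]
    constructor
    · exact Finset.mem_filter.mpr ⟨hyS₀, mem_flagSet_self u₁ y⟩
    · intro h
      exact hynot (Finset.mem_filter.mp h).2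
  have hzero : (μ {y}).toReal = 0 := by
    have := (Finset.sum_eq_zero_iff_of_nonneg
      (fun s _ => ENNReal.toReal_nonneg)).mp hsdiff y hymem
    exact this
  have : (0:ℝ) ≤ (ν {y}).toReal := ENNReal.toReal_nonneg
  linarith

end TukeyAux

/-- If two Borel probability measures on `ℝ^d` (`d ≥ 1`), each with finite support,
have the same half-space depth at every point, then they are equal. -/
theorem stmt_0 {d : ℕ} (hd : 1 ≤ d)
    (μ ν : Measure (EuclideanSpace ℝ (Fin d)))
    [IsProbabilityMeasure μ] [IsProbabilityMeasure ν]
    (hμfin : ∃ S : Finset (EuclideanSpace ℝ (Fin d)), μ (↑S : Set (EuclideanSpace ℝ (Fin d)))ᶜ = 0)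
    (hνfin : ∃ S : Finset (EuclideanSpace ℝ (Fin d)), ν (↑S : Set (EuclideanSpace ℝ (Fin d)))ᶜ = 0)
    (hdepth : ∀ x, halfSpaceDepth μ x = halfSpaceDepth ν x) :
    μ = ν := by
  classical
  obtain ⟨Sμ, hSμ'⟩ := hμfin
  obtain ⟨Sν, hSν'⟩ := hνfin
  set S₀ := Sμ ∪ Sν with hS₀
  have hSμ : μ (↑S₀ : Set _)ᶜ = 0 := by
    apply measure_mono_null _ hSμ'
    apply Set.compl_subset_compl.mpr
    rw [hS₀, Finset.coe_union]
    exact Set.subset_union_left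
  have hSν : ν (↑S₀ : Set _)ᶜ = 0 := by
    apply measure_mono_null _ hSν'
    apply Set.compl_subset_compl.mpr
    rw [hS₀, Finset.coe_union]
    exact Set.subset_union_right
  have hmemS₀ : ∀ z : EuclideanSpace ℝ (Fin d), μ {z} ≠ ν {z} → z ∈ S₀ := by
    intro z hz
    by_contra h
    have h1 : μ {z} = 0 := le_antisymm
      ((measure_mono (by simpa using h : ({z} : Set _) ⊆ (↑S₀ : Set _)ᶜ)).trans_eq hSμ)
      zero_le
    have h2 : ν {z} = 0 := le_antisymm
      ((measure_mono (by simpa using h : ({z} : Set _) ⊆ (↑S₀ : Set _)ᶜ)).trans_eq hSν)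
      zero_le
    exact hz (h1.trans h2.symm)
  have hatoms : ∀ z : EuclideanSpace ℝ (Fin d), μ {z} = ν {z} := by
    by_contra h
    push_neg at h
    obtain ⟨z, hz⟩ := h
    set T := S₀.filter (fun t => μ {t} ≠ ν {t}) with hT
    have hzT : z ∈ T := Finset.mem_filter.mpr ⟨hmemS₀ z hz, hz⟩
    obtain ⟨y, hyT, hymin⟩ := T.exists_min_image (fun t => halfSpaceDepth μ t) ⟨z, hzT⟩
    obtain ⟨hyS₀, hyne⟩ := Finset.mem_filter.mp hyT
    have hminy : ∀ w, μ {w} ≠ ν {w} → halfSpaceDepth μ y ≤ halfSpaceDepth μ w := by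
      intro w hw
      exact hymin w (Finset.mem_filter.mpr ⟨hmemS₀ w hw, hw⟩)
    have hne' : (μ {y}).toReal ≠ (ν {y}).toReal := fun he =>
      hyne ((ENNReal.toReal_eq_toReal_iff' (measure_ne_top _ _) (measure_ne_top _ _)).mp he)
    rcases hne'.lt_or_gt with hlt | hlt
    · -- (μ {y}).toReal < (ν {y}).toReal : apply key with roles swapped
      refine TukeyAux.key hd ν μ S₀ hSν hSμ (fun x => (hdepth x).symm) y hlt ?_
      intro w hw
      rw [← hdepth y, ← hdepth w]
      exact hminy w (Ne.symm hw)
    · exact TukeyAux.key hd μ ν S₀ hSμ hSν hdepth y hlt hminy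
  ext s hs
  rw [TukeyAux.measure_eq_filter μ S₀ hSμ s, TukeyAux.measure_eq_filter ν S₀ hSν s,
    TukeyAux.measure_finset_coe, TukeyAux.measure_finset_coe]
  exact Finset.sum_congr rfl fun t _ => hatoms t
end

section
/- Let F and F_0 be Borel probability measures on ℝ^d and let X_1, X_2, … be independent and identically distributed random vectors with law F, with empirical measures μ_n. Then for every ε > 0, the probability of the event that |(D_{μ_n}(X_i) − D_{F_0}(X_i)) − (D_F(X_i) − D_{F_0}(X_i))| < ε for every i = 1, …, n (equivalently, that the empirical data-depth-discrepancy plot {(X_i, D_{μ_n}(X_i) − D_{F_0}(X_i))} is contained in the ε-tube around the population discrepancy x ↦ D_F(x) − D_{F_0}(x)) tends to 1 as n → ∞. -/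
open MeasureTheory ProbabilityTheory Filter Topology
open scoped ENNReal RealInnerProductSpace

/-- The empirical measure `n⁻¹ ∑_{i=1}^n δ_{pts i}` of `n` points in `ℝ^d`. -/
noncomputable def empiricalMeasure {d : ℕ} (n : ℕ)
    (pts : Fin n → EuclideanSpace ℝ (Fin d)) : Measure (EuclideanSpace ℝ (Fin d)) :=
  (n : ℝ≥0∞)⁻¹ • ∑ i : Fin n, Measure.dirac (pts i)

/- ------------------------------------------------------------------------- -/
/- Auxiliary development: finite bracketing of halfspaces and uniform SLLN.  -/
/- ------------------------------------------------------------------------- -/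

set_option linter.unusedSectionVars false
set_option maxHeartbeats 1000000

noncomputable section
namespace DDD

universe u


variable {V : Type*} [NormedAddCommGroup V] [InnerProductSpace ℝ V]
  [MeasurableSpace V] [BorelSpace V]

/-- Finite ε-bracketing of the class of closed halfspaces w.r.t. `F`. -/
def HasBrackets (F : Measure V) (ε : ℝ≥0∞) : Prop :=
  ∃ (m : ℕ) (G U : Fin m → Set V),
    (∀ j, MeasurableSet (G j)) ∧ (∀ j, MeasurableSet (U j)) ∧ (∀ j, F (U j \ G j) ≤ ε) ∧
    ∀ u : V, ‖u‖ = 1 → ∀ t : ℝ,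
      ∃ j, G j ⊆ {y | ⟪u, y⟫ ≤ t} ∧ {y | ⟪u, y⟫ ≤ t} ⊆ U j

lemma hasBrackets_of_le (F : Measure V) {ε : ℝ≥0∞} (h : F Set.univ ≤ ε) :
    HasBrackets F ε := by
  refine ⟨1, fun _ => ∅, fun _ => Set.univ, fun _ => MeasurableSet.empty,
    fun _ => MeasurableSet.univ, fun _ => ?_, fun u hu t => ⟨0, by simp, by simp⟩⟩
  simpa using h

lemma HasBrackets.mono_eps {F : Measure V} {ε ε' : ℝ≥0∞} (h : HasBrackets F ε) (hle : ε ≤ ε') :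
    HasBrackets F ε' := by
  obtain ⟨m, G, U, hG, hU, hFB, hcov⟩ := h
  exact ⟨m, G, U, hG, hU, fun j => (hFB j).trans hle, hcov⟩

lemma HasBrackets.mono_measure {F F' : Measure V} {ε : ℝ≥0∞} (h : HasBrackets F' ε)
    (hle : ∀ A, F A ≤ F' A) : HasBrackets F ε := by
  obtain ⟨m, G, U, hG, hU, hFB, hcov⟩ := h
  exact ⟨m, G, U, hG, hU, fun j => (hle _).trans (hFB j), hcov⟩

lemma HasBrackets.add {F₁ F₂ : Measure V} {ε₁ ε₂ : ℝ≥0∞} (h₁ : HasBrackets F₁ ε₁)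
    (h₂ : HasBrackets F₂ ε₂) : HasBrackets (F₁ + F₂) (ε₁ + ε₂) := by
  obtain ⟨m₁, G₁, U₁, hG₁, hU₁, hFB₁, hcov₁⟩ := h₁
  obtain ⟨m₂, G₂, U₂, hG₂, hU₂, hFB₂, hcov₂⟩ := h₂
  classical
  refine ⟨m₁ * m₂, fun p => G₁ (finProdFinEquiv.symm p).1 ∪ G₂ (finProdFinEquiv.symm p).2,
    fun p => U₁ (finProdFinEquiv.symm p).1 ∩ U₂ (finProdFinEquiv.symm p).2,
    fun p => ((hG₁ _).union (hG₂ _)), fun p => ((hU₁ _).inter (hU₂ _)), fun p => ?_,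
    fun u hu t => ?_⟩
  · have hsub₁ : (U₁ (finProdFinEquiv.symm p).1 ∩ U₂ (finProdFinEquiv.symm p).2) \
        (G₁ (finProdFinEquiv.symm p).1 ∪ G₂ (finProdFinEquiv.symm p).2) ⊆
        U₁ (finProdFinEquiv.symm p).1 \ G₁ (finProdFinEquiv.symm p).1 := fun y hy =>
      ⟨hy.1.1, fun hg => hy.2 (Or.inl hg)⟩
    have hsub₂ : (U₁ (finProdFinEquiv.symm p).1 ∩ U₂ (finProdFinEquiv.symm p).2) \
        (G₁ (finProdFinEquiv.symm p).1 ∪ G₂ (finProdFinEquiv.symm p).2) ⊆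
        U₂ (finProdFinEquiv.symm p).2 \ G₂ (finProdFinEquiv.symm p).2 := fun y hy =>
      ⟨hy.1.2, fun hg => hy.2 (Or.inr hg)⟩
    calc (F₁ + F₂) _ = F₁ _ + F₂ _ := rfl
    _ ≤ F₁ (U₁ _ \ G₁ _) + F₂ (U₂ _ \ G₂ _) :=
        add_le_add (measure_mono hsub₁) (measure_mono hsub₂)
    _ ≤ ε₁ + ε₂ := add_le_add (hFB₁ _) (hFB₂ _)
  · obtain ⟨j₁, hj₁⟩ := hcov₁ u hu t
    obtain ⟨j₂, hj₂⟩ := hcov₂ u hu t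
    refine ⟨finProdFinEquiv (j₁, j₂), ?_, ?_⟩
    · simp only [Equiv.symm_apply_apply]
      exact Set.union_subset hj₁.1 hj₂.1
    · simp only [Equiv.symm_apply_apply]
      exact Set.subset_inter hj₁.2 hj₂.2

lemma HasBrackets.sum {ε : ℝ≥0∞} :
    ∀ (M : ℕ) (f : Fin M → Measure V), (∀ j, HasBrackets (f j) ε) →
      HasBrackets (∑ j, f j) (M * ε) := by
  intro M
  induction M with
  | zero => intro f _; simpa using hasBrackets_of_le _ (by simp)
  | succ M ih =>
      intro f hf
      rw [Fin.sum_univ_succ]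
      have := (hf 0).add (ih (fun j => f j.succ) (fun j => hf j.succ))
      refine this.mono_eps ?_
      rw [Nat.cast_succ, add_mul, one_mul, add_comm]


/-- Greedy exhaustion: finitely many sets from a class `C` can be removed so that every
remaining trace of a member of `C` has measure at most `δ`. -/
lemma exhaustion {α : Type*} [MeasurableSpace α] (F : Measure α) [IsFiniteMeasure F]
    (C : Set (Set α)) (hCm : ∀ A ∈ C, MeasurableSet A) {δ : ℝ≥0∞} (hδ : 0 < δ) :
    ∃ (M : ℕ) (L : Fin M → Set α) (B : Set α), MeasurableSet B ∧ (∀ j, L j ∈ C) ∧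
      (Set.univ ⊆ B ∪ ⋃ j, L j) ∧ ∀ A ∈ C, F (A ∩ B) ≤ δ := by
  classical
  set pick : Set α → Set α := fun R => if h : ∃ A ∈ C, δ < F (A \ R) then h.choose else ∅
    with hpick
  set R : ℕ → Set α := fun m => Nat.rec ∅ (fun _ acc => acc ∪ pick acc) m with hR
  have hR0 : R 0 = ∅ := rfl
  have hRsucc : ∀ m, R (m + 1) = R m ∪ pick (R m) := fun m => rfl
  have hpick_mem : ∀ (S : Set α), (∃ A ∈ C, δ < F (A \ S)) →
      pick S ∈ C ∧ δ < F (pick S \ S) := by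
    intro S h
    simp only [hpick, dif_pos h]
    exact ⟨h.choose_spec.1, h.choose_spec.2⟩
  have hpick_meas : ∀ S : Set α, MeasurableSet (pick S) := by
    intro S
    by_cases h : ∃ A ∈ C, δ < F (A \ S)
    · simp only [hpick, dif_pos h]; exact hCm _ h.choose_spec.1
    · simp only [hpick, dif_neg h]; exact MeasurableSet.empty
  have hRmeas : ∀ m, MeasurableSet (R m) := by
    intro m
    induction m with
    | zero => exact MeasurableSet.empty
    | succ m ih => rw [hRsucc]; exact ih.union (hpick_meas _)
  -- the process must stop
  have hstop : ∃ M, ¬∃ A ∈ C, δ < F (A \ R M) := by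
    by_contra hall
    push_neg at hall
    have hgrow : ∀ m : ℕ, (m : ℝ≥0∞) * δ ≤ F (R m) := by
      intro m
      induction m with
      | zero => simp
      | succ m ih =>
          obtain ⟨hmem, hlt⟩ := hpick_mem (R m) (hall m)
          have : F (R m) + δ ≤ F (R (m + 1)) := by
            rw [hRsucc]
            have hdisj : Disjoint (R m) (pick (R m) \ R m) := disjoint_sdiff_self_right
            have : F (R m ∪ (pick (R m) \ R m)) = F (R m) + F (pick (R m) \ R m) :=
              measure_union hdisj ((hpick_meas _).diff (hRmeas m))
            rw [Set.union_diff_self] at this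
            rw [this]
            exact add_le_add le_rfl hlt.le
          calc ((m + 1 : ℕ) : ℝ≥0∞) * δ = (m : ℝ≥0∞) * δ + δ := by
                push_cast; ring
          _ ≤ F (R m) + δ := add_le_add ih le_rfl
          _ ≤ F (R (m + 1)) := this
    have hfin : F Set.univ / δ < ⊤ :=
      ENNReal.div_lt_top (measure_ne_top F _) hδ.ne'
    obtain ⟨m, hm⟩ := ENNReal.exists_nat_gt hfin.ne
    have : (m : ℝ≥0∞) * δ ≤ F Set.univ := (hgrow m).trans (measure_mono (Set.subset_univ _))
    rw [ENNReal.div_lt_iff (Or.inl hδ.ne') (Or.inr (measure_ne_top F _))] at hm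
    exact absurd this (not_le.mpr hm)
  set M := Nat.find hstop with hMdef
  have hfail := Nat.find_spec hstop
  have hsucc : ∀ j : Fin M, ∃ A ∈ C, δ < F (A \ R j) := by
    intro j
    exact not_not.mp (Nat.find_min hstop j.isLt)
  refine ⟨M, fun j => pick (R j), (R M)ᶜ, (hRmeas M).compl,
    fun j => (hpick_mem _ (hsucc j)).1, ?_, ?_⟩
  · -- covering
    have key : ∀ m, m ≤ M → R m ⊆ ⋃ j : Fin M, pick (R j) := by
      intro m
      induction m with
      | zero => intro _; rw [hR0]; exact Set.empty_subset _
      | succ m ih =>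
          intro hm
          rw [hRsucc]
          refine Set.union_subset (ih (Nat.le_of_succ_le hm)) ?_
          exact Set.subset_iUnion (fun j : Fin M => pick (R j)) ⟨m, hm⟩
    intro x _
    by_cases hx : x ∈ R M
    · exact Or.inr (key M le_rfl hx)
    · exact Or.inl hx
  · intro A hA
    by_contra hlt
    rw [not_le] at hlt
    exact hfail ⟨A, hA, by rw [Set.diff_eq]; exact hlt⟩


lemma hasBrackets_of_fintype (F : Measure V) (ε : ℝ≥0∞) {ι : Type*} [Fintype ι]
    (G U : ι → Set V)
    (hG : ∀ j, MeasurableSet (G j)) (hU : ∀ j, MeasurableSet (U j))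
    (hFB : ∀ j, F (U j \ G j) ≤ ε)
    (hcov : ∀ u : V, ‖u‖ = 1 → ∀ t : ℝ,
      ∃ j, G j ⊆ {y | ⟪u, y⟫ ≤ t} ∧ {y | ⟪u, y⟫ ≤ t} ⊆ U j) :
    HasBrackets F ε := by
  classical
  refine ⟨Fintype.card ι, G ∘ (Fintype.equivFin ι).symm, U ∘ (Fintype.equivFin ι).symm,
    fun j => hG _, fun j => hU _, fun j => hFB _, fun u hu t => ?_⟩
  obtain ⟨j, hj⟩ := hcov u hu t
  exact ⟨Fintype.equivFin ι j, by simpa using hj.1, by simpa using hj.2⟩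

lemma measurableSet_le_inner (u : V) (t : ℝ) : MeasurableSet {y : V | ⟪u, y⟫ ≤ t} := by
  have : Continuous fun y : V => ⟪u, y⟫ := continuous_const.inner continuous_id
  exact (isClosed_le this continuous_const).measurableSet

/-- The diffuse case: if every hyperplane has mass `< a`, brackets of size `a + b` exist. -/
lemma hasBrackets_of_diffuse [FiniteDimensional ℝ V] (F : Measure V) [IsFiniteMeasure F]
    {a b : ℝ≥0∞} (hb : 0 < b)
    (hhyp : ∀ u : V, ‖u‖ = 1 → ∀ t : ℝ, F {y | ⟪u, y⟫ = t} < a) :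
    HasBrackets F (a + b) := by
  classical
  -- Step 1: a large ball capturing most of the mass
  obtain ⟨R, hR0, hRb⟩ : ∃ R : ℝ, 0 < R ∧ F (Metric.closedBall (0 : V) R)ᶜ ≤ b := by
    have hmeas : ∀ n : ℕ, NullMeasurableSet (Metric.closedBall (0 : V) n)ᶜ F :=
      fun n => (Metric.isClosed_closedBall.measurableSet.compl).nullMeasurableSet
    have hanti : Antitone fun n : ℕ => (Metric.closedBall (0 : V) n)ᶜ := by
      intro m n hmn
      exact Set.compl_subset_compl.mpr (Metric.closedBall_subset_closedBall (by exact_mod_cast hmn))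
    have hint : ⋂ n : ℕ, (Metric.closedBall (0 : V) n)ᶜ = ∅ := by
      rw [← Set.compl_iUnion, Set.compl_empty_iff]
      ext y
      simp only [Set.mem_iUnion, Metric.mem_closedBall, dist_zero_right, Set.mem_univ, iff_true]
      obtain ⟨n, hn⟩ := exists_nat_ge ‖y‖
      exact ⟨n, hn⟩
    have hte := tendsto_measure_iInter_atTop hmeas hanti ⟨0, measure_ne_top F _⟩
    rw [hint] at hte
    simp only [measure_empty] at hte
    obtain ⟨n, hn⟩ := (hte.eventually_lt_const hb).exists
    exact ⟨max n 1, lt_of_lt_of_le one_pos (le_max_right _ _), le_trans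
      (measure_mono (Set.compl_subset_compl.mpr
        (Metric.closedBall_subset_closedBall (le_max_left _ _)))) hn.le⟩
  set C : Set V := Metric.closedBall (0 : V) R with hC
  -- Step 2: for each (u,t), a slab of mass < a
  have hslab : ∀ u : V, ‖u‖ = 1 → ∀ t : ℝ,
      ∃ η : ℝ, 0 < η ∧ F {y | |⟪u, y⟫ - t| ≤ η} < a := by
    intro u hu t
    have hmeas : ∀ k : ℕ, NullMeasurableSet {y : V | |⟪u, y⟫ - t| ≤ 1 / (k + 1)} F := by
      intro k
      have : Continuous fun y : V => |⟪u, y⟫ - t| :=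
        ((continuous_const.inner continuous_id).sub continuous_const).abs
      exact ((isClosed_le this continuous_const).measurableSet).nullMeasurableSet
    have hanti : Antitone fun k : ℕ => {y : V | |⟪u, y⟫ - t| ≤ 1 / (k + 1)} := by
      intro m n hmn y hy
      simp only [Set.mem_setOf_eq] at hy ⊢
      refine le_trans hy ?_
      have h1 : (0:ℝ) < (m:ℝ) + 1 := by positivity
      have h2 : (m:ℝ) + 1 ≤ (n:ℝ) + 1 := by
        have := (Nat.cast_le (α := ℝ)).mpr hmn; linarith
      exact one_div_le_one_div_of_le h1 h2
    have hint : (⋂ k : ℕ, {y : V | |⟪u, y⟫ - t| ≤ 1 / (k + 1)}) = {y : V | ⟪u, y⟫ = t} := by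
      ext y
      simp only [Set.mem_iInter, Set.mem_setOf_eq]
      constructor
      · intro h
        have habs0 : |⟪u, y⟫ - t| = 0 := by
          by_contra habs
          have hpos : 0 < |⟪u, y⟫ - t| := lt_of_le_of_ne (abs_nonneg _) (Ne.symm habs)
          obtain ⟨k, hk⟩ := exists_nat_one_div_lt hpos
          exact absurd (h k) (not_le.mpr hk)
        linarith [abs_eq_zero.mp habs0]
      · intro h k
        simp only [h, sub_self, abs_zero]
        positivity
    have hte := tendsto_measure_iInter_atTop hmeas hanti ⟨0, measure_ne_top F _⟩
    rw [hint] at hte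
    obtain ⟨k, hk⟩ := (hte.eventually_lt_const (hhyp u hu t)).exists
    exact ⟨1 / (k + 1), by positivity, hk⟩
  -- Step 3: compactness
  set K : Set (V × ℝ) := Metric.sphere (0 : V) 1 ×ˢ Set.Icc (-R) R with hK
  have hKcomp : IsCompact K := (isCompact_sphere 0 1).prod isCompact_Icc
  have hchoice : ∀ p : K, ∃ η : ℝ, 0 < η ∧
      F {y | |⟪(p : V × ℝ).1, y⟫ - (p : V × ℝ).2| ≤ η} < a := by
    intro p
    have hp : (p : V × ℝ) ∈ Metric.sphere (0 : V) 1 ×ˢ Set.Icc (-R) R := p.2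
    obtain ⟨hp1, _⟩ := Set.mem_prod.mp hp
    exact hslab _ (by simpa using hp1) _
  choose η hη hηa using hchoice
  set O : K → Set (V × ℝ) := fun p =>
    Metric.ball (p : V × ℝ).1 (η p / (2 * (R + 1))) ×ˢ Metric.ball (p : V × ℝ).2 (η p / 2)
    with hO
  have hOopen : ∀ p, IsOpen (O p) := fun p => (Metric.isOpen_ball).prod Metric.isOpen_ball
  have hOcov : K ⊆ ⋃ p, O p := by
    intro q hq
    refine Set.mem_iUnion.mpr ⟨⟨q, hq⟩, ?_⟩
    have h1 : 0 < η ⟨q, hq⟩ / (2 * (R + 1)) := div_pos (hη _) (by linarith)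
    have h2 : 0 < η ⟨q, hq⟩ / 2 := div_pos (hη _) two_pos
    exact Set.mem_prod.mpr ⟨Metric.mem_ball_self h1, Metric.mem_ball_self h2⟩
  obtain ⟨I, hI⟩ := hKcomp.elim_finite_subcover O hOopen hOcov
  -- Step 4: the bracket family
  set Gf : (↥I ⊕ Bool) → Set V := fun j => match j with
    | Sum.inl p => {y | ⟪(p.val.val).1, y⟫ ≤ (p.val.val).2 - η p.val} ∩ C
    | Sum.inr false => ∅
    | Sum.inr true => C
    with hGf
  set Uf : (↥I ⊕ Bool) → Set V := fun j => match j with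
    | Sum.inl p => {y | ⟪(p.val.val).1, y⟫ ≤ (p.val.val).2 + η p.val} ∪ Cᶜ
    | Sum.inr false => Cᶜ
    | Sum.inr true => Set.univ
    with hUf
  refine hasBrackets_of_fintype F (a + b) Gf Uf ?_ ?_ ?_ ?_
  · rintro (p | _ | _)
    · exact (measurableSet_le_inner _ _).inter Metric.isClosed_closedBall.measurableSet
    · exact MeasurableSet.empty
    · exact Metric.isClosed_closedBall.measurableSet
  · rintro (p | _ | _)
    · exact (measurableSet_le_inner _ _).union Metric.isClosed_closedBall.measurableSet.compl
    · exact Metric.isClosed_closedBall.measurableSet.compl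
    · exact MeasurableSet.univ
  · rintro (p | _ | _)
    · -- U \ G ⊆ Cᶜ ∪ slab
      have hsum : F Cᶜ + F {y | |⟪(p.val.val).1, y⟫ - (p.val.val).2| ≤ η p.val} ≤ b + a :=
        add_le_add hRb (hηa p.val).le
      refine le_trans (measure_mono ?_) (le_trans (measure_union_le _ _)
        (le_trans hsum (by rw [add_comm])))
      rintro y ⟨hyU, hyG⟩
      rcases hyU with hy1 | hy2
      · by_cases hyC : y ∈ C
        · refine Or.inr ?_
          simp only [Set.mem_setOf_eq] at hy1 ⊢
          rw [abs_le]
          refine ⟨?_, by linarith⟩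
          by_contra hcon
          push_neg at hcon
          exact hyG ⟨by simp only [Set.mem_setOf_eq]; linarith, hyC⟩
        · exact Or.inl hyC
      · exact Or.inl hy2
    · exact le_trans (measure_mono (fun y hy => hy.1)) (le_trans hRb le_add_self)
    · exact le_trans (measure_mono (fun y hy => hy.2)) (le_trans hRb le_add_self)
  · -- coverage
    intro u hu t
    rcases lt_or_ge t (-R) with htR | htR
    · -- t < -R : halfspace misses C
      refine ⟨Sum.inr false, Set.empty_subset _, ?_⟩
      intro y hy
      simp only [Set.mem_setOf_eq] at hy
      simp only [hUf]
      simp only [Set.mem_compl_iff, hC, Metric.mem_closedBall, dist_zero_right, not_le]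
      by_contra hcon
      push_neg at hcon
      have hb1 : |⟪u, y⟫| ≤ R := by
        calc |⟪u, y⟫| ≤ ‖u‖ * ‖y‖ := abs_real_inner_le_norm u y
        _ = ‖y‖ := by rw [hu, one_mul]
        _ ≤ R := hcon
      linarith [(abs_le.mp hb1).1]
    · rcases le_or_gt t R with htR2 | htR2
      · -- t ∈ [-R, R] : use the net
        have hqK : (u, t) ∈ K := Set.mem_prod.mpr ⟨by simpa using hu, htR, htR2⟩
        obtain ⟨p, hpI, hpO⟩ := Set.mem_iUnion₂.mp (hI hqK)
        have hpO' : (u, t) ∈ Metric.ball (p : V × ℝ).1 (η p / (2 * (R + 1))) ×ˢ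
            Metric.ball (p : V × ℝ).2 (η p / 2) := hpO
        obtain ⟨hpu, hpt⟩ := Set.mem_prod.mp hpO'
        rw [Metric.mem_ball, dist_eq_norm] at hpu
        rw [Metric.mem_ball, Real.dist_eq] at hpt
        obtain ⟨hptl, hptr⟩ := abs_lt.mp hpt
        have hu₀n : ‖(p : V × ℝ).1‖ = 1 := by
          have hp2 : (p : V × ℝ) ∈ Metric.sphere (0 : V) 1 ×ˢ Set.Icc (-R) R := p.2
          simpa using (Set.mem_prod.mp hp2).1
        have hkey : ∀ y : V, y ∈ C → |⟪u - (p : V × ℝ).1, y⟫| ≤ η p / 2 := by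
          intro y hyC
          calc |⟪u - (p : V × ℝ).1, y⟫| ≤ ‖u - (p : V × ℝ).1‖ * ‖y‖ :=
              abs_real_inner_le_norm _ _
          _ ≤ (η p / (2 * (R + 1))) * R := by
              apply mul_le_mul hpu.le ?_ (norm_nonneg _) ?_
              · simpa [hC, dist_zero_right] using hyC
              · exact le_of_lt (div_pos (hη p) (by linarith))
          _ ≤ η p / 2 := by
              rw [div_mul_eq_mul_div, div_le_div_iff₀ (by linarith) (by norm_num)]
              nlinarith [hη p, hR0]
        refine ⟨Sum.inl ⟨p, hpI⟩, ?_, ?_⟩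
        · rintro y ⟨hy1, hyC⟩
          simp only [Set.mem_setOf_eq] at hy1 ⊢
          have hd := (abs_le.mp (hkey y hyC)).2
          have heq : ⟪u, y⟫ = ⟪(p : V × ℝ).1, y⟫ + ⟪u - (p : V × ℝ).1, y⟫ := by
            rw [inner_sub_left]; ring
          rw [heq]
          linarith
        · intro y hy
          simp only [Set.mem_setOf_eq] at hy
          by_cases hyC : y ∈ C
          · refine Or.inl ?_
            simp only [Set.mem_setOf_eq]
            have hd := (abs_le.mp (hkey y hyC)).1
            have heq : ⟪(p : V × ℝ).1, y⟫ = ⟪u, y⟫ - ⟪u - (p : V × ℝ).1, y⟫ := by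
              rw [inner_sub_left]; ring
            rw [heq]
            linarith
          · exact Or.inr hyC
      · -- R < t : C ⊆ halfspace
        refine ⟨Sum.inr true, ?_, Set.subset_univ _⟩
        intro y hyC0
        have hyC : y ∈ Metric.closedBall (0 : V) R := hyC0
        simp only [Set.mem_setOf_eq]
        have hb1 : |⟪u, y⟫| ≤ R := by
          calc |⟪u, y⟫| ≤ ‖u‖ * ‖y‖ := abs_real_inner_le_norm u y
          _ = ‖y‖ := by rw [hu, one_mul]
          _ ≤ R := by simpa [dist_zero_right] using hyC
        linarith [(abs_le.mp hb1).2]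



lemma measurableSet_eq_inner (u : V) (t : ℝ) : MeasurableSet {y : V | ⟪u, y⟫ = t} := by
  have : Continuous fun y : V => ⟪u, y⟫ := continuous_const.inner continuous_id
  exact (isClosed_eq this continuous_const).measurableSet

/-- Transport: brackets for a measure supported on a hyperplane, given brackets in
dimension one lower (on the orthogonal complement of the normal). -/
lemma hasBrackets_of_supported_hyperplane [FiniteDimensional ℝ V]
    (u₀ : V) (hu₀ : ‖u₀‖ = 1) (t₀ : ℝ) (μ : Measure V) [IsFiniteMeasure μ]
    (hsupp : μ {y | ⟪u₀, y⟫ = t₀}ᶜ = 0) {ε : ℝ≥0∞}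
    (ih : ∀ (ν : Measure ((ℝ ∙ u₀)ᗮ)), IsFiniteMeasure ν → HasBrackets ν ε) :
    HasBrackets μ ε := by
  classical
  set W : Submodule ℝ V := (ℝ ∙ u₀)ᗮ with hW
  set L : Set V := {y | ⟪u₀, y⟫ = t₀} with hL
  have hLmeas : MeasurableSet L := measurableSet_eq_inner u₀ t₀
  set φ : V → W := fun y => Submodule.orthogonalProjectionOnto W y with hφ
  have hφcont : Continuous φ := (Submodule.orthogonalProjectionOnto W).continuous
  have hφmeas : Measurable φ := hφcont.measurable
  set ν : Measure W := μ.map φ with hν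
  haveI : IsFiniteMeasure ν := by
    constructor
    rw [hν, Measure.map_apply hφmeas MeasurableSet.univ]
    exact measure_lt_top μ _
  obtain ⟨m, G', U', hG', hU', hFB', hcov'⟩ := ih ν inferInstance
  -- key inner-product identity
  have hkey : ∀ (u : V) (y : V), y ∈ L →
      ⟪u, y⟫ = ⟪u₀, u⟫ * t₀ + ⟪u - ⟪u₀, u⟫ • u₀, (φ y : V)⟫ := by
    intro u y hy
    have hyL : ⟪u₀, y⟫ = t₀ := hy
    have hw : (u - ⟪u₀, u⟫ • u₀) ∈ W := by
      rw [hW, Submodule.mem_orthogonal_singleton_iff_inner_right]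
      rw [inner_sub_right, real_inner_smul_right, real_inner_self_eq_norm_sq, hu₀]
      ring
    have hperp : y - (φ y : V) ∈ Wᗮ := Submodule.sub_starProjection_mem_orthogonal (K := W) y
    have h1 : ⟪u - ⟪u₀, u⟫ • u₀, y - (φ y : V)⟫ = 0 :=
      Submodule.inner_right_of_mem_orthogonal hw hperp
    have h2 : ⟪u - ⟪u₀, u⟫ • u₀, y⟫ = ⟪u, y⟫ - ⟪u₀, u⟫ * t₀ := by
      rw [inner_sub_left, real_inner_smul_left, hyL]
    have h3 : ⟪u - ⟪u₀, u⟫ • u₀, (φ y : V)⟫ = ⟪u - ⟪u₀, u⟫ • u₀, y⟫ := by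
      have := inner_sub_right (𝕜 := ℝ) (u - ⟪u₀, u⟫ • u₀) y (φ y : V)
      linarith [h1, this]
    rw [h3, h2]; ring
  -- bracket family
  set Gf : (Fin m ⊕ Bool) → Set V := fun j => match j with
    | Sum.inl j => φ ⁻¹' (G' j) ∩ L
    | Sum.inr false => ∅
    | Sum.inr true => L
    with hGf
  set Uf : (Fin m ⊕ Bool) → Set V := fun j => match j with
    | Sum.inl j => (φ ⁻¹' (U' j) ∩ L) ∪ Lᶜ
    | Sum.inr false => Lᶜ
    | Sum.inr true => Set.univ
    with hUf
  refine hasBrackets_of_fintype μ ε Gf Uf ?_ ?_ ?_ ?_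
  · rintro (j | _ | _)
    · exact (hφmeas (hG' j)).inter hLmeas
    · exact MeasurableSet.empty
    · exact hLmeas
  · rintro (j | _ | _)
    · exact ((hφmeas (hU' j)).inter hLmeas).union hLmeas.compl
    · exact hLmeas.compl
    · exact MeasurableSet.univ
  · rintro (j | _ | _)
    · have hsub : (φ ⁻¹' (U' j) ∩ L ∪ Lᶜ) \ (φ ⁻¹' (G' j) ∩ L) ⊆
          φ ⁻¹' (U' j \ G' j) ∪ Lᶜ := by
        rintro y ⟨hyU, hyG⟩
        by_cases hyL : y ∈ L
        · rcases hyU with ⟨hy1, _⟩ | hy2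
          · exact Or.inl ⟨hy1, fun hg => hyG ⟨hg, hyL⟩⟩
          · exact absurd hyL hy2
        · exact Or.inr hyL
      calc μ _ ≤ μ (φ ⁻¹' (U' j \ G' j)) + μ Lᶜ :=
            le_trans (measure_mono hsub) (measure_union_le _ _)
      _ = ν (U' j \ G' j) + 0 := by
            rw [hsupp, hν, Measure.map_apply hφmeas ((hU' j).diff (hG' j))]
      _ ≤ ε := by rw [add_zero]; exact hFB' j
    · calc μ (Lᶜ \ (∅ : Set V)) = μ Lᶜ := by rw [Set.diff_empty]
      _ ≤ ε := le_trans (le_of_eq hsupp) zero_le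
    · calc μ (Set.univ \ L) ≤ μ Lᶜ := measure_mono (fun y hy => hy.2)
      _ ≤ ε := le_trans (le_of_eq hsupp) zero_le
  · -- coverage
    intro u hu t
    set a : ℝ := ⟪u₀, u⟫ with ha
    set w : V := u - a • u₀ with hw'
    have hwW : w ∈ W := by
      rw [hW, Submodule.mem_orthogonal_singleton_iff_inner_right]
      rw [hw', inner_sub_right, real_inner_smul_right, real_inner_self_eq_norm_sq, hu₀, ha]
      ring
    by_cases hw0 : w = 0
    · -- trivial trace
      by_cases hat : a * t₀ ≤ t
      · refine ⟨Sum.inr true, ?_, Set.subset_univ _⟩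
        intro y hyL
        have : ⟪u, y⟫ = a * t₀ + ⟪w, (φ y : V)⟫ := hkey u y hyL
        rw [hw0] at this
        simp only [inner_zero_left, add_zero] at this
        simpa [Set.mem_setOf_eq, this] using hat
      · refine ⟨Sum.inr false, Set.empty_subset _, ?_⟩
        intro y hy
        simp only [Set.mem_setOf_eq] at hy
        intro hyL
        have : ⟪u, y⟫ = a * t₀ + ⟪w, (φ y : V)⟫ := hkey u y hyL
        rw [hw0] at this
        simp only [inner_zero_left, add_zero] at this
        exact hat (le_trans (le_of_eq this.symm) hy)
    · -- genuine trace
      have hwn : 0 < ‖w‖ := norm_pos_iff.mpr hw0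
      set w' : W := (‖w‖)⁻¹ • ⟨w, hwW⟩ with hw''
      have hw'n : ‖w'‖ = 1 := by
        rw [hw'', norm_smul, norm_inv, norm_norm]
        have : ‖(⟨w, hwW⟩ : W)‖ = ‖w‖ := rfl
        rw [this, inv_mul_cancel₀ hwn.ne']
      obtain ⟨j, hjG, hjU⟩ := hcov' w' hw'n ((t - a * t₀) / ‖w‖)
      have hinner : ∀ y : V, ⟪w', φ y⟫ = (‖w‖)⁻¹ * ⟪w, (φ y : V)⟫ := by
        intro y
        rw [hw'', real_inner_smul_left]
        congr 1
      refine ⟨Sum.inl j, ?_, ?_⟩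
      · rintro y ⟨hyG, hyL⟩
        have hmem : φ y ∈ {p : W | ⟪w', p⟫ ≤ (t - a * t₀) / ‖w‖} := hjG hyG
        simp only [Set.mem_setOf_eq] at hmem ⊢
        rw [hinner y] at hmem
        have h4 : ⟪w, (φ y : V)⟫ ≤ t - a * t₀ := by
          have h6 : ‖w‖ * ((‖w‖)⁻¹ * ⟪w, (φ y : V)⟫) ≤ ‖w‖ * ((t - a * t₀) / ‖w‖) :=
            mul_le_mul_of_nonneg_left hmem hwn.le
          field_simp [hwn.ne'] at h6
          linarith
        have := hkey u y hyL
        linarith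
      · intro y hy
        simp only [Set.mem_setOf_eq] at hy
        by_cases hyL : y ∈ L
        · refine Or.inl ⟨?_, hyL⟩
          have h5 : ⟪w, (φ y : V)⟫ ≤ t - a * t₀ := by
            have := hkey u y hyL
            linarith
          have hmem : φ y ∈ {p : W | ⟪w', p⟫ ≤ (t - a * t₀) / ‖w‖} := by
            simp only [Set.mem_setOf_eq]
            rw [hinner y, div_eq_mul_inv, mul_comm (t - a * t₀) (‖w‖)⁻¹]
            exact mul_le_mul_of_nonneg_left h5 (inv_nonneg.mpr hwn.le)
          exact hjU hmem
        · exact Or.inr hyL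


/-- Main bracketing theorem: every finite Borel measure on a finite-dimensional real
inner product space admits finite ε-brackets for the class of closed halfspaces. -/
lemma hasBrackets_all : ∀ (n : ℕ) (V : Type u) [NormedAddCommGroup V]
    [InnerProductSpace ℝ V] [MeasurableSpace V] [BorelSpace V] [FiniteDimensional ℝ V],
    Module.finrank ℝ V = n → ∀ (F : Measure V), IsFiniteMeasure F → ∀ {ε : ℝ≥0∞}, 0 < ε →
    HasBrackets F ε := by
  intro n
  induction n with
  | zero =>
      intro V _ _ _ _ _ hrank F hFfin ε hε
      refine ⟨0, Fin.elim0, Fin.elim0, fun j => j.elim0, fun j => j.elim0, fun j => j.elim0,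
        fun u hu t => ?_⟩
      haveI : Subsingleton V := Module.finrank_zero_iff.mp hrank
      rw [Subsingleton.elim u 0, norm_zero] at hu
      exact absurd hu (by norm_num)
  | succ n ih =>
      intro V _ _ _ _ _ hrank F hFfin ε hε
      haveI := hFfin
      rcases eq_or_ne ε ⊤ with rfl | hεtop
      · exact hasBrackets_of_le F le_top
      -- the class of hyperplanes
      set C : Set (Set V) := {A | ∃ u : V, ‖u‖ = 1 ∧ ∃ t : ℝ, A = {y | ⟪u, y⟫ = t}} with hCdef
      have hCm : ∀ A ∈ C, MeasurableSet A := by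
        rintro A ⟨u, hu, t, rfl⟩
        exact measurableSet_eq_inner u t
      have hδ : (0 : ℝ≥0∞) < ε / 8 :=
        ENNReal.div_pos hε.ne' (by norm_num)
      obtain ⟨M, L, B, hBmeas, hLC, hcover, hres⟩ := exhaustion F C hCm hδ
      -- the residual diffuse part
      have hdiff : HasBrackets (F.restrict B) (ε / 4 + ε / 4) := by
        refine hasBrackets_of_diffuse (F.restrict B)
          (ENNReal.div_pos hε.ne' (by norm_num)) ?_
        intro u hu t
        rw [Measure.restrict_apply' hBmeas]
        refine lt_of_le_of_lt (hres _ ⟨u, hu, t, rfl⟩) ?_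
        rw [div_eq_mul_inv, div_eq_mul_inv, ENNReal.mul_lt_mul_iff_right hε.ne' hεtop]
        rw [ENNReal.inv_lt_inv]
        norm_num
      -- the hyperplane pieces
      set Mb : ℕ := max M 1 with hMb
      have hε' : (0 : ℝ≥0∞) < ε / (2 * Mb) := by
        refine ENNReal.div_pos hε.ne' ?_
        refine ENNReal.mul_ne_top (by norm_num) (by simp)
      have hpieces : ∀ j : Fin M, HasBrackets (F.restrict (L j)) (ε / (2 * Mb)) := by
        intro j
        obtain ⟨u, hu, t, hLj⟩ := hLC j
        refine hasBrackets_of_supported_hyperplane u hu t (F.restrict (L j)) ?_ ?_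
        · rw [Measure.restrict_apply' (hCm _ (hLC j)), ← hLj]
          simp
        · intro ν hν
          haveI := hν
          haveI : Fact (Module.finrank ℝ V = n + 1) := ⟨hrank⟩
          have hu0 : u ≠ 0 := fun h => by rw [h, norm_zero] at hu; norm_num at hu
          exact ih ((ℝ ∙ u)ᗮ) (Submodule.finrank_orthogonal_span_singleton hu0) ν inferInstance hε'
      -- combine
      have hsum : HasBrackets (∑ j : Fin M, F.restrict (L j)) ((M : ℝ≥0∞) * (ε / (2 * Mb))) :=
        HasBrackets.sum M _ hpieces
      have hcomb := hsum.add hdiff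
      refine HasBrackets.mono_measure (HasBrackets.mono_eps hcomb ?_) ?_
      · -- (M * (ε / (2 * Mb))) + (ε/4 + ε/4) ≤ ε
        have hMbne : (Mb : ℝ≥0∞) ≠ 0 := by simp [hMb]
        have hMbnt : (Mb : ℝ≥0∞) ≠ ⊤ := by simp
        have h1 : (M : ℝ≥0∞) * (ε / (2 * Mb)) ≤ ε / 2 := by
          calc (M : ℝ≥0∞) * (ε / (2 * Mb)) ≤ (Mb : ℝ≥0∞) * (ε / (2 * Mb)) := by
                gcongr
                exact_mod_cast le_max_left M 1
          _ = ε / 2 := by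
                rw [← mul_div_assoc, mul_comm (2 : ℝ≥0∞) (Mb : ℝ≥0∞)]
                exact ENNReal.mul_div_mul_left ε 2 hMbne hMbnt
        have h2 : ε / 4 + ε / 4 ≤ ε / 2 := by
          rw [ENNReal.div_add_div_same, ← two_mul,
            show (4 : ℝ≥0∞) = 2 * 2 by norm_num,
            ENNReal.mul_div_mul_left ε 2 (by norm_num) (by norm_num)]
        calc (M : ℝ≥0∞) * (ε / (2 * Mb)) + (ε / 4 + ε / 4) ≤ ε / 2 + ε / 2 :=
              add_le_add h1 h2
        _ = ε := ENNReal.add_halves ε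
      · -- F ≤ Σ restrict (L j) + restrict B
        intro A
        have hAsub : A ⊆ (A ∩ B) ∪ ⋃ j, A ∩ L j := by
          intro x hx
          rcases hcover (Set.mem_univ x) with hB | hL
          · exact Or.inl ⟨hx, hB⟩
          · obtain ⟨j, hj⟩ := Set.mem_iUnion.mp hL
            exact Or.inr (Set.mem_iUnion.mpr ⟨j, hx, hj⟩)
        calc F A ≤ F ((A ∩ B) ∪ ⋃ j, A ∩ L j) := measure_mono hAsub
        _ ≤ F (A ∩ B) + F (⋃ j, A ∩ L j) := measure_union_le _ _
        _ ≤ F (A ∩ B) + ∑ j, F (A ∩ L j) := by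
              exact add_le_add le_rfl (measure_iUnion_fintype_le F _)
        _ = ((∑ j : Fin M, F.restrict (L j)) + F.restrict B) A := by
              rw [Measure.add_apply, Measure.restrict_apply' hBmeas]
              rw [add_comm]
              congr 1
              rw [Measure.finset_sum_apply]
              exact Finset.sum_congr rfl fun j _ =>
                (Measure.restrict_apply' (hCm _ (hLC j))).symm


/-- iInf comparison for nonnegative real families. -/
lemma abs_ciInf_sub_ciInf {ι : Sort*} (f g : ι → ℝ) {c : ℝ} (hc : 0 ≤ c)
    (h : ∀ i, |f i - g i| ≤ c) (hf : ∀ i, 0 ≤ f i) (hg : ∀ i, 0 ≤ g i) :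
    |(⨅ i, f i) - ⨅ i, g i| ≤ c := by
  rcases isEmpty_or_nonempty ι with hE | hN
  · rw [Real.iInf_of_isEmpty, Real.iInf_of_isEmpty]
    simpa using hc
  · have hbf : BddBelow (Set.range f) := ⟨0, fun x ⟨i, hi⟩ => hi ▸ hf i⟩
    have hbg : BddBelow (Set.range g) := ⟨0, fun x ⟨i, hi⟩ => hi ▸ hg i⟩
    rw [abs_le]
    constructor
    · rw [neg_le, neg_sub]
      have : ∀ i, (⨅ i, g i) - c ≤ f i := fun i => by
        have h1 : g i - c ≤ f i := by have := (abs_le.mp (h i)).1; linarith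
        exact le_trans (by linarith [ciInf_le hbg i]) h1
      linarith [le_ciInf this]
    · rw [sub_le_iff_le_add]
      have : ∀ i, (⨅ i, f i) - c ≤ g i := fun i => by
        have h1 : f i - c ≤ g i := by have := (abs_le.mp (h i)).2; linarith
        exact le_trans (by linarith [ciInf_le hbf i]) h1
      linarith [le_ciInf this]

variable {d : ℕ}

local notation "E" => EuclideanSpace ℝ (Fin d)

lemma emp_apply {n : ℕ} (pts : Fin n → E) {A : Set E} (hA : MeasurableSet A) :
    (empiricalMeasure n pts A).toReal
      = (n : ℝ)⁻¹ * ∑ i : Fin n, A.indicator (1 : E → ℝ) (pts i) := by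
  classical
  rw [empiricalMeasure, Measure.smul_apply, Measure.coe_finset_sum, Finset.sum_apply]
  have hdir : ∀ i : Fin n, Measure.dirac (pts i) A = A.indicator (1 : E → ℝ≥0∞) (pts i) :=
    fun i => Measure.dirac_apply' _ hA
  rw [Finset.sum_congr rfl (fun i _ => hdir i)]
  rw [smul_eq_mul, ENNReal.toReal_mul]
  congr 1
  · simp
  · rw [ENNReal.toReal_sum (fun i _ => by
      by_cases h : pts i ∈ A <;> simp [Set.indicator_apply, h])]
    refine Finset.sum_congr rfl fun i _ => ?_
    by_cases h : pts i ∈ A <;> simp [Set.indicator_apply, h]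

lemma emp_prob {n : ℕ} (hn : 1 ≤ n) (pts : Fin n → E) :
    IsProbabilityMeasure (empiricalMeasure n pts) := by
  constructor
  rw [empiricalMeasure, Measure.smul_apply, Measure.coe_finset_sum, Finset.sum_apply]
  simp only [Measure.dirac_apply' _ MeasurableSet.univ]
  simp only [Set.indicator_univ, Pi.one_apply, Finset.sum_const, Finset.card_univ,
    Fintype.card_fin, nsmul_eq_mul, mul_one, smul_eq_mul]
  rw [ENNReal.inv_mul_cancel]
  · exact_mod_cast Nat.one_le_iff_ne_zero.mp hn
  · exact ENNReal.natCast_ne_top n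

lemma measurableSet_le_inner' (u : E) (t : ℝ) : MeasurableSet {y : E | ⟪u, y⟫ ≤ t} := by
  have : Continuous fun y : E => ⟪u, y⟫ := continuous_const.inner continuous_id
  exact (isClosed_le this continuous_const).measurableSet

variable {Ω : Type*} [MeasurableSpace Ω]

lemma slln_set (P : Measure Ω) [IsProbabilityMeasure P]
    (F : Measure E) [IsProbabilityMeasure F]
    (X : ℕ → Ω → E) (hmeas : ∀ i, Measurable (X i))
    (hindep : iIndepFun X P)
    (hid : ∀ i, Measure.map (X i) P = F) {A : Set E} (hA : MeasurableSet A) :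
    ∀ᵐ ω ∂P, Tendsto (fun n : ℕ => (n : ℝ)⁻¹ * ∑ i ∈ Finset.range n,
      A.indicator (1 : E → ℝ) (X i ω)) atTop (𝓝 (F A).toReal) := by
  classical
  set f : E → ℝ := A.indicator 1 with hf
  have hfmeas : Measurable f := measurable_one.indicator hA
  set Y : ℕ → Ω → ℝ := fun i ω => f (X i ω) with hY
  have hint : Integrable (Y 0) P := by
    refine ⟨(hfmeas.comp (hmeas 0)).aestronglyMeasurable, ?_⟩
    refine HasFiniteIntegral.mono' (hasFiniteIntegral_const (1 : ℝ)) ?_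
    refine Filter.Eventually.of_forall fun ω => ?_
    by_cases h : X 0 ω ∈ A <;> simp [hY, hf, Set.indicator_apply, h]
  have hindep' : Pairwise (Function.onFun (IndepFun · · P) Y) := fun i j hij =>
    (hindep.indepFun hij).comp hfmeas hfmeas
  have hident : ∀ i, IdentDistrib (Y i) (Y 0) P P := fun i =>
    IdentDistrib.comp ⟨(hmeas i).aemeasurable, (hmeas 0).aemeasurable,
      by rw [hid i, hid 0]⟩ hfmeas
  have h := strong_law_ae_real Y hint hindep' hident
  have hEY : P[Y 0] = (F A).toReal := by
    have h1 : P[Y 0] = ∫ x, f x ∂(Measure.map (X 0) P) :=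
      (integral_map (hmeas 0).aemeasurable hfmeas.aestronglyMeasurable).symm
    rw [h1, hid 0, hf]
    rw [integral_indicator_one hA]
    rfl
  rw [hEY] at h
  filter_upwards [h] with ω hω
  have : (fun n : ℕ => (n : ℝ)⁻¹ * ∑ i ∈ Finset.range n, A.indicator (1 : E → ℝ) (X i ω))
      = fun n : ℕ => (∑ i ∈ Finset.range n, Y i ω) / n := by
    funext n
    rw [div_eq_inv_mul]
  rw [this]
  exact hω

theorem stmt_5' (P : Measure Ω) [IsProbabilityMeasure P]
    (F F₀ : Measure E)
    [IsProbabilityMeasure F] [IsProbabilityMeasure F₀]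
    (X : ℕ → Ω → E)
    (hmeas : ∀ i, Measurable (X i))
    (hindep : iIndepFun X P)
    (hid : ∀ i, Measure.map (X i) P = F) :
    ∀ ε > (0 : ℝ), Tendsto (fun n =>
      P {ω | ∀ i : Fin n,
        |(halfSpaceDepth (empiricalMeasure n (fun j => X j ω)) (X i ω) -
            halfSpaceDepth F₀ (X i ω)) -
          (halfSpaceDepth F (X i ω) - halfSpaceDepth F₀ (X i ω))| < ε})
      atTop (𝓝 1) := by
  intro ε hε
  classical
  set ε3 : ℝ := ε / 6 with hε3
  have hε3pos : 0 < ε3 := by positivity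
  obtain ⟨m, G, U, hG, hU, hFB, hcov⟩ := hasBrackets_all d (EuclideanSpace ℝ (Fin d))
    (finrank_euclideanSpace_fin) F inferInstance
    (ε := ENNReal.ofReal ε3) (ENNReal.ofReal_pos.mpr hε3pos)
  set avg : Set E → ℕ → Ω → ℝ := fun A n ω =>
    (n : ℝ)⁻¹ * ∑ i ∈ Finset.range n, A.indicator (1 : E → ℝ) (X i ω) with havg
  set Bset : ℕ → Set Ω := fun n => ⋂ j : Fin m,
    ({ω | |avg (G j) n ω - (F (G j)).toReal| < ε3} ∩
     {ω | |avg (U j) n ω - (F (U j)).toReal| < ε3}) with hBset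
  have havgmeas : ∀ (A : Set E) (_ : MeasurableSet A) (n : ℕ), Measurable (avg A n) := by
    intro A hA n
    apply Measurable.const_mul
    apply Finset.measurable_sum
    intro i _
    exact (measurable_one.indicator hA).comp (hmeas i)
  have hBmeas : ∀ n, MeasurableSet (Bset n) := by
    intro n
    refine MeasurableSet.iInter fun j => MeasurableSet.inter ?_ ?_
    · exact measurableSet_lt (((havgmeas _ (hG j) n).sub_const _).abs) measurable_const
    · exact measurableSet_lt (((havgmeas _ (hU j) n).sub_const _).abs) measurable_const
  -- the deterministic inclusion
  have hincl : ∀ n, Bset n ⊆ {ω | ∀ i : Fin n,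
      |(halfSpaceDepth (empiricalMeasure n (fun j => X j ω)) (X i ω) -
          halfSpaceDepth F₀ (X i ω)) -
        (halfSpaceDepth F (X i ω) - halfSpaceDepth F₀ (X i ω))| < ε} := by
    intro n ω hω i
    have hn1 : 1 ≤ n := i.pos
    set μn := empiricalMeasure n (fun j => X j ω) with hμn
    haveI : IsProbabilityMeasure μn := emp_prob hn1 _
    -- uniform halfspace bound
    have hkey : ∀ (u : E), ‖u‖ = 1 → ∀ t : ℝ,
        |(μn {y | ⟪u, y⟫ ≤ t}).toReal - (F {y | ⟪u, y⟫ ≤ t}).toReal| ≤ 2 * ε3 := by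
      intro u hu t
      obtain ⟨j, hjG, hjU⟩ := hcov u hu t
      have hωj := Set.mem_iInter.mp hω j
      have hemp : ∀ (A : Set E), MeasurableSet A → (μn A).toReal = avg A n ω := by
        intro A hA
        rw [hμn, emp_apply _ hA, havg]
        congr 1
        exact Fin.sum_univ_eq_sum_range (fun i => A.indicator (1 : E → ℝ) (X i ω)) n
      have hGj := hωj.1
      have hUj := hωj.2
      simp only [Set.mem_setOf_eq] at hGj hUj
      rw [← hemp _ (hG j)] at hGj
      rw [← hemp _ (hU j)] at hUj
      set H : Set E := {y | ⟪u, y⟫ ≤ t} with hH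
      have hHmeas : MeasurableSet H := measurableSet_le_inner' u t
      -- bracket bound in ℝ
      have hbr : (F (U j)).toReal ≤ (F (G j)).toReal + ε3 := by
        have h1 : F (U j) ≤ F (G j) + F (U j \ G j) :=
          le_trans (measure_mono (fun y hy => by
            by_cases h : y ∈ G j
            · exact Or.inl h
            · exact Or.inr ⟨hy, h⟩)) (measure_union_le _ _)
        have h2 : (F (U j \ G j)).toReal ≤ ε3 := by
          have := ENNReal.toReal_mono ENNReal.ofReal_ne_top (hFB j)
          rwa [ENNReal.toReal_ofReal hε3pos.le] at this
        have h3 := ENNReal.toReal_mono (by finiteness) h1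
        rw [ENNReal.toReal_add (by finiteness) (by finiteness)] at h3
        linarith
      have hup : (μn H).toReal ≤ (F H).toReal + 2 * ε3 := by
        have h1 : (μn H).toReal ≤ (μn (U j)).toReal :=
          ENNReal.toReal_mono (by finiteness) (measure_mono hjU)
        have h2 : (F (G j)).toReal ≤ (F H).toReal :=
          ENNReal.toReal_mono (by finiteness) (measure_mono hjG)
        have h3 := (abs_lt.mp hUj).2
        linarith
      have hdown : (F H).toReal ≤ (μn H).toReal + 2 * ε3 := by
        have h1 : (F H).toReal ≤ (F (U j)).toReal :=
          ENNReal.toReal_mono (by finiteness) (measure_mono hjU)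
        have h2 : (μn (G j)).toReal ≤ (μn H).toReal :=
          ENNReal.toReal_mono (by finiteness) (measure_mono hjG)
        have h3 := (abs_lt.mp hGj).1
        linarith
      rw [abs_le]
      constructor <;> linarith
    -- depth bound
    set x := X i ω with hx
    have hdepth : |halfSpaceDepth μn x - halfSpaceDepth F x| ≤ 2 * ε3 := by
      rw [halfSpaceDepth, halfSpaceDepth]
      refine abs_ciInf_sub_ciInf _ _ (by positivity) ?_ ?_ ?_
      · intro u
        exact hkey (u : E) (by simpa using u.2) _
      · intro u; exact ENNReal.toReal_nonneg
      · intro u; exact ENNReal.toReal_nonneg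
    have heq : (halfSpaceDepth μn x - halfSpaceDepth F₀ x) -
        (halfSpaceDepth F x - halfSpaceDepth F₀ x)
        = halfSpaceDepth μn x - halfSpaceDepth F x := by ring
    show |(halfSpaceDepth μn (X i ω) - halfSpaceDepth F₀ (X i ω)) -
        (halfSpaceDepth F (X i ω) - halfSpaceDepth F₀ (X i ω))| < ε
    rw [← hx, heq]
    calc |halfSpaceDepth μn x - halfSpaceDepth F x| ≤ 2 * ε3 := hdepth
    _ < ε := by rw [hε3]; linarith
  -- a.s. eventual membership
  have hae : ∀ᵐ ω ∂P, ∀ j : Fin m,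
      Tendsto (fun n => avg (G j) n ω) atTop (𝓝 (F (G j)).toReal) ∧
      Tendsto (fun n => avg (U j) n ω) atTop (𝓝 (F (U j)).toReal) := by
    rw [ae_all_iff]
    intro j
    exact (slln_set P F X hmeas hindep hid (hG j)).and
      (slln_set P F X hmeas hindep hid (hU j))
  have hae2 : ∀ᵐ ω ∂P, ∃ N, ∀ n, N ≤ n → ω ∈ Bset n := by
    filter_upwards [hae] with ω hω
    have hev : ∀ᶠ n in atTop, ∀ j : Fin m,
        (|avg (G j) n ω - (F (G j)).toReal| < ε3 ∧
         |avg (U j) n ω - (F (U j)).toReal| < ε3) := by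
      rw [eventually_all]
      intro j
      have h1 := Metric.tendsto_atTop.mp (hω j).1 ε3 hε3pos
      have h2 := Metric.tendsto_atTop.mp (hω j).2 ε3 hε3pos
      obtain ⟨N1, hN1⟩ := h1
      obtain ⟨N2, hN2⟩ := h2
      rw [eventually_atTop]
      refine ⟨max N1 N2, fun n hn => ⟨?_, ?_⟩⟩
      · have := hN1 n (le_trans (le_max_left _ _) hn)
        rwa [Real.dist_eq] at this
      · have := hN2 n (le_trans (le_max_right _ _) hn)
        rwa [Real.dist_eq] at this
    obtain ⟨N, hN⟩ := eventually_atTop.mp hev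
    refine ⟨N, fun n hn => Set.mem_iInter.mpr fun j => ?_⟩
    exact ⟨(hN n hn j).1, (hN n hn j).2⟩
  -- conclude
  set Cset : ℕ → Set Ω := fun N => ⋂ n, ⋂ (_ : N ≤ n), Bset n with hCset
  have hCmeas : ∀ N, MeasurableSet (Cset N) := fun N =>
    MeasurableSet.iInter fun n => MeasurableSet.iInter fun _ => hBmeas n
  have hCmono : Monotone Cset := by
    intro N N' hNN'
    apply Set.iInter_mono fun n => ?_
    exact Set.iInter_mono' fun h => ⟨le_trans hNN' h, subset_rfl⟩
  have hCub : P (⋃ N, Cset N) = 1 := by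
    have hsub : ∀ᵐ ω ∂P, ω ∈ ⋃ N, Cset N := by
      filter_upwards [hae2] with ω hω
      obtain ⟨N, hN⟩ := hω
      exact Set.mem_iUnion.mpr ⟨N, Set.mem_iInter.mpr fun n =>
        Set.mem_iInter.mpr fun hn => hN n hn⟩
    have hcompl : P (⋃ N, Cset N)ᶜ = 0 := by
      rw [Set.compl_def]
      exact ae_iff.mp hsub
    refine le_antisymm prob_le_one ?_
    calc (1 : ℝ≥0∞) = P Set.univ := (measure_univ).symm
    _ ≤ P ((⋃ N, Cset N) ∪ (⋃ N, Cset N)ᶜ) := by rw [Set.union_compl_self]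
    _ ≤ P (⋃ N, Cset N) + P (⋃ N, Cset N)ᶜ := measure_union_le _ _
    _ = P (⋃ N, Cset N) := by rw [hcompl, add_zero]
  have htendC : Tendsto (fun N => P (Cset N)) atTop (𝓝 1) := by
    have := tendsto_measure_iUnion_atTop (μ := P) hCmono
    rwa [hCub] at this
  refine tendsto_of_tendsto_of_tendsto_of_le_of_le htendC tendsto_const_nhds ?_ ?_
  · intro n
    refine measure_mono (le_trans ?_ (hincl n))
    intro ω hω
    exact Set.mem_iInter.mp (Set.mem_iInter.mp hω n) le_rfl
  · intro n
    exact prob_le_one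


end DDD
end

/-- The empirical data-depth-discrepancy plot is eventually contained, with probability
tending to one, in the `ε`-tube around the population discrepancy `x ↦ D_F(x) − D_{F_0}(x)`. -/
theorem stmt_5 {d : ℕ} {Ω : Type*} [MeasurableSpace Ω]
    (P : Measure Ω) [IsProbabilityMeasure P]
    (F F₀ : Measure (EuclideanSpace ℝ (Fin d)))
    [IsProbabilityMeasure F] [IsProbabilityMeasure F₀]
    (X : ℕ → Ω → EuclideanSpace ℝ (Fin d))
    (hmeas : ∀ i, Measurable (X i))
    (hindep : iIndepFun X P)
    (hid : ∀ i, Measure.map (X i) P = F) :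
    ∀ ε > (0 : ℝ), Tendsto (fun n =>
      P {ω | ∀ i : Fin n,
        |(halfSpaceDepth (empiricalMeasure n (fun j => X j ω)) (X i ω) -
            halfSpaceDepth F₀ (X i ω)) -
          (halfSpaceDepth F (X i ω) - halfSpaceDepth F₀ (X i ω))| < ε})
      atTop (𝓝 1) := by
  intro ε hε
  exact DDD.stmt_5' P F F₀ X hmeas hindep hid ε hε
end

section
/- Let f_0 and h be continuous, strictly positive probability densities on ℝ^d (with respect to Lebesgue measure) such that ∫ (h(x)/f_0(x) − 1)^4 f_0(x) dx < ∞, let F_0 and H be the corresponding probability measures, and fix γ > 0. For n > γ², define the mixture F_n = (1 − γ/√n) F_0 + (γ/√n) H. Then the sequence of product measures (F_n^{⊗n}) is contiguous with respect to (F_0^{⊗n}): for every sequence of Borel sets A_n ⊆ (ℝ^d)^n with F_0^{⊗n}(A_n) → 0 as n → ∞, one also has F_n^{⊗n}(A_n) → 0. -/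
open MeasureTheory ProbabilityTheory Filter Topology
open scoped ENNReal

theorem contig_lintegral_pi_prod {α : Type*} [MeasurableSpace α] (μ : Measure α)
    [IsProbabilityMeasure μ] :
    ∀ (n : ℕ) (f : α → ℝ≥0∞), Measurable f →
      ∫⁻ x : Fin n → α, ∏ i, f (x i) ∂(Measure.pi fun _ => μ) = (∫⁻ a, f a ∂μ) ^ n := by
  intro n
  induction n with
  | zero => intro f hf; simp [Measure.pi_of_empty]
  | succ n ih =>
    intro f hf
    have h1 := (measurePreserving_piFinSuccAbove (fun _ : Fin (n+1) => μ) 0).symm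
    rw [← h1.lintegral_comp (by fun_prop)]
    have heq : ∀ p : α × (Fin n → α),
        (∏ i, f (((MeasurableEquiv.piFinSuccAbove (fun _ : Fin (n+1) => α) 0).symm p) i))
          = f p.1 * ∏ j, f (p.2 j) := by
      intro p
      rw [Fin.prod_univ_succAbove _ 0]
      simp [MeasurableEquiv.piFinSuccAbove]
    simp only [Function.comp, heq]
    rw [lintegral_prod _ (by fun_prop)]
    simp only [lintegral_const_mul _ (by fun_prop : Measurable fun y : Fin n → α => ∏ j, f (y j))]
    rw [ih f hf, lintegral_mul_const _ hf, pow_succ, mul_comm]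

theorem contig_lintegral_pi_prod' {α : Type*} [MeasurableSpace α] (μ : Measure α)
    [IsProbabilityMeasure μ] :
    ∀ (n : ℕ) (f : Fin n → α → ℝ≥0∞), (∀ i, Measurable (f i)) →
      ∫⁻ x : Fin n → α, ∏ i, f i (x i) ∂(Measure.pi fun _ => μ) = ∏ i, ∫⁻ a, f i a ∂μ := by
  intro n
  induction n with
  | zero => intro f hf; simp [Measure.pi_of_empty]
  | succ n ih =>
    intro f hf
    have h1 := (measurePreserving_piFinSuccAbove (fun _ : Fin (n+1) => μ) 0).symm
    rw [← h1.lintegral_comp (by fun_prop)]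
    have heq : ∀ p : α × (Fin n → α),
        (∏ i, f i (((MeasurableEquiv.piFinSuccAbove (fun _ : Fin (n+1) => α) 0).symm p) i))
          = f 0 p.1 * ∏ j, f (Fin.succAbove 0 j) (p.2 j) := by
      intro p
      rw [Fin.prod_univ_succAbove _ 0]
      simp [MeasurableEquiv.piFinSuccAbove]
    simp only [Function.comp, heq]
    rw [lintegral_prod _ (by fun_prop)]
    simp only [lintegral_const_mul _
      (by fun_prop : Measurable fun y : Fin n → α => ∏ j, f (Fin.succAbove 0 j) (y j))]
    rw [ih _ (fun j => hf _), lintegral_mul_const _ (hf 0), Fin.prod_univ_succAbove _ 0, mul_comm]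

theorem contig_pi_withDensity {α : Type*} [MeasurableSpace α] (μ : Measure α)
    [IsProbabilityMeasure μ] (g : α → ℝ≥0∞) (hg : Measurable g) (hgfin : ∫⁻ a, g a ∂μ ≠ ⊤)
    (n : ℕ) :
    Measure.pi (fun _ : Fin n => μ.withDensity g)
      = (Measure.pi fun _ => μ).withDensity fun x => ∏ i, g (x i) := by
  haveI hfin : IsFiniteMeasure (μ.withDensity g) := isFiniteMeasure_withDensity hgfin
  have hbox : ∀ s : Fin n → Set α, (∀ i, MeasurableSet (s i)) →
      ((Measure.pi fun _ => μ).withDensity fun x => ∏ i, g (x i)) (Set.pi Set.univ s)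
        = ∏ i, (μ.withDensity g) (s i) := by
    intro s hs
    rw [withDensity_apply _ (MeasurableSet.univ_pi hs)]
    have : ∀ x : Fin n → α, (Set.pi Set.univ s).indicator (fun x => ∏ i, g (x i)) x
        = ∏ i, (s i).indicator g (x i) := by
      intro x
      by_cases hx : x ∈ Set.pi Set.univ s
      · rw [Set.indicator_of_mem hx]
        exact Finset.prod_congr rfl fun i _ => (Set.indicator_of_mem (hx i trivial) g).symm
      · rw [Set.indicator_of_notMem hx]
        obtain ⟨i, hi⟩ := by simpa [Set.mem_pi] using hx
        exact (Finset.prod_eq_zero (Finset.mem_univ i) (by simp [Set.indicator_of_notMem hi])).symm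
    rw [← lintegral_indicator (MeasurableSet.univ_pi hs) _]
    simp_rw [this]
    rw [contig_lintegral_pi_prod' μ n _ (fun i => hg.indicator (hs i))]
    refine Finset.prod_congr rfl fun i _ => ?_
    rw [lintegral_indicator (hs i) g, withDensity_apply _ (hs i)]
  exact Measure.pi_eq hbox

/-- Contiguity of the product laws of the mixture alternatives
`Fₙ = (1 − γ/√n) F₀ + (γ/√n) H` with respect to the product laws of `F₀`. -/
theorem stmt_13 {d : ℕ}
    (f₀ h : EuclideanSpace ℝ (Fin d) → ℝ)
    (hf₀c : Continuous f₀) (hhc : Continuous h)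
    (hf₀pos : ∀ x, 0 < f₀ x) (hhpos : ∀ x, 0 < h x)
    (F₀ H : Measure (EuclideanSpace ℝ (Fin d)))
    (hF₀ : F₀ = volume.withDensity fun x => ENNReal.ofReal (f₀ x))
    (hH : H = volume.withDensity fun x => ENNReal.ofReal (h x))
    [IsProbabilityMeasure F₀] [IsProbabilityMeasure H]
    (hmom : Integrable (fun x => (h x / f₀ x - 1) ^ 4) F₀)
    (γ : ℝ) (hγ : 0 < γ)
    (A : (n : ℕ) → Set (Fin n → EuclideanSpace ℝ (Fin d)))
    (hA : ∀ n, MeasurableSet (A n))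
    (h₀ : Tendsto (fun n : ℕ => Measure.pi (fun _ : Fin n => F₀) (A n)) atTop (𝓝 0)) :
    Tendsto (fun n : ℕ =>
      Measure.pi (fun _ : Fin n =>
        ENNReal.ofReal (1 - γ / Real.sqrt (n : ℝ)) • F₀ +
          ENNReal.ofReal (γ / Real.sqrt (n : ℝ)) • H) (A n))
      atTop (𝓝 0) := by
  have hf₀ne : ∀ x, f₀ x ≠ 0 := fun x => (hf₀pos x).ne'
  have hℓRc : Continuous fun x => h x / f₀ x := hhc.div hf₀c hf₀ne
  set ℓ : EuclideanSpace ℝ (Fin d) → ℝ≥0∞ := fun x => ENNReal.ofReal (h x / f₀ x) with hℓdef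
  have hℓm : Measurable ℓ := hℓRc.measurable.ennreal_ofReal
  -- H as a density w.r.t. F₀
  have hHd : H = F₀.withDensity ℓ := by
    rw [hF₀, ← withDensity_mul _ hf₀c.measurable.ennreal_ofReal hℓm, hH]
    congr 1
    funext x
    simp only [Pi.mul_apply]
    rw [← ENNReal.ofReal_mul (hf₀pos x).le]
    congr 1
    rw [mul_comm, div_mul_cancel₀ _ (hf₀ne x)]
  -- mean of the likelihood ratio is 1
  have hl1 : ∫⁻ x, ℓ x ∂F₀ = 1 := by
    have h2 : (F₀.withDensity ℓ) Set.univ = 1 := by rw [← hHd]; exact measure_univ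
    rwa [withDensity_apply _ MeasurableSet.univ, setLIntegral_univ] at h2
  -- second moment is finite
  have hmom' : Integrable (fun x => 4 + 2 * (h x / f₀ x - 1) ^ 4) F₀ :=
    (integrable_const 4).add (hmom.const_mul 2)
  set K : ℝ≥0∞ := ∫⁻ x, ℓ x ^ 2 ∂F₀ with hKdef
  have hKlt : K < ⊤ := by
    refine lt_of_le_of_lt (lintegral_mono fun x => ?_) hmom'.lintegral_lt_top
    have hnn : 0 ≤ h x / f₀ x := div_nonneg (hhpos x).le (hf₀pos x).le
    calc ℓ x ^ 2 = ENNReal.ofReal ((h x / f₀ x) ^ 2) := by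
          rw [hℓdef]; exact (ENNReal.ofReal_pow hnn 2).symm
      _ ≤ ENNReal.ofReal (4 + 2 * (h x / f₀ x - 1) ^ 4) := by
          refine ENNReal.ofReal_le_ofReal ?_
          nlinarith [sq_nonneg (h x / f₀ x - 1), sq_nonneg ((h x / f₀ x - 1) ^ 2 - 1)]
  set k : ℝ := K.toReal with hkdef
  have hk0 : 0 ≤ k := ENNReal.toReal_nonneg
  set C : ℝ≥0∞ := ENNReal.ofReal (Real.exp (γ ^ 2 * k)) ^ (1 / 2 : ℝ) with hCdef
  have hCne : C ≠ ⊤ := by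
    rw [hCdef]
    exact ENNReal.rpow_ne_top_of_nonneg (by norm_num) ENNReal.ofReal_ne_top
  -- the key quantitative bound
  have key : ∀ n : ℕ, 1 ≤ n → γ ^ 2 ≤ (n : ℝ) →
      Measure.pi (fun _ : Fin n =>
        ENNReal.ofReal (1 - γ / Real.sqrt (n : ℝ)) • F₀ +
          ENNReal.ofReal (γ / Real.sqrt (n : ℝ)) • H) (A n)
        ≤ C * (Measure.pi (fun _ : Fin n => F₀) (A n)) ^ (1 / 2 : ℝ) := by
    intro n hn1 hn2
    have hn0 : (0 : ℝ) < n := by exact_mod_cast hn1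
    set ε : ℝ := γ / Real.sqrt n with hεdef
    have hε0 : 0 ≤ ε := div_nonneg hγ.le (Real.sqrt_nonneg _)
    have hε1 : ε ≤ 1 := by
      rw [hεdef, div_le_one (Real.sqrt_pos.2 hn0)]
      calc γ = Real.sqrt (γ ^ 2) := (Real.sqrt_sq hγ.le).symm
        _ ≤ Real.sqrt n := Real.sqrt_le_sqrt hn2
    have hε2 : ε ^ 2 = γ ^ 2 / n := by
      rw [hεdef, div_pow, Real.sq_sqrt hn0.le]
    set a : ℝ≥0∞ := ENNReal.ofReal (1 - ε) with hadef
    set b : ℝ≥0∞ := ENNReal.ofReal ε with hbdef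
    set g : EuclideanSpace ℝ (Fin d) → ℝ≥0∞ := fun x => a + b * ℓ x with hgdef
    have hgm : Measurable g := measurable_const.add (hℓm.const_mul b)
    have hab : a + b = 1 := by
      rw [hadef, hbdef, ← ENNReal.ofReal_add (by linarith) hε0]
      norm_num
    -- the mixture as a density
    have hFn : ENNReal.ofReal (1 - ε) • F₀ + ENNReal.ofReal ε • H = F₀.withDensity g := by
      rw [hHd, ← withDensity_smul b hℓm, ← withDensity_const (μ := F₀) a,
        ← withDensity_add_left measurable_const]
      rfl
    have hgint : ∫⁻ x, g x ∂F₀ ≠ ⊤ := by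
      rw [hgdef]
      simp only [lintegral_add_left measurable_const, lintegral_const, measure_univ, mul_one,
        lintegral_const_mul _ hℓm, hl1]
      exact ENNReal.add_ne_top.2 ⟨ENNReal.ofReal_ne_top, by simp [hbdef]⟩
    -- second-moment bound for g
    have hg2 : ∫⁻ x, g x ^ 2 ∂F₀ ≤ ENNReal.ofReal (1 + ε ^ 2 * k) := by
      have hexp : ∀ x, g x ^ 2 = a ^ 2 + (2 * a * b) * ℓ x + b ^ 2 * ℓ x ^ 2 := by
        intro x; rw [hgdef]; ring
      have hint : ∫⁻ x, g x ^ 2 ∂F₀ = a ^ 2 + (2 * a * b) * 1 + b ^ 2 * K := by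
        simp_rw [hexp]
        rw [lintegral_add_right _ ((hℓm.pow_const 2).const_mul _),
          lintegral_add_right _ (hℓm.const_mul _), lintegral_const, measure_univ, mul_one,
          lintegral_const_mul _ hℓm, hl1, lintegral_const_mul _ (hℓm.pow_const 2), hKdef]
      have hbK : b ^ 2 * K = ENNReal.ofReal (ε ^ 2 * k) := by
        rw [hbdef, ← ENNReal.ofReal_pow hε0, hkdef, ← ENNReal.ofReal_toReal hKlt.ne,
          ← ENNReal.ofReal_mul (by positivity)]
        simp
      rw [hint]
      calc a ^ 2 + (2 * a * b) * 1 + b ^ 2 * K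
          ≤ (a ^ 2 + 2 * a * b + b ^ 2) + ENNReal.ofReal (ε ^ 2 * k) := by
            rw [hbK, mul_one]
            exact add_le_add le_self_add le_rfl
        _ = 1 + ENNReal.ofReal (ε ^ 2 * k) := by
            rw [show a ^ 2 + 2 * a * b + b ^ 2 = (a + b) ^ 2 by ring, hab, one_pow]
        _ = ENNReal.ofReal (1 + ε ^ 2 * k) := by
            rw [ENNReal.ofReal_add (by norm_num) (by positivity), ENNReal.ofReal_one]
    -- pass to the product measure and apply Cauchy–Schwarz
    rw [show (Measure.pi (fun _ : Fin n =>
        ENNReal.ofReal (1 - γ / Real.sqrt (n : ℝ)) • F₀ +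
          ENNReal.ofReal (γ / Real.sqrt (n : ℝ)) • H))
        = Measure.pi (fun _ : Fin n => F₀.withDensity g) by rw [hFn],
      contig_pi_withDensity F₀ g hgm hgint n, withDensity_apply _ (hA n),
      ← lintegral_indicator (hA n) _]
    set χ : (Fin n → EuclideanSpace ℝ (Fin d)) → ℝ≥0∞ :=
      (A n).indicator (fun _ => (1 : ℝ≥0∞)) with hχdef
    have hχm : Measurable χ := measurable_const.indicator (hA n)
    have hLm : Measurable fun x : Fin n → EuclideanSpace ℝ (Fin d) => ∏ i, g (x i) := by
      fun_prop
    have hprod : ∀ x, (A n).indicator (fun x => ∏ i, g (x i)) x = (∏ i, g (x i)) * χ x := by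
      intro x
      by_cases hx : x ∈ A n
      · simp [hχdef, Set.indicator_of_mem hx]
      · simp [hχdef, Set.indicator_of_notMem hx]
    calc ∫⁻ x : Fin n → EuclideanSpace ℝ (Fin d), (A n).indicator (fun x => ∏ i, g (x i)) x ∂(Measure.pi fun _ => F₀)
        = ∫⁻ x, ((fun x : Fin n → EuclideanSpace ℝ (Fin d) => ∏ i, g (x i)) * χ) x ∂(Measure.pi fun _ => F₀) := by
          exact lintegral_congr fun x => hprod x
      _ ≤ (∫⁻ x, (∏ i, g (x i)) ^ (2 : ℝ) ∂(Measure.pi fun _ => F₀)) ^ (1 / 2 : ℝ) *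
            (∫⁻ x, χ x ^ (2 : ℝ) ∂(Measure.pi fun _ => F₀)) ^ (1 / 2 : ℝ) :=
          ENNReal.lintegral_mul_le_Lp_mul_Lq _
            Real.HolderConjugate.two_two
            hLm.aemeasurable hχm.aemeasurable
      _ ≤ C * (Measure.pi (fun _ : Fin n => F₀) (A n)) ^ (1 / 2 : ℝ) := by
          refine mul_le_mul' ?_ ?_
          · -- L² factor
            have e1 : ∫⁻ x, (∏ i, g (x i)) ^ (2 : ℝ) ∂(Measure.pi fun _ : Fin n => F₀)
                = (∫⁻ x, g x ^ 2 ∂F₀) ^ n := by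
              have : ∀ x : Fin n → EuclideanSpace ℝ (Fin d),
                  (∏ i, g (x i)) ^ (2 : ℝ) = ∏ i, g (x i) ^ 2 := by
                intro x
                rw [show (2 : ℝ) = ((2 : ℕ) : ℝ) by norm_num, ENNReal.rpow_natCast,
                  Finset.prod_pow]
              simp_rw [this]
              exact contig_lintegral_pi_prod F₀ n _ (hgm.pow_const 2)
            rw [e1]
            refine ENNReal.rpow_le_rpow ?_ (by norm_num)
            calc (∫⁻ x, g x ^ 2 ∂F₀) ^ n ≤ (ENNReal.ofReal (1 + ε ^ 2 * k)) ^ n := by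
                  gcongr
              _ = ENNReal.ofReal ((1 + ε ^ 2 * k) ^ n) := by
                  rw [ENNReal.ofReal_pow (by positivity)]
              _ ≤ ENNReal.ofReal (Real.exp (γ ^ 2 * k)) := by
                  refine ENNReal.ofReal_le_ofReal ?_
                  have h1 : 1 + ε ^ 2 * k ≤ Real.exp (ε ^ 2 * k) := by
                    linarith [Real.add_one_le_exp (ε ^ 2 * k)]
                  calc (1 + ε ^ 2 * k) ^ n ≤ Real.exp (ε ^ 2 * k) ^ n := by
                        exact pow_le_pow_left₀ (by positivity) h1 n
                    _ = Real.exp (n * (ε ^ 2 * k)) := (Real.exp_nat_mul _ n).symm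
                    _ = Real.exp (γ ^ 2 * k) := by
                        rw [hε2]
                        congr 1
                        field_simp
          · -- indicator factor
            have e2 : ∀ x, χ x ^ (2 : ℝ) = χ x := by
              intro x
              by_cases hx : x ∈ A n
              · simp [hχdef, Set.indicator_of_mem hx]
              · simp [hχdef, Set.indicator_of_notMem hx,
                  ENNReal.zero_rpow_of_pos (by norm_num : (0:ℝ) < 2)]
            refine ENNReal.rpow_le_rpow (le_of_eq ?_) (by norm_num)
            calc ∫⁻ x, χ x ^ (2 : ℝ) ∂(Measure.pi fun _ : Fin n => F₀)
                = ∫⁻ x, χ x ∂(Measure.pi fun _ : Fin n => F₀) := lintegral_congr e2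
              _ = (Measure.pi fun _ : Fin n => F₀) (A n) := by
                  rw [hχdef, lintegral_indicator (hA n)]
                  exact setLIntegral_one _
  -- squeeze
  have hbnd : Tendsto (fun n : ℕ =>
      C * (Measure.pi (fun _ : Fin n => F₀) (A n)) ^ (1 / 2 : ℝ)) atTop (𝓝 0) := by
    have h2 : Tendsto (fun n : ℕ => (Measure.pi (fun _ : Fin n => F₀) (A n)) ^ (1 / 2 : ℝ))
        atTop (𝓝 0) := by
      have hc : Continuous fun x : ℝ≥0∞ => x ^ (1 / 2 : ℝ) := ENNReal.continuous_rpow_const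
      have := (hc.tendsto 0).comp h₀
      simpa [Function.comp_def, ENNReal.zero_rpow_of_pos (by norm_num : (0:ℝ) < 1 / 2)] using this
    have := ENNReal.Tendsto.const_mul h2 (Or.inr hCne)
    simpa using this
  refine tendsto_of_tendsto_of_tendsto_of_le_of_le' tendsto_const_nhds hbnd
    (Eventually.of_forall fun n => zero_le) ?_
  filter_upwards [eventually_ge_atTop (max 1 ⌈γ ^ 2⌉₊)] with n hn
  exact key n (le_trans (le_max_left _ _) hn)
    (le_trans (Nat.le_ceil _) (by exact_mod_cast le_trans (le_max_right _ _) hn))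
end

section
/- Let f and h be continuous, strictly positive probability densities on ℝ^d such that ∫ (h(x)/f(x) − 1)^4 f(x) dx < ∞, let F and H be the corresponding probability measures, and fix γ > 0. Let (n_k) and (m_k) be sequences of positive integers with min(n_k, m_k) → ∞ and n_k/(n_k+m_k) → λ for some λ ∈ (0,1), and for n_k + m_k > γ² define the mixture G_k = (1 − γ/√(n_k+m_k)) F + (γ/√(n_k+m_k)) H. Then the sequence of product measures (F^{⊗n_k} ⊗ G_k^{⊗m_k}) is contiguous with respect to (F^{⊗n_k} ⊗ F^{⊗m_k}): for every sequence of Borel sets A_k ⊆ (ℝ^d)^{n_k} × (ℝ^d)^{m_k} with (F^{⊗n_k} ⊗ F^{⊗m_k})(A_k) → 0, one also has (F^{⊗n_k} ⊗ G_k^{⊗m_k})(A_k) → 0. -/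
open MeasureTheory ProbabilityTheory Filter Topology
open scoped ENNReal

lemma lintegral_pi_prod' {α : Type*} [MeasurableSpace α] (μ : Measure α) [SigmaFinite μ] :
    ∀ {N : ℕ} (g : Fin N → α → ℝ≥0∞), (∀ i, Measurable (g i)) →
    ∫⁻ x : Fin N → α, ∏ i, g i (x i) ∂(Measure.pi fun _ => μ) = ∏ i, ∫⁻ x, g i x ∂μ := by
  intro N
  induction N with
  | zero => intro g hg; simp
  | succ N ih =>
    intro g hg
    have hmp := measurePreserving_piFinSuccAbove (fun _ : Fin (N + 1) => μ) 0
    have hmeas : Measurable fun x : Fin (N + 1) → α => ∏ i, g i (x i) :=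
      Finset.measurable_prod _ fun i _ => (hg i).comp (measurable_pi_apply i)
    rw [← (MeasurePreserving.symm _ hmp).lintegral_comp hmeas]
    have hEq : ∀ p : α × (Fin N → α),
        (∏ i, g i (((MeasurableEquiv.piFinSuccAbove (fun _ : Fin (N+1) => α) 0).symm p) i))
        = g 0 p.1 * ∏ j : Fin N, g j.succ (p.2 j) := by
      intro p
      simp only [MeasurableEquiv.piFinSuccAbove_symm_apply, Fin.insertNthEquiv,
        Fin.insertNth_zero]
      rw [Fin.prod_univ_succ]
      simp [Fin.zero_succAbove]
    simp_rw [hEq]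
    rw [lintegral_prod_mul (f := g 0) (g := fun y : Fin N → α => ∏ j, g j.succ (y j))
      ((hg 0).aemeasurable)
      ((Finset.measurable_prod _ fun j _ => (hg j.succ).comp (measurable_pi_apply j)).aemeasurable)]
    rw [ih (fun j => g j.succ) (fun j => hg j.succ), Fin.prod_univ_succ]

lemma pi_withDensity' {α : Type*} [MeasurableSpace α] (μ : Measure α) [SigmaFinite μ]
    {N : ℕ} (g : α → ℝ≥0∞) (hg : Measurable g) [SigmaFinite (μ.withDensity g)] :
    (Measure.pi fun _ : Fin N => μ.withDensity g) =
      (Measure.pi fun _ : Fin N => μ).withDensity (fun y => ∏ i, g (y i)) := by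
  refine Measure.pi_eq (μ := fun _ : Fin N => μ.withDensity g) fun s hs => ?_
  rw [withDensity_apply _ (MeasurableSet.univ_pi hs), ← lintegral_indicator (MeasurableSet.univ_pi hs)]
  have hEq : ∀ y : Fin N → α,
      (Set.univ.pi s).indicator (fun y => ∏ i, g (y i)) y = ∏ i, (s i).indicator g (y i) := by
    intro y
    by_cases hy : y ∈ Set.univ.pi s
    · rw [Set.indicator_of_mem hy]
      exact Finset.prod_congr rfl fun i _ =>
        (Set.indicator_of_mem (hy i (Set.mem_univ i)) g).symm
    · rw [Set.indicator_of_notMem hy]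
      have : ∃ i, y i ∉ s i := by
        by_contra hc
        push_neg at hc
        exact hy fun i _ => hc i
      obtain ⟨i, hi⟩ := this
      exact (Finset.prod_eq_zero (Finset.mem_univ i)
        (by simp [Set.indicator_of_notMem hi])).symm
  simp_rw [hEq]
  rw [lintegral_pi_prod' μ (fun i => (s i).indicator g) (fun i => hg.indicator (hs i))]
  exact Finset.prod_congr rfl fun i _ => by
    rw [lintegral_indicator (hs i), ← withDensity_apply _ (hs i)]

lemma lintegral_cs' {α : Type*} [MeasurableSpace α] (μ : Measure α) (ρ : α → ℝ≥0∞)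
    (hρ : AEMeasurable ρ μ) (S : Set α) (hS : MeasurableSet S) :
    ∫⁻ x in S, ρ x ∂μ ≤ (∫⁻ x, ρ x ^ 2 ∂μ) ^ (1/2 : ℝ) * (μ S) ^ (1/2 : ℝ) := by
  have h1 : ∫⁻ x in S, ρ x ∂μ = ∫⁻ x, ρ x * S.indicator 1 x ∂μ := by
    rw [← lintegral_indicator hS]
    congr 1 with x
    by_cases hx : x ∈ S <;>
      simp [Set.indicator_of_mem, Set.indicator_of_notMem, hx]
  rw [h1]
  have hpq : (2:ℝ).HolderConjugate 2 := Real.HolderConjugate.two_two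
  have := ENNReal.lintegral_mul_le_Lp_mul_Lq μ hpq hρ ((measurable_one.indicator hS).aemeasurable)
  simp only [Pi.mul_apply] at this
  have e1 : ∫⁻ a, ρ a ^ (2:ℝ) ∂μ = ∫⁻ a, ρ a ^ 2 ∂μ :=
    lintegral_congr fun x => by
      rw [← ENNReal.rpow_natCast (ρ x) 2]; norm_num
  have e2 : ∫⁻ a, S.indicator (1 : α → ℝ≥0∞) a ^ (2:ℝ) ∂μ = μ S := by
    rw [← lintegral_indicator_one hS]
    refine lintegral_congr fun x => ?_
    by_cases hx : x ∈ S <;> simp [hx]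
  rw [e1, e2] at this
  exact this

/-- Two-sample contiguity: the product laws `F^{⊗n_k} ⊗ G_k^{⊗m_k}` of the mixture
alternatives `G_k = (1 − γ/√(n_k+m_k)) F + (γ/√(n_k+m_k)) H` are contiguous with respect
to the null product laws `F^{⊗n_k} ⊗ F^{⊗m_k}`. -/
theorem stmt_15 {d : ℕ}
    (f h : EuclideanSpace ℝ (Fin d) → ℝ)
    (hfc : Continuous f) (hhc : Continuous h)
    (hfpos : ∀ x, 0 < f x) (hhpos : ∀ x, 0 < h x)
    (F H : Measure (EuclideanSpace ℝ (Fin d)))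
    (hF : F = volume.withDensity fun x => ENNReal.ofReal (f x))
    (hH : H = volume.withDensity fun x => ENNReal.ofReal (h x))
    [IsProbabilityMeasure F] [IsProbabilityMeasure H]
    (hmom : Integrable (fun x => (h x / f x - 1) ^ 4) F)
    (γ : ℝ) (hγ : 0 < γ)
    (n m : ℕ → ℕ)
    (hmin : Tendsto (fun k => min (n k) (m k)) atTop atTop)
    (lam : ℝ) (hlam : lam ∈ Set.Ioo (0 : ℝ) 1)
    (hratio : Tendsto (fun k => (n k : ℝ) / ((n k : ℝ) + (m k : ℝ))) atTop (𝓝 lam))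
    (A : (k : ℕ) → Set ((Fin (n k) → EuclideanSpace ℝ (Fin d)) ×
      (Fin (m k) → EuclideanSpace ℝ (Fin d))))
    (hA : ∀ k, MeasurableSet (A k))
    (h₀ : Tendsto (fun k =>
      ((Measure.pi fun _ : Fin (n k) => F).prod (Measure.pi fun _ : Fin (m k) => F)) (A k))
      atTop (𝓝 0)) :
    Tendsto (fun k =>
      ((Measure.pi fun _ : Fin (n k) => F).prod
        (Measure.pi fun _ : Fin (m k) =>
          ENNReal.ofReal (1 - γ / Real.sqrt ((n k : ℝ) + (m k : ℝ))) • F +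
            ENNReal.ofReal (γ / Real.sqrt ((n k : ℝ) + (m k : ℝ))) • H)) (A k))
      atTop (𝓝 0) := by
  classical
  have hfm : Measurable fun x => ENNReal.ofReal (f x) :=
    ENNReal.measurable_ofReal.comp hfc.measurable
  have hrc : Continuous fun x => h x / f x := hhc.div hfc fun x => (hfpos x).ne'
  set r : EuclideanSpace ℝ (Fin d) → ℝ≥0∞ := fun x => ENNReal.ofReal (h x / f x) with hrdef
  have hrm : Measurable r := ENNReal.measurable_ofReal.comp hrc.measurable
  set ε : ℕ → ℝ := fun k => γ / Real.sqrt ((n k : ℝ) + (m k : ℝ)) with hεdef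
  have hεnn : ∀ k, 0 ≤ ε k := fun k => div_nonneg hγ.le (Real.sqrt_nonneg _)
  set g : ℕ → EuclideanSpace ℝ (Fin d) → ℝ≥0∞ :=
    fun k x => ENNReal.ofReal (1 - ε k) + ENNReal.ofReal (ε k) * r x with hgdef
  have hgm : ∀ k, Measurable (g k) := fun k => measurable_const.add (measurable_const.mul hrm)
  -- H as density w.r.t. F
  have hHF : H = F.withDensity r := by
    rw [hF, ← withDensity_mul _ hfm hrm, hH]
    congr 1
    funext x
    rw [Pi.mul_apply, hrdef, ← ENNReal.ofReal_mul (hfpos x).le, mul_comm,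
      div_mul_cancel₀ _ (hfpos x).ne']
  -- mixture as density w.r.t. F
  have hG : ∀ k, (ENNReal.ofReal (1 - ε k) • F + ENNReal.ofReal (ε k) • H)
      = F.withDensity (g k) := by
    intro k
    rw [hHF, ← withDensity_const (μ := F) (ENNReal.ofReal (1 - ε k)),
      ← withDensity_smul _ hrm, ← withDensity_add_right _ (hrm.const_smul (ENNReal.ofReal (ε k)))]
    congr 1
  -- first moment
  have hI1 : ∫⁻ x, r x ∂F = 1 := by
    have hu : H Set.univ = 1 := measure_univ
    rw [hHF, withDensity_apply _ MeasurableSet.univ, Measure.restrict_univ] at hu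
    exact hu
  -- second moment, real side
  have hφint : Integrable (fun x => (h x / f x) ^ 2) F := by
    refine Integrable.mono' ((integrable_const (4 : ℝ)).add (hmom.const_mul 2))
      (hrc.pow 2).aestronglyMeasurable (ae_of_all _ fun x => ?_)
    rw [Real.norm_eq_abs, abs_of_nonneg (sq_nonneg _)]
    simp only [Pi.add_apply]
    nlinarith [sq_nonneg ((h x / f x - 1) ^ 2 - 1), sq_nonneg (h x / f x - 2),
      sq_nonneg ((h x / f x - 1) ^ 2)]
  set c : ℝ := ∫ x, (h x / f x) ^ 2 ∂F with hcdef
  have hc0 : 0 ≤ c := integral_nonneg fun x => sq_nonneg _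
  have hI2 : ∫⁻ x, r x ^ 2 ∂F = ENNReal.ofReal c := by
    rw [hcdef, ofReal_integral_eq_lintegral_ofReal hφint (ae_of_all _ fun x => sq_nonneg _)]
    exact lintegral_congr fun x => by
      rw [hrdef, ← ENNReal.ofReal_pow (div_nonneg (hhpos x).le (hfpos x).le)]
  -- second moment of the density g k
  have hv : ∀ k, ε k ≤ 1 →
      ∫⁻ x, g k x ^ 2 ∂F = ENNReal.ofReal ((1 - ε k) ^ 2 + ((1 - ε k) * ε k + (1 - ε k) * ε k)
        + ε k ^ 2 * c) := by
    intro k hk1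
    have expand : ∀ x, g k x ^ 2 = ENNReal.ofReal (1 - ε k) ^ 2
        + ((ENNReal.ofReal (1 - ε k) * ENNReal.ofReal (ε k)
            + ENNReal.ofReal (1 - ε k) * ENNReal.ofReal (ε k)) * r x
          + ENNReal.ofReal (ε k) ^ 2 * r x ^ 2) := by
      intro x; rw [hgdef]; ring
    simp_rw [expand]
    rw [lintegral_add_left measurable_const,
      lintegral_add_left (hrm.const_mul _),
      lintegral_const_mul _ hrm, lintegral_const_mul _ (hrm.pow_const 2),
      lintegral_const, hI1, hI2, measure_univ, mul_one, mul_one]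
    have h1 : (0:ℝ) ≤ 1 - ε k := by linarith
    rw [← ENNReal.ofReal_mul h1, ← ENNReal.ofReal_pow h1, ← ENNReal.ofReal_pow (hεnn k),
      ← ENNReal.ofReal_mul (pow_nonneg (hεnn k) 2),
      ← ENNReal.ofReal_add (mul_nonneg h1 (hεnn k)) (mul_nonneg h1 (hεnn k)),
      ← ENNReal.ofReal_add (add_nonneg (mul_nonneg h1 (hεnn k)) (mul_nonneg h1 (hεnn k)))
        (mul_nonneg (pow_nonneg (hεnn k) 2) hc0),
      ← ENNReal.ofReal_add (pow_nonneg h1 2)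
        (add_nonneg (add_nonneg (mul_nonneg h1 (hεnn k)) (mul_nonneg h1 (hεnn k)))
          (mul_nonneg (pow_nonneg (hεnn k) 2) hc0))]
    congr 1
    ring
  -- uniform second-moment bound
  set B : ℝ≥0∞ := ENNReal.ofReal (Real.exp (γ ^ 2 * c)) with hBdef
  have hBne : B ≠ ⊤ := ENNReal.ofReal_ne_top
  have hpow : ∀ k, ε k ≤ 1 → (γ:ℝ)^2 ≤ (n k : ℝ) + m k →
      (∫⁻ x, g k x ^ 2 ∂F) ^ (m k) ≤ B := by
    intro k hk1 hk2
    have hs : (0:ℝ) < (n k : ℝ) + m k := lt_of_lt_of_le (by positivity) hk2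
    have hεsq : ε k ^ 2 = γ ^ 2 / ((n k : ℝ) + m k) := by
      rw [hεdef]
      rw [div_pow, Real.sq_sqrt hs.le]
    rw [hv k hk1]
    have key : (1 - ε k) ^ 2 + ((1 - ε k) * ε k + (1 - ε k) * ε k) + ε k ^ 2 * c
        ≤ Real.exp (ε k ^ 2 * c) := by
      nlinarith [Real.add_one_le_exp (ε k ^ 2 * c), sq_nonneg (ε k),
        mul_nonneg (sq_nonneg (ε k)) hc0]
    refine le_trans (pow_le_pow_left' (ENNReal.ofReal_le_ofReal key) (m k)) ?_
    rw [← ENNReal.ofReal_pow (Real.exp_nonneg _), ← Real.exp_nat_mul]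
    refine ENNReal.ofReal_le_ofReal (Real.exp_le_exp.mpr ?_)
    rw [hεsq]
    have hle : (m k : ℝ) ≤ (n k : ℝ) + m k := by
      have : (0:ℝ) ≤ (n k : ℝ) := Nat.cast_nonneg _
      linarith
    have hdiv : (m k : ℝ) / ((n k : ℝ) + m k) ≤ 1 := (div_le_one hs).mpr hle
    calc (m k : ℝ) * (γ ^ 2 / ((n k : ℝ) + m k) * c)
        = ((m k : ℝ) / ((n k : ℝ) + m k)) * (γ ^ 2 * c) := by
          field_simp
      _ ≤ 1 * (γ ^ 2 * c) := by
          exact mul_le_mul_of_nonneg_right hdiv (by positivity)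
      _ = γ ^ 2 * c := one_mul _
  -- the key Cauchy–Schwarz bound
  have key : ∀ k, ε k ≤ 1 → (γ:ℝ)^2 ≤ (n k : ℝ) + m k →
      ((Measure.pi fun _ : Fin (n k) => F).prod (Measure.pi fun _ : Fin (m k) =>
          ENNReal.ofReal (1 - ε k) • F + ENNReal.ofReal (ε k) • H)) (A k)
        ≤ B ^ (1/2 : ℝ) *
          (((Measure.pi fun _ : Fin (n k) => F).prod
            (Measure.pi fun _ : Fin (m k) => F)) (A k)) ^ (1/2 : ℝ) := by
    intro k hk1 hk2
    set Pn : Measure (Fin (n k) → EuclideanSpace ℝ (Fin d)) :=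
      Measure.pi fun _ : Fin (n k) => F with hPn
    set Pm : Measure (Fin (m k) → EuclideanSpace ℝ (Fin d)) :=
      Measure.pi fun _ : Fin (m k) => F with hPm
    set G : Measure (EuclideanSpace ℝ (Fin d)) :=
      ENNReal.ofReal (1 - ε k) • F + ENNReal.ofReal (ε k) • H with hGdef
    haveI : IsFiniteMeasure G := by
      constructor
      rw [hGdef]
      simp only [Measure.add_apply, Measure.smul_apply, smul_eq_mul, measure_univ, mul_one]
      exact ENNReal.add_lt_top.mpr ⟨ENNReal.ofReal_lt_top, ENNReal.ofReal_lt_top⟩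
    haveI : SigmaFinite (F.withDensity (g k)) := by
      rw [← hG k]
      infer_instance
    have hGm : (Measure.pi fun _ : Fin (m k) => G)
        = Pm.withDensity (fun y => ∏ i, g k (y i)) := by
      rw [hGdef, hG k, hPm]
      exact pi_withDensity' F (g k) (hgm k)
    haveI : IsFiniteMeasure (Measure.pi fun _ : Fin (m k) => G) := by
      constructor
      rw [Measure.pi_univ]
      exact ENNReal.prod_lt_top fun i _ => measure_lt_top G _
    have hρm : Measurable fun y : Fin (m k) → EuclideanSpace ℝ (Fin d) => ∏ i, g k (y i) :=
      Finset.measurable_prod _ fun i _ => (hgm k).comp (measurable_pi_apply i)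
    -- second moment of the product density
    have hρ2 : ∫⁻ y, (∏ i, g k (y i)) ^ 2 ∂Pm = (∫⁻ x, g k x ^ 2 ∂F) ^ (m k) := by
      simp_rw [← Finset.prod_pow]
      rw [hPm, lintegral_pi_prod' F (fun _ x => g k x ^ 2) (fun _ => (hgm k).pow_const 2)]
      rw [Finset.prod_const, Finset.card_univ, Fintype.card_fin]
    -- slice bound
    have hslice : ∀ x : Fin (n k) → EuclideanSpace ℝ (Fin d),
        (Measure.pi fun _ : Fin (m k) => G) (Prod.mk x ⁻¹' A k)
          ≤ B ^ (1/2 : ℝ) * (Pm (Prod.mk x ⁻¹' A k)) ^ (1/2 : ℝ) := by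
      intro x
      have hsl : MeasurableSet (Prod.mk x ⁻¹' A k) := measurable_prodMk_left (hA k)
      rw [hGm, withDensity_apply _ hsl]
      refine (lintegral_cs' Pm _ hρm.aemeasurable _ hsl).trans ?_
      refine mul_le_mul_left (ENNReal.rpow_le_rpow ?_ (by norm_num)) _
      rw [hρ2]
      exact hpow k hk1 hk2
    rw [Measure.prod_apply (hA k), Measure.prod_apply (hA k)]
    refine le_trans (lintegral_mono hslice) ?_
    have hwm : Measurable fun x : Fin (n k) → EuclideanSpace ℝ (Fin d) =>
        Pm (Prod.mk x ⁻¹' A k) := measurable_measure_prodMk_left (hA k)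
    have hwm2 : Measurable fun x : Fin (n k) → EuclideanSpace ℝ (Fin d) =>
        (Pm (Prod.mk x ⁻¹' A k)) ^ (1/2 : ℝ) :=
      ENNReal.continuous_rpow_const.measurable.comp hwm
    rw [lintegral_const_mul _ hwm2]
    refine mul_le_mul_right ?_ _
    -- second Cauchy–Schwarz
    have := lintegral_cs' Pn (fun x => (Pm (Prod.mk x ⁻¹' A k)) ^ (1/2 : ℝ))
      hwm2.aemeasurable Set.univ MeasurableSet.univ
    rw [Measure.restrict_univ, measure_univ, ENNReal.one_rpow, mul_one] at this
    refine this.trans (le_of_eq ?_)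
    congr 1
    refine lintegral_congr fun x => ?_
    rw [← ENNReal.rpow_natCast (_ ^ (1/2 : ℝ)) 2, ← ENNReal.rpow_mul]
    norm_num
  -- limit argument
  have hBhne : B ^ (1/2 : ℝ) ≠ ⊤ := by
    exact (ENNReal.rpow_lt_top_of_nonneg (by norm_num) hBne).ne
  have hub : Tendsto (fun k => B ^ (1/2 : ℝ) *
      (((Measure.pi fun _ : Fin (n k) => F).prod
        (Measure.pi fun _ : Fin (m k) => F)) (A k)) ^ (1/2 : ℝ)) atTop (𝓝 0) := by
    have h2 : Tendsto (fun k =>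
        (((Measure.pi fun _ : Fin (n k) => F).prod
          (Measure.pi fun _ : Fin (m k) => F)) (A k)) ^ (1/2 : ℝ)) atTop (𝓝 0) := by
      have := (ENNReal.continuous_rpow_const (y := (1/2 : ℝ))).tendsto 0
      have h0 : (0 : ℝ≥0∞) ^ (1/2 : ℝ) = 0 := by
        rw [ENNReal.zero_rpow_of_pos]; norm_num
      rw [h0] at this
      exact this.comp h₀
    have := ENNReal.Tendsto.const_mul h2 (Or.inr hBhne)
    rwa [mul_zero] at this
  -- eventual comparison
  have hev : ∀ᶠ k in atTop, ε k ≤ 1 ∧ (γ:ℝ)^2 ≤ (n k : ℝ) + m k := by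
    have hN : ∀ᶠ k in atTop, (⌈γ ^ 2⌉₊ : ℕ) ≤ min (n k) (m k) :=
      hmin.eventually_ge_atTop _
    filter_upwards [hN] with k hk
    have hn : (⌈γ ^ 2⌉₊ : ℝ) ≤ (n k : ℝ) := by
      exact_mod_cast le_trans hk (min_le_left _ _)
    have hγ2 : (γ:ℝ)^2 ≤ (n k : ℝ) + m k := by
      have h1 : (γ:ℝ)^2 ≤ (⌈γ ^ 2⌉₊ : ℝ) := Nat.le_ceil _
      have h2 : (0:ℝ) ≤ (m k : ℝ) := Nat.cast_nonneg _
      linarith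
    refine ⟨?_, hγ2⟩
    rw [hεdef]
    have hs : (0:ℝ) < (n k : ℝ) + m k := by
      have := sq_nonneg γ
      nlinarith [hγ]
    rw [div_le_one (Real.sqrt_pos.mpr hs)]
    calc γ = Real.sqrt (γ ^ 2) := by rw [Real.sqrt_sq hγ.le]
      _ ≤ Real.sqrt ((n k : ℝ) + m k) := Real.sqrt_le_sqrt hγ2
  refine tendsto_of_tendsto_of_tendsto_of_le_of_le' tendsto_const_nhds hub
    (Eventually.of_forall fun k => zero_le) ?_
  filter_upwards [hev] with k ⟨hk1, hk2⟩
  exact key k hk1 hk2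
end

section
/- Let μ be a Borel probability measure on ℝ^d such that μ(∂H) = 0 for every closed half-space H of ℝ^d (equivalently, μ assigns zero mass to every affine hyperplane). Then the map (x, u) ↦ μ{ y ∈ ℝ^d : ⟨u, y⟩ ≤ ⟨u, x⟩ } is continuous on ℝ^d × S^{d-1}, and the half-space depth function x ↦ D_μ(x) is continuous on ℝ^d. -/
open MeasureTheory ProbabilityTheory Filter Topology Set
open scoped ENNReal RealInnerProductSpace

/-- If `μ` puts no mass on the boundary of any closed half-space, then
`(x, u) ↦ μ{ y : ⟨u, y⟩ ≤ ⟨u, x⟩ }` is continuous on `ℝ^d × S^{d-1}` and the half-space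
depth function `x ↦ D_μ(x)` is continuous. -/
theorem stmt_18 {d : ℕ}
    (μ : Measure (EuclideanSpace ℝ (Fin d))) [IsProbabilityMeasure μ]
    (hbd : ∀ u : EuclideanSpace ℝ (Fin d), ‖u‖ = 1 → ∀ c : ℝ,
      μ (frontier {y | ⟪u, y⟫ ≤ c}) = 0) :
    Continuous (fun p : EuclideanSpace ℝ (Fin d) ×
        Metric.sphere (0 : EuclideanSpace ℝ (Fin d)) 1 =>
      (μ {y | ⟪(p.2 : EuclideanSpace ℝ (Fin d)), y⟫ ≤
          ⟪(p.2 : EuclideanSpace ℝ (Fin d)), p.1⟫}).toReal) ∧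
    Continuous (fun x => halfSpaceDepth μ x) := by
  set E := EuclideanSpace ℝ (Fin d)
  set S := Metric.sphere (0 : E) 1
  set As : E × S → Set E := fun q => {y | ⟪(q.2 : E), y⟫ ≤ ⟪(q.2 : E), q.1⟫} with hAs
  have hmble : ∀ q : E × S, MeasurableSet (As q) := by
    intro q
    exact (isClosed_le (Continuous.inner continuous_const continuous_id)
      continuous_const).measurableSet
  have hcont : Continuous (fun q : E × S => (μ (As q)).toReal) := by
    rw [continuous_iff_continuousAt]
    intro p
    have hnull : μ {y : E | ⟪(p.2 : E), y⟫ = ⟪(p.2 : E), p.1⟫} = 0 := by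
      have hu1 : ‖(p.2 : E)‖ = 1 := mem_sphere_zero_iff_norm.mp p.2.2
      refine measure_mono_null ?_ (hbd (p.2 : E) hu1 ⟪(p.2 : E), p.1⟫)
      intro y hy
      have hyS : y ∈ {y : E | ⟪(p.2 : E), y⟫ ≤ ⟪(p.2 : E), p.1⟫} := le_of_eq hy
      have hclosed : IsClosed {y : E | ⟪(p.2 : E), y⟫ ≤ ⟪(p.2 : E), p.1⟫} :=
        isClosed_le (Continuous.inner continuous_const continuous_id) continuous_const
      rw [hclosed.frontier_eq]
      refine ⟨hyS, ?_⟩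
      intro hyint
      obtain ⟨ε, hε, hball⟩ := Metric.isOpen_iff.mp isOpen_interior y hyint
      have hz : y + (ε/2) • (p.2 : E) ∈ Metric.ball y ε := by
        rw [Metric.mem_ball, dist_eq_norm, add_sub_cancel_left, norm_smul, hu1, mul_one,
          Real.norm_eq_abs, abs_of_pos (by linarith : (0:ℝ) < ε/2)]
        linarith
      have hz2 := interior_subset (hball hz)
      rw [Set.mem_setOf_eq, inner_add_right, real_inner_smul_right,
        real_inner_self_eq_norm_sq, hu1] at hz2
      rw [Set.mem_setOf_eq] at hy
      nlinarith
    have hμ : Tendsto (fun q => μ (As q)) (𝓝 p) (𝓝 (μ (As p))) := by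
      refine tendsto_measure_of_ae_tendsto_indicator_of_isFiniteMeasure (𝓝 p)
        (hmble p) (fun q => hmble q) ?_
      have hae : ∀ᵐ y ∂μ, y ∉ {y : E | ⟪(p.2 : E), y⟫ = ⟪(p.2 : E), p.1⟫} :=
        MeasureTheory.measure_eq_zero_iff_ae_notMem.mp hnull
      filter_upwards [hae] with y hy
      have hg : Tendsto (fun q : E × S => ⟪(q.2 : E), y⟫ - ⟪(q.2 : E), q.1⟫) (𝓝 p)
          (𝓝 (⟪(p.2 : E), y⟫ - ⟪(p.2 : E), p.1⟫)) := by
        exact ((Continuous.inner (continuous_subtype_val.comp continuous_snd)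
          continuous_const).sub (Continuous.inner
          (continuous_subtype_val.comp continuous_snd) continuous_fst)).continuousAt
      rcases lt_or_gt_of_ne (sub_ne_zero.mpr hy) with h | h
      · filter_upwards [hg.eventually_lt_const h] with q hq
        simp only [hAs, Set.mem_setOf_eq]
        constructor
        · intro _; show ⟪(p.2 : E), y⟫ ≤ ⟪(p.2 : E), p.1⟫; linarith [sub_neg.mp h]
        · intro _; show ⟪(q.2 : E), y⟫ ≤ ⟪(q.2 : E), q.1⟫; linarith [sub_neg.mp hq]
      · filter_upwards [hg.eventually_const_lt h] with q hq
        simp only [hAs, Set.mem_setOf_eq]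
        constructor
        · intro hle; change ⟪(q.2 : E), y⟫ ≤ ⟪(q.2 : E), q.1⟫ at hle; linarith [sub_pos.mp hq]
        · intro hle; change ⟪(p.2 : E), y⟫ ≤ ⟪(p.2 : E), p.1⟫ at hle; linarith [sub_pos.mp h]
    exact (ENNReal.tendsto_toReal (measure_ne_top μ _)).comp hμ
  refine ⟨hcont, ?_⟩
  have hdepth : ∀ x : E, halfSpaceDepth μ x =
      sInf ((fun u : S => (μ (As (x, u))).toReal) '' Set.univ) := by
    intro x
    rw [Set.image_univ]
    rfl
  simp only [hdepth]
  exact IsCompact.continuous_sInf isCompact_univ hcont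
end

section
/- Let F and F_0 be Borel probability measures on ℝ^d and let X_1, X_2, … be independent and identically distributed random vectors with law F, with empirical measures μ_n. Then almost surely sup_{x ∈ ℝ^d} |D_{μ_n}(x) − D_{F_0}(x)| → sup_{x ∈ ℝ^d} |D_F(x) − D_{F_0}(x)| as n → ∞; in particular, if the depth functions of F and F_0 differ somewhere, the depth-based Kolmogorov–Smirnov distance between the sample and F_0 converges almost surely to a strictly positive limit. -/
open MeasureTheory ProbabilityTheory Filter Topology
open scoped ENNReal RealInnerProductSpace

open Module

variable {d : ℕ}

local notation "V" => EuclideanSpace ℝ (Fin d)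

/-- Finite ε-bracketing of the family of half-space traces on an affine subspace `A`. -/
def Brk (ν : Measure (EuclideanSpace ℝ (Fin d))) (A : AffineSubspace ℝ (EuclideanSpace ℝ (Fin d)))
    (ε : ℝ≥0∞) (J : Set (Set (EuclideanSpace ℝ (Fin d)) × Set (EuclideanSpace ℝ (Fin d)))) : Prop :=
  J.Finite ∧
  (∀ p ∈ J, MeasurableSet p.1 ∧ MeasurableSet p.2 ∧ ν (p.2 \ p.1) ≤ ε) ∧
  ∀ w : EuclideanSpace ℝ (Fin d), w ∈ A.direction → ‖w‖ = 1 → ∀ s : ℝ,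
    ∃ p ∈ J, p.1 ⊆ {y | ⟪w, y⟫ ≤ s} ∩ (A : Set (EuclideanSpace ℝ (Fin d))) ∧
      {y | ⟪w, y⟫ ≤ s} ∩ (A : Set (EuclideanSpace ℝ (Fin d))) ⊆ p.2

lemma far_ball (ν : Measure V) [IsFiniteMeasure ν] {ε : ℝ≥0∞} (hε : 0 < ε) :
    ∃ R : ℝ, 0 < R ∧ ν ((Metric.closedBall (0 : V) R)ᶜ) ≤ ε := by
  have h1 : Tendsto (ν ∘ fun n : ℕ => (Metric.closedBall (0 : V) n)ᶜ) atTop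
      (𝓝 (ν (⋂ n : ℕ, (Metric.closedBall (0 : V) n)ᶜ))) := by
    apply tendsto_measure_iInter_atTop
    · exact fun n => (measurableSet_closedBall.compl).nullMeasurableSet
    · intro n m hnm
      exact Set.compl_subset_compl.2 (Metric.closedBall_subset_closedBall (by exact_mod_cast hnm))
    · exact ⟨0, measure_ne_top ν _⟩
  have h2 : (⋂ n : ℕ, (Metric.closedBall (0 : V) n)ᶜ) = ∅ := by
    ext y
    simp only [Set.mem_iInter, Set.mem_compl_iff, Metric.mem_closedBall, Set.mem_empty_iff_false,
      iff_false, not_forall, not_not]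
    obtain ⟨n, hn⟩ := exists_nat_ge (dist y 0)
    exact ⟨n, hn⟩
  rw [h2, measure_empty] at h1
  have h3 := h1.eventually_lt_const hε
  obtain ⟨n, hn⟩ := h3.exists
  exact ⟨n + 1, by positivity, le_trans (measure_mono (Set.compl_subset_compl.2
    (Metric.closedBall_subset_closedBall (by push_cast; linarith)))) hn.le⟩

lemma punct_interval (ν : Measure V) [IsFiniteMeasure ν] (w₀ : V) (t : ℝ)
    {ε : ℝ≥0∞} (hε : 0 < ε) :
    ∃ c : ℝ, 0 < c ∧ ν {y : V | ⟪w₀, y⟫ ≠ t ∧ |⟪w₀, y⟫ - t| < c} ≤ ε := by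
  have hcont : Continuous fun y : V => ⟪w₀, y⟫ := continuous_const.inner continuous_id
  set s : ℕ → Set V := fun n => {y : V | ⟪w₀, y⟫ ≠ t ∧ |⟪w₀, y⟫ - t| < ((n : ℝ) + 1)⁻¹} with hs
  have hmeas : ∀ n, MeasurableSet (s n) := by
    intro n
    apply MeasurableSet.inter
    · exact (measurableSet_eq_fun (hcont.measurable) measurable_const).compl
    · exact measurableSet_lt ((hcont.measurable.sub measurable_const).abs) measurable_const
  have h1 : Tendsto (ν ∘ s) atTop (𝓝 (ν (⋂ n, s n))) := by
    apply tendsto_measure_iInter_atTop (fun n => (hmeas n).nullMeasurableSet)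
    · intro n m hnm y hy
      refine ⟨hy.1, lt_of_lt_of_le hy.2 ?_⟩
      apply inv_anti₀ (by positivity)
      have : (n : ℝ) ≤ m := Nat.cast_le.2 hnm
      linarith
    · exact ⟨0, measure_ne_top ν _⟩
  have h2 : (⋂ n, s n) = ∅ := by
    ext y
    simp only [Set.mem_iInter, Set.mem_empty_iff_false, iff_false, not_forall, hs,
      Set.mem_setOf_eq, not_and, not_lt]
    by_cases hy : ⟪w₀, y⟫ = t
    · exact ⟨0, fun h => absurd hy h⟩
    · have hpos : 0 < |⟪w₀, y⟫ - t| := abs_pos.2 (sub_ne_zero.2 hy)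
      obtain ⟨n, hn⟩ := exists_nat_gt |⟪w₀, y⟫ - t|⁻¹
      refine ⟨n, fun _ => ?_⟩
      rw [inv_le_comm₀ (by positivity) hpos]
      linarith
  rw [h2, measure_empty] at h1
  obtain ⟨n, hn⟩ := (h1.eventually_lt_const hε).exists
  exact ⟨((n : ℝ) + 1)⁻¹, by positivity, hn.le⟩

section Slice

variable (ν : Measure (EuclideanSpace ℝ (Fin d))) [IsFiniteMeasure ν]

lemma slice_brk {k : ℕ}
    (IH : ∀ (ν' : Measure (EuclideanSpace ℝ (Fin d))), IsFiniteMeasure ν' →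
      ∀ (A' : AffineSubspace ℝ (EuclideanSpace ℝ (Fin d))), finrank ℝ A'.direction ≤ k →
        ν' ((A' : Set (EuclideanSpace ℝ (Fin d)))ᶜ) = 0 → ∀ ε : ℝ≥0∞, 0 < ε → ∃ J, Brk ν' A' ε J)
    (A : AffineSubspace ℝ (EuclideanSpace ℝ (Fin d)))
    (hdim : finrank ℝ A.direction ≤ k + 1)
    (hnull : ν ((A : Set V)ᶜ) = 0)
    {a₀ : V} (ha₀ : a₀ ∈ A)
    {w₀ : V} (hw₀ : w₀ ∈ A.direction) (hw₀n : ‖w₀‖ = 1)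
    (t : ℝ) {ε : ℝ≥0∞} (hε : 0 < ε) :
    ∃ JM : Set (Set V × Set V), JM.Finite ∧
      (∀ p ∈ JM, MeasurableSet p.1 ∧ MeasurableSet p.2 ∧
        ν ((p.2 \ p.1) ∩ {y : V | ⟪w₀, y⟫ = t}) ≤ ε) ∧
      ∀ w : V, w ∈ A.direction → ∀ s : ℝ, ∃ p ∈ JM,
        p.1 ⊆ {y : V | ⟪w, y⟫ ≤ s} ∩ (A : Set V) ∩ {y : V | ⟪w₀, y⟫ = t} ∧
        {y : V | ⟪w, y⟫ ≤ s} ∩ (A : Set V) ∩ {y : V | ⟪w₀, y⟫ = t} ⊆ p.2 := by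
  classical
  have hw₀w₀ : ⟪w₀, w₀⟫ = 1 := by
    rw [real_inner_self_eq_norm_mul_norm, hw₀n]; norm_num
  -- the point m₀ on the slice
  set m₀ : V := (t - ⟪w₀, a₀⟫) • w₀ + a₀ with hm₀def
  have hm₀A : m₀ ∈ A := by
    have := AffineSubspace.vadd_mem_of_mem_direction
      (Submodule.smul_mem _ (t - ⟪w₀, a₀⟫) hw₀) ha₀
    simpa [vadd_eq_add] using this
  have hm₀t : ⟪w₀, m₀⟫ = t := by
    rw [hm₀def, inner_add_right, real_inner_smul_right, hw₀w₀]; ring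
  -- the slice as an affine subspace
  set Dker : Submodule ℝ V :=
    A.direction ⊓ LinearMap.ker ((innerSL ℝ w₀ : V →L[ℝ] ℝ) : V →ₗ[ℝ] ℝ) with hDker
  set M : AffineSubspace ℝ (EuclideanSpace ℝ (Fin d)) := AffineSubspace.mk' m₀ Dker with hM
  have hMdir : M.direction = Dker := AffineSubspace.direction_mk' m₀ Dker
  have hm₀M : m₀ ∈ M := AffineSubspace.self_mem_mk' m₀ Dker
  have hker_mem : ∀ x : V, x ∈ LinearMap.ker ((innerSL ℝ w₀ : V →L[ℝ] ℝ) : V →ₗ[ℝ] ℝ) ↔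
      ⟪w₀, x⟫ = 0 := by
    intro x
    simp [LinearMap.mem_ker]
  -- the slice coincides with A ∩ {⟪w₀,·⟫ = t}
  have hMcoe : (M : Set V) = (A : Set V) ∩ {y : V | ⟪w₀, y⟫ = t} := by
    ext y
    constructor
    · intro hy
      have h1 : y -ᵥ m₀ ∈ Dker := (AffineSubspace.mem_mk').1 hy
      obtain ⟨h1a, h1b⟩ := Submodule.mem_inf.1 h1
      have h2 : y - m₀ ∈ A.direction := by simpa [vsub_eq_sub] using h1a
      have h3 : ⟪w₀, y - m₀⟫ = 0 := by
        have := (hker_mem _).1 h1b; simpa [vsub_eq_sub] using this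
      constructor
      · have := AffineSubspace.vadd_mem_of_mem_direction h2 hm₀A
        simpa [vadd_eq_add] using this
      · simp only [Set.mem_setOf_eq]
        have : ⟪w₀, y⟫ - ⟪w₀, m₀⟫ = 0 := by rw [← inner_sub_right]; exact h3
        linarith [hm₀t]
    · rintro ⟨hyA, hyt⟩
      show y ∈ M
      rw [AffineSubspace.mem_mk', hDker, Submodule.mem_inf]
      constructor
      · simpa [vsub_eq_sub] using AffineSubspace.vsub_mem_direction hyA hm₀A
      · rw [hker_mem]
        simp only [vsub_eq_sub, inner_sub_right]
        simp only [Set.mem_setOf_eq] at hyt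
        rw [hyt, hm₀t]; ring
  -- dimension drop
  have hdimM : finrank ℝ M.direction ≤ k := by
    rw [hMdir]
    have hlt : Dker < A.direction := by
      refine lt_of_le_of_ne inf_le_left ?_
      intro h
      have : w₀ ∈ Dker := h ▸ hw₀
      have h0 : ⟪w₀, w₀⟫ = 0 := (hker_mem w₀).1 this.2
      rw [hw₀w₀] at h0; norm_num at h0
    have := Submodule.finrank_lt_finrank_of_lt hlt
    omega
  -- M is closed, hence measurable
  have hMclosed : IsClosed (M : Set V) := M.closed_of_finiteDimensional
  have hMmeas : MeasurableSet (M : Set V) := hMclosed.measurableSet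
  -- the restricted measure is carried by M
  set ν' : Measure (EuclideanSpace ℝ (Fin d)) := ν.restrict {y : V | ⟪w₀, y⟫ = t} with hν'
  have hν'fin : IsFiniteMeasure ν' := inferInstance
  have hν'null : ν' ((M : Set V)ᶜ) = 0 := by
    rw [hν', Measure.restrict_apply hMmeas.compl]
    have : (M : Set V)ᶜ ∩ {y : V | ⟪w₀, y⟫ = t} ⊆ (A : Set V)ᶜ := by
      intro y hy
      rw [hMcoe] at hy
      intro hyA
      exact hy.1 ⟨hyA, hy.2⟩
    exact measure_mono_null this hnull
  obtain ⟨JIH, hJIHfin, hJIHcond, hJIHcov⟩ := IH ν' hν'fin M hdimM hν'null ε hε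
  refine ⟨JIH ∪ {((∅ : Set V), (∅ : Set V)), ((M : Set V), (M : Set V))}, hJIHfin.union (by simp),
    ?_, ?_⟩
  · rintro p (hp | hp)
    · obtain ⟨h1, h2, h3⟩ := hJIHcond p hp
      refine ⟨h1, h2, ?_⟩
      rw [hν', Measure.restrict_apply (h2.diff h1)] at h3
      exact h3
    · rcases hp with hp | hp <;> rw [hp] <;>
        simp [hMmeas]
  · intro w hwD s
    set G : Set V := {y : V | ⟪w, y⟫ ≤ s} with hG
    -- orthogonal projection of w to the direction of M
    set w' : V := (Submodule.orthogonalProjection Dker w : V) with hw'def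
    have hw'mem : w' ∈ Dker := SetLike.coe_mem _
    -- the trace identity
    have htrace : ∀ y ∈ (M : Set V), ⟪w, y⟫ = ⟪w', y⟫ + (⟪w, m₀⟫ - ⟪w', m₀⟫) := by
      intro y hy
      have hvd : y - m₀ ∈ Dker := by
        have hyM' : y ∈ M := hy
        have := AffineSubspace.vsub_mem_direction hyM' hm₀M
        rw [hMdir] at this
        simpa [vsub_eq_sub] using this
      have h0 : ⟪w - w', y - m₀⟫ = 0 :=
        Dker.starProjection_inner_eq_zero w (y - m₀) hvd
      rw [inner_sub_left, inner_sub_right, inner_sub_right] at h0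
      linarith
    by_cases hw'0 : w' = 0
    · -- trace is M or ∅
      have hconst : ∀ y ∈ (M : Set V), ⟪w, y⟫ = ⟪w, m₀⟫ := by
        intro y hy
        have := htrace y hy
        rw [hw'0] at this
        simpa using this
      by_cases hle : ⟪w, m₀⟫ ≤ s
      · refine ⟨((M : Set V), (M : Set V)), by simp, ?_, ?_⟩
        · intro y hy
          refine ⟨⟨?_, ?_⟩, ?_⟩
          · show ⟪w, y⟫ ≤ s
            rw [hconst y hy]; exact hle
          · exact ((hMcoe ▸ hy : y ∈ (A : Set V) ∩ _)).1
          · exact ((hMcoe ▸ hy : y ∈ (A : Set V) ∩ _)).2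
        · rintro y ⟨⟨_, hyA⟩, hyt⟩
          show y ∈ (M : Set V)
          rw [hMcoe]; exact ⟨hyA, hyt⟩
      · refine ⟨((∅ : Set V), (∅ : Set V)), by simp, by simp, ?_⟩
        rintro y ⟨⟨hyG, hyA⟩, hyt⟩
        exfalso
        have hyM : y ∈ (M : Set V) := by rw [hMcoe]; exact ⟨hyA, hyt⟩
        exact hle (by rw [← hconst y hyM]; exact hyG)
    · -- normalize and use the induction hypothesis
      set u : V := ‖w'‖⁻¹ • w' with hu
      have hun : ‖u‖ = 1 := norm_smul_inv_norm hw'0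
      have huD : u ∈ M.direction := by
        rw [hMdir]; exact Submodule.smul_mem _ _ hw'mem
      have hw'pos : (0:ℝ) < ‖w'‖ := norm_pos_iff.2 hw'0
      set s₂ : ℝ := (s - ⟪w, m₀⟫ + ⟪w', m₀⟫) / ‖w'‖ with hs₂
      have hiff : ∀ y ∈ (M : Set V), (⟪w, y⟫ ≤ s ↔ ⟪u, y⟫ ≤ s₂) := by
        intro y hy
        have h1 := htrace y hy
        have h2 : ⟪u, y⟫ = ‖w'‖⁻¹ * ⟪w', y⟫ := real_inner_smul_left _ _ _
        rw [hs₂, h2]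
        rw [div_eq_inv_mul]
        constructor
        · intro h
          apply mul_le_mul_of_nonneg_left _ (inv_nonneg.2 hw'pos.le)
          linarith
        · intro h
          have := (mul_le_mul_iff_right₀ (inv_pos.2 hw'pos)).1 h
          linarith
      obtain ⟨p, hpJ, hp1, hp2⟩ := hJIHcov u huD hun s₂
      refine ⟨p, Or.inl hpJ, ?_, ?_⟩
      · intro y hy
        obtain ⟨hyu, hyM⟩ := hp1 hy
        have hyAt : y ∈ (A : Set V) ∩ {y : V | ⟪w₀, y⟫ = t} := hMcoe ▸ hyM
        exact ⟨⟨(hiff y hyM).2 hyu, hyAt.1⟩, hyAt.2⟩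
      · rintro y ⟨⟨hyG, hyA⟩, hyt⟩
        have hyM : y ∈ (M : Set V) := by rw [hMcoe]; exact ⟨hyA, hyt⟩
        exact hp2 ⟨(hiff y hyM).1 hyG, hyM⟩

end Slice

section Key

variable (ν : Measure (EuclideanSpace ℝ (Fin d))) [IsFiniteMeasure ν]

lemma key_brk {k : ℕ}
    (IH : ∀ (ν' : Measure (EuclideanSpace ℝ (Fin d))), IsFiniteMeasure ν' →
      ∀ (A' : AffineSubspace ℝ (EuclideanSpace ℝ (Fin d))), finrank ℝ A'.direction ≤ k →
        ν' ((A' : Set (EuclideanSpace ℝ (Fin d)))ᶜ) = 0 → ∀ ε : ℝ≥0∞, 0 < ε → ∃ J, Brk ν' A' ε J)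
    (A : AffineSubspace ℝ (EuclideanSpace ℝ (Fin d)))
    (hdim : finrank ℝ A.direction ≤ k + 1)
    (hnull : ν ((A : Set V)ᶜ) = 0)
    {a₀ : V} (ha₀ : a₀ ∈ A)
    {ε : ℝ≥0∞} (hε : 0 < ε)
    {R : ℝ} (hR : 0 < R) (hfar : ν ((Metric.closedBall (0 : V) R)ᶜ) ≤ ε)
    {w₀ : V} (hw₀ : w₀ ∈ A.direction) (hw₀n : ‖w₀‖ = 1) :
    ∃ δ : ℝ, 0 < δ ∧ ∃ J₀ : Set (Set V × Set V), J₀.Finite ∧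
      (∀ p ∈ J₀, MeasurableSet p.1 ∧ MeasurableSet p.2 ∧ ν (p.2 \ p.1) ≤ ε + ε + ε) ∧
      ∀ w : V, w ∈ A.direction → ‖w‖ = 1 → ‖w - w₀‖ < δ → ∀ s : ℝ,
        ∃ p ∈ J₀, p.1 ⊆ {y : V | ⟪w, y⟫ ≤ s} ∩ (A : Set V) ∧
          {y : V | ⟪w, y⟫ ≤ s} ∩ (A : Set V) ⊆ p.2 := by
  classical
  have hπcont : Continuous fun y : V => ⟪w₀, y⟫ := continuous_const.inner continuous_id
  have hπmeas : Measurable fun y : V => ⟪w₀, y⟫ := hπcont.measurable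
  have hAmeas : MeasurableSet (A : Set V) := A.closed_of_finiteDimensional.measurableSet
  choose c hc hcν using fun t : ℝ => punct_interval ν w₀ t hε
  obtain ⟨T₀, hT₀Icc, hT₀cov⟩ := (isCompact_Icc (a := -(R+1)) (b := R+1)).elim_nhds_subcover
    (fun t => Set.Ioo (t - c t / 2) (t + c t / 2))
    (fun t _ => Ioo_mem_nhds (by linarith [hc t]) (by linarith [hc t]))
  set T : Finset ℝ := insert (0:ℝ) T₀ with hT
  have hTne : T.Nonempty := ⟨0, Finset.mem_insert_self _ _⟩
  set cmin : ℝ := T.inf' hTne c with hcmin_def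
  have hcmin : 0 < cmin := (Finset.lt_inf'_iff hTne).2 fun t _ => hc t
  set δ : ℝ := cmin / (2 * (R + 1)) with hδdef
  have hδ : 0 < δ := div_pos hcmin (by linarith)
  have hδle : ∀ t ∈ T, δ * R < c t / 2 := by
    intro t ht
    have h1 : cmin ≤ c t := Finset.inf'_le c ht
    rw [hδdef, div_mul_eq_mul_div, div_lt_iff₀ (by linarith)]
    nlinarith [hc t, hR]
  -- slice bracket families
  choose JM hJMfin hJMcond hJMcov using
    fun t : ℝ => slice_brk ν IH A hdim hnull ha₀ hw₀ hw₀n t hε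
  set ball : Set V := Metric.closedBall (0 : V) R with hball
  have hballmeas : MeasurableSet ball := measurableSet_closedBall
  set LL : ℝ → Set V × Set V → Set V := fun t p =>
    ({y : V | ⟪w₀, y⟫ ≤ t - c t} ∩ ball ∩ (A : Set V)) ∪ p.1 with hLL
  set UU : ℝ → Set V × Set V → Set V := fun t p =>
    {y : V | ⟪w₀, y⟫ < t} ∪ (p.2 ∩ {y : V | ⟪w₀, y⟫ = t}) ∪
      {y : V | t < ⟪w₀, y⟫ ∧ ⟪w₀, y⟫ < t + c t} ∪ ballᶜ with hUU
  set pairSet : Set (Set V × Set V) := {((∅ : Set V), ballᶜ), (ball ∩ (A : Set V), Set.univ)}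
    with hpairSet
  refine ⟨δ, hδ, (⋃ t ∈ (T : Set ℝ), (fun p => (LL t p, UU t p)) '' JM t) ∪ pairSet,
    ?_, ?_, ?_⟩
  · exact (Set.Finite.biUnion (T : Set ℝ).toFinite fun t _ => (hJMfin t).image _).union
      (by rw [hpairSet]; exact (Set.finite_singleton _).insert _)
  · rintro p (hp | hp)
    · simp only [Set.mem_iUnion] at hp
      obtain ⟨t, htT, q, hqJM, rfl⟩ := hp
      obtain ⟨hq1m, hq2m, hqν⟩ := hJMcond t q hqJM
      refine ⟨?_, ?_, ?_⟩
      · exact (((measurableSet_le hπmeas measurable_const).inter hballmeas).inter hAmeas).union hq1m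
      · exact (((measurableSet_lt hπmeas measurable_const).union
          (hq2m.inter (measurableSet_eq_fun hπmeas measurable_const))).union
          ((measurableSet_lt measurable_const hπmeas).inter
            (measurableSet_lt hπmeas measurable_const))).union hballmeas.compl
      · -- slack estimate
        have hincl : UU t q \ LL t q ⊆
            ({y : V | ⟪w₀, y⟫ ≠ t ∧ |⟪w₀, y⟫ - t| < c t} ∪
              (((q.2 \ q.1) ∩ {y : V | ⟪w₀, y⟫ = t}) ∪
                (ballᶜ ∪ (A : Set V)ᶜ))) := by
          rintro y ⟨hyU, hyL⟩
          by_cases hyB : y ∈ ball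
          · by_cases hyA : y ∈ (A : Set V)
            · simp only [hUU, Set.mem_union] at hyU
              rcases hyU with ((hyU | hyU) | hyU) | hyU
              · -- below t
                have hyU' : ⟪w₀, y⟫ < t := hyU
                have hπy : t - c t < ⟪w₀, y⟫ := by
                  by_contra h
                  push_neg at h
                  exact hyL (Or.inl ⟨⟨h, hyB⟩, hyA⟩)
                left
                refine ⟨ne_of_lt hyU', ?_⟩
                rw [abs_lt]
                exact ⟨by linarith, by linarith [hc t]⟩
              · -- on the slice
                rcases Classical.em (y ∈ q.1) with hyq | hyq
                · exact absurd (Or.inr hyq) hyL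
                · exact Or.inr (Or.inl ⟨⟨hyU.1, hyq⟩, hyU.2⟩)
              · -- above t
                have h1' : t < ⟪w₀, y⟫ := hyU.1
                have h2' : ⟪w₀, y⟫ < t + c t := hyU.2
                left
                refine ⟨ne_of_gt h1', ?_⟩
                rw [abs_lt]
                exact ⟨by linarith [hc t], by linarith⟩
              · exact absurd hyB hyU
            · exact Or.inr (Or.inr (Or.inr hyA))
          · exact Or.inr (Or.inr (Or.inl hyB))
        calc ν (UU t q \ LL t q) ≤
            ν ({y : V | ⟪w₀, y⟫ ≠ t ∧ |⟪w₀, y⟫ - t| < c t}) +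
              (ν (((q.2 \ q.1) ∩ {y : V | ⟪w₀, y⟫ = t})) + (ν ballᶜ + ν ((A : Set V)ᶜ))) := by
              refine le_trans (measure_mono hincl) ?_
              refine le_trans (measure_union_le _ _) ?_
              refine add_le_add le_rfl ?_
              refine le_trans (measure_union_le _ _) ?_
              exact add_le_add le_rfl (measure_union_le _ _)
          _ ≤ ε + (ε + (ε + 0)) := by
              exact add_le_add (hcν t) (add_le_add (hqν) (add_le_add hfar (le_of_eq hnull)))
          _ ≤ ε + ε + ε := by rw [add_zero, add_assoc]
    · rw [hpairSet] at hp
      rcases hp with hp | hp <;> rw [hp]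
      · refine ⟨MeasurableSet.empty, hballmeas.compl, ?_⟩
        rw [Set.diff_empty]
        exact le_trans hfar (le_trans (self_le_add_left ε (ε + ε)) le_rfl)
      · refine ⟨hballmeas.inter hAmeas, MeasurableSet.univ, ?_⟩
        have : Set.univ \ (ball ∩ (A : Set V)) ⊆ ballᶜ ∪ (A : Set V)ᶜ := by
          rintro y ⟨-, hy⟩
          by_cases hyB : y ∈ ball
          · right; intro hyA; exact hy ⟨hyB, hyA⟩
          · left; exact hyB
        refine le_trans (measure_mono this) (le_trans (measure_union_le _ _) ?_)
        rw [hnull, add_zero]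
        exact le_trans hfar (self_le_add_left ε (ε + ε))
  · -- coverage
    intro w hwD hwn hwδ s
    have hbound : ∀ y : V, y ∈ ball → |⟪w - w₀, y⟫| ≤ δ * R := by
      intro y hy
      refine le_trans (abs_real_inner_le_norm _ _) ?_
      exact mul_le_mul hwδ.le (mem_closedBall_zero_iff.1 hy) (norm_nonneg _) hδ.le
    have hwy : ∀ y : V, y ∈ ball → |⟪w, y⟫| ≤ R := by
      intro y hy
      refine le_trans (abs_real_inner_le_norm _ _) ?_
      rw [hwn, one_mul]
      exact mem_closedBall_zero_iff.1 hy
    rcases le_or_gt s (R + 1) with hs1 | hs1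
    · rcases le_or_gt (-(R + 1)) s with hs2 | hs2
      · -- main case : s ∈ Icc
        have hscov : s ∈ ⋃ t ∈ T₀, Set.Ioo (t - c t / 2) (t + c t / 2) := hT₀cov ⟨hs2, hs1⟩
        simp only [Set.mem_iUnion, exists_prop] at hscov
        obtain ⟨t, htT₀, hsIoo⟩ := hscov
        have htT : t ∈ T := Finset.mem_insert_of_mem htT₀
        have hδt := hδle t htT
        obtain ⟨q, hqJM, hq1, hq2⟩ := hJMcov t w hwD s
        refine ⟨(LL t q, UU t q), Or.inl (Set.mem_biUnion (Finset.mem_coe.2 htT)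
          (Set.mem_image_of_mem _ hqJM)), ?_, ?_⟩
        · rintro y (⟨⟨hyπ, hyB⟩, hyA⟩ | hyq)
          · refine ⟨?_, hyA⟩
            have h1 : ⟪w, y⟫ = ⟪w₀, y⟫ + ⟪w - w₀, y⟫ := by rw [inner_sub_left]; ring
            have h2 := abs_le.1 (hbound y hyB)
            have h3 : ⟪w₀, y⟫ ≤ t - c t := hyπ
            show ⟪w, y⟫ ≤ s
            have h4 := hsIoo.1
            linarith [h2.2]
          · obtain ⟨⟨hyG, hyA⟩, -⟩ := hq1 hyq
            exact ⟨hyG, hyA⟩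
        · rintro y ⟨hyG, hyA⟩
          by_cases hyB : y ∈ ball
          · have h1 : ⟪w₀, y⟫ = ⟪w, y⟫ - ⟪w - w₀, y⟫ := by rw [inner_sub_left]; ring
            have h2 := abs_le.1 (hbound y hyB)
            have h5 : ⟪w₀, y⟫ < t + c t := by
              have := hsIoo.2
              have hyG' : ⟪w, y⟫ ≤ s := hyG
              linarith [h2.1]
            simp only [hUU, Set.mem_union]
            rcases lt_trichotomy ⟪w₀, y⟫ t with h | h | h
            · exact Or.inl (Or.inl (Or.inl h))
            · exact Or.inl (Or.inl (Or.inr ⟨hq2 ⟨⟨hyG, hyA⟩, h⟩, h⟩))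
            · exact Or.inl (Or.inr ⟨h, h5⟩)
          · simp only [hUU, Set.mem_union]
            exact Or.inr hyB
      · -- s < -(R+1)
        refine ⟨((∅ : Set V), ballᶜ), Or.inr (by simp [hpairSet]), by simp, ?_⟩
        rintro y ⟨hyG, -⟩
        intro hyB
        have := (abs_le.1 (hwy y hyB)).1
        have hyG' : ⟪w, y⟫ ≤ s := hyG
        linarith
    · -- R + 1 < s
      refine ⟨(ball ∩ (A : Set V), Set.univ), Or.inr (by simp [hpairSet]), ?_,
        fun y _ => Set.mem_univ y⟩
      rintro y ⟨hyB, hyA⟩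
      refine ⟨?_, hyA⟩
      have := (abs_le.1 (hwy y hyB)).2
      show ⟪w, y⟫ ≤ s
      linarith

end Key

theorem exists_brk : ∀ (k : ℕ) (ν : Measure (EuclideanSpace ℝ (Fin d))),
    IsFiniteMeasure ν → ∀ (A : AffineSubspace ℝ (EuclideanSpace ℝ (Fin d))),
    finrank ℝ A.direction ≤ k → ν ((A : Set (EuclideanSpace ℝ (Fin d)))ᶜ) = 0 →
    ∀ ε : ℝ≥0∞, 0 < ε → ∃ J, Brk ν A ε J := by
  intro k
  induction k with
  | zero =>
    intro ν hfin A hdim hnull ε hε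
    refine ⟨∅, Set.finite_empty, by simp, ?_⟩
    intro w hwD hwn s
    exfalso
    have hbot : A.direction = ⊥ := Submodule.finrank_eq_zero.1 (Nat.le_zero.1 hdim)
    rw [hbot, Submodule.mem_bot] at hwD
    rw [hwD, norm_zero] at hwn
    norm_num at hwn
  | succ k IH =>
    intro ν hfin A hdim hnull ε hε
    haveI := hfin
    rcases (A : Set (EuclideanSpace ℝ (Fin d))).eq_empty_or_nonempty with hA | ⟨a₀, ha₀⟩
    · refine ⟨∅, Set.finite_empty, by simp, ?_⟩
      intro w hwD hwn s
      exfalso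
      have hbot : A = ⊥ := (AffineSubspace.coe_eq_bot_iff A).1 hA
      rw [hbot, AffineSubspace.direction_bot, Submodule.mem_bot] at hwD
      rw [hwD, norm_zero] at hwn
      norm_num at hwn
    · set ε' : ℝ≥0∞ := ε / 3 with hε'def
      have hε' : 0 < ε' := ENNReal.div_pos hε.ne' (by norm_num)
      have h3ε : ε' + ε' + ε' ≤ ε := by
        rcases eq_or_ne ε ⊤ with rfl | hne
        · exact le_top
        · have h1 : ε' + ε' + ε' = ε / 3 * 3 := by rw [hε'def]; ring
          rw [h1, ENNReal.div_mul_cancel (by norm_num) (by norm_num)]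
      obtain ⟨R, hR, hfar⟩ := far_ball ν hε'
      set S : Set (EuclideanSpace ℝ (Fin d)) :=
        (A.direction : Set (EuclideanSpace ℝ (Fin d))) ∩ Metric.sphere 0 1 with hS
      have hScompact : IsCompact S :=
        (isCompact_sphere (0 : EuclideanSpace ℝ (Fin d)) 1).inter_left
          A.direction.closed_of_finiteDimensional
      have hkey : ∀ w₀ : EuclideanSpace ℝ (Fin d),
          ∃ p : ℝ × Set (Set (EuclideanSpace ℝ (Fin d)) × Set (EuclideanSpace ℝ (Fin d))),
            w₀ ∈ S → (0 < p.1 ∧ p.2.Finite ∧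
              (∀ q ∈ p.2, MeasurableSet q.1 ∧ MeasurableSet q.2 ∧
                ν (q.2 \ q.1) ≤ ε' + ε' + ε') ∧
              ∀ w : EuclideanSpace ℝ (Fin d), w ∈ A.direction → ‖w‖ = 1 →
                ‖w - w₀‖ < p.1 → ∀ s : ℝ,
                ∃ q ∈ p.2, q.1 ⊆ {y | ⟪w, y⟫ ≤ s} ∩ (A : Set (EuclideanSpace ℝ (Fin d))) ∧
                  {y | ⟪w, y⟫ ≤ s} ∩ (A : Set (EuclideanSpace ℝ (Fin d))) ⊆ q.2) := by
        intro w₀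
        by_cases hw₀S : w₀ ∈ S
        · have hw₀D : w₀ ∈ A.direction := hw₀S.1
          have hw₀n : ‖w₀‖ = 1 := by
            have := hw₀S.2
            rwa [mem_sphere_zero_iff_norm] at this
          obtain ⟨δ, hδ, J₀, hJfin, hJcond, hJcov⟩ :=
            key_brk ν (fun ν' h A' h1 h2 => IH ν' h A' h1 h2) A hdim hnull ha₀ hε' hR hfar
              hw₀D hw₀n
          exact ⟨(δ, J₀), fun _ => ⟨hδ, hJfin, hJcond, hJcov⟩⟩
        · exact ⟨(1, ∅), fun h => absurd h hw₀S⟩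
      choose P hP using hkey
      obtain ⟨TS, hTSmem, hTScov⟩ := hScompact.elim_nhds_subcover
        (fun w₀ => Metric.ball w₀ (P w₀).1)
        (fun x hx => Metric.ball_mem_nhds _ (hP x hx).1)
      refine ⟨⋃ w₀ ∈ (TS : Set (EuclideanSpace ℝ (Fin d))), (P w₀).2, ?_, ?_, ?_⟩
      · exact Set.Finite.biUnion (TS : Set (EuclideanSpace ℝ (Fin d))).toFinite
          fun w₀ hw₀ => (hP w₀ (hTSmem w₀ (Finset.mem_coe.1 hw₀))).2.1
      · intro p hp
        simp only [Set.mem_iUnion, exists_prop] at hp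
        obtain ⟨w₀, hw₀TS, hp⟩ := hp
        obtain ⟨h1, h2, h3⟩ := (hP w₀ (hTSmem w₀ (Finset.mem_coe.1 hw₀TS))).2.2.1 p hp
        exact ⟨h1, h2, le_trans h3 h3ε⟩
      · intro w hwD hwn s
        have hwS : w ∈ S := ⟨hwD, by rwa [mem_sphere_zero_iff_norm]⟩
        have := hTScov hwS
        simp only [Set.mem_iUnion, exists_prop] at this
        obtain ⟨w₀, hw₀TS, hwball⟩ := this
        have hdist : ‖w - w₀‖ < (P w₀).1 := by
          rw [← dist_eq_norm]
          exact Metric.mem_ball.1 hwball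
        obtain ⟨q, hqmem, hq1, hq2⟩ :=
          (hP w₀ (hTSmem w₀ hw₀TS)).2.2.2 w hwD hwn hdist s
        exact ⟨q, Set.mem_biUnion (Finset.mem_coe.2 hw₀TS) hqmem, hq1, hq2⟩

lemma empirical_apply (n : ℕ) (g : ℕ → EuclideanSpace ℝ (Fin d))
    {B : Set (EuclideanSpace ℝ (Fin d))} (hB : MeasurableSet B) :
    ((empiricalMeasure n (fun i : Fin n => g i)) B).toReal
      = (∑ i ∈ Finset.range n, B.indicator (fun _ => (1:ℝ)) (g i)) / n := by
  set pts : Fin n → EuclideanSpace ℝ (Fin d) := fun i : Fin n => g i with hpts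
  rcases Nat.eq_zero_or_pos n with hn | hn
  · subst hn; simp [empiricalMeasure]
  have h1 : (∑ i : Fin n, Measure.dirac (pts i)) B
      = ∑ i : Fin n, B.indicator (fun _ => (1:ℝ≥0∞)) (pts i) := by
    rw [Measure.finset_sum_apply]
    congr 1; ext i
    rw [Measure.dirac_apply' _ hB]
    rfl
  rw [empiricalMeasure, Measure.smul_apply, smul_eq_mul, h1]
  rw [ENNReal.toReal_mul, ENNReal.toReal_inv, ENNReal.toReal_natCast]
  rw [ENNReal.toReal_sum (by
    intro i _
    by_cases h : pts i ∈ B <;> simp [Set.indicator, h])]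
  have h2 : ∀ i : Fin n, (B.indicator (fun _ => (1:ℝ≥0∞)) (pts i)).toReal
      = B.indicator (fun _ => (1:ℝ)) (pts i) := by
    intro i; by_cases h : pts i ∈ B <;> simp [Set.indicator, h]
  simp_rw [h2]
  rw [Finset.sum_range (fun k => B.indicator (fun _ => (1:ℝ)) (g k))]
  simp only [hpts]
  ring

theorem tendsto_empirical_set {Ω : Type*} [MeasurableSpace Ω]
    (P : Measure Ω) [IsProbabilityMeasure P]
    (F : Measure (EuclideanSpace ℝ (Fin d))) [IsProbabilityMeasure F]
    (X : ℕ → Ω → EuclideanSpace ℝ (Fin d))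
    (hmeas : ∀ i, Measurable (X i))
    (hindep : iIndepFun X P)
    (hid : ∀ i, Measure.map (X i) P = F)
    {B : Set (EuclideanSpace ℝ (Fin d))} (hB : MeasurableSet B) :
    ∀ᵐ ω ∂P, Tendsto (fun n => ((empiricalMeasure n (fun i => X i ω)) B).toReal)
      atTop (𝓝 ((F B).toReal)) := by
  set f : EuclideanSpace ℝ (Fin d) → ℝ := B.indicator (fun _ => (1:ℝ)) with hf
  have hfmeas : Measurable f := measurable_const.indicator hB
  set Y : ℕ → Ω → ℝ := fun i ω => f (X i ω) with hY
  have hYmeas : ∀ i, Measurable (Y i) := fun i => hfmeas.comp (hmeas i)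
  have hint : Integrable (Y 0) P := by
    apply Integrable.mono' (integrable_const (1:ℝ)) (hYmeas 0).aestronglyMeasurable
    filter_upwards with ω
    simp only [hY, hf]
    by_cases h : X 0 ω ∈ B <;> simp [Set.indicator, h]
  have hpind : Pairwise (Function.onFun (IndepFun · · P) Y) := by
    intro i j hij
    exact (hindep.indepFun hij).comp hfmeas hfmeas
  have hident : ∀ i, IdentDistrib (Y i) (Y 0) P P := by
    intro i
    have h0 : IdentDistrib (X i) (X 0) P P :=
      ⟨(hmeas i).aemeasurable, (hmeas 0).aemeasurable, by rw [hid i, hid 0]⟩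
    exact h0.comp hfmeas
  have hE : P[Y 0] = (F B).toReal := by
    have h3 : ∫ ω, f (X 0 ω) ∂P = ∫ y, f y ∂(Measure.map (X 0) P) :=
      (integral_map (hmeas 0).aemeasurable hfmeas.aestronglyMeasurable).symm
    show ∫ ω, f (X 0 ω) ∂P = _
    rw [h3, hid 0, hf, integral_indicator_const _ hB]
    simp [Measure.real]
  have hsl := strong_law_ae_real Y hint hpind hident
  rw [hE] at hsl
  filter_upwards [hsl] with ω hω
  have heq : (fun n => ((empiricalMeasure n (fun i => X i ω)) B).toReal)
      = fun n => (∑ i ∈ Finset.range n, Y i ω) / n := by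
    ext n; exact empirical_apply n (fun k => X k ω) hB
  rw [heq]
  exact hω


section Assembly

lemma abs_ciInf_sub_ciInf_le {ι : Type*} [Nonempty ι] (f g : ι → ℝ)
    (hf0 : ∀ i, 0 ≤ f i) (hg0 : ∀ i, 0 ≤ g i) {ε : ℝ}
    (h : ∀ i, |f i - g i| ≤ ε) : |(⨅ i, f i) - ⨅ i, g i| ≤ ε := by
  have hbf : BddBelow (Set.range f) := ⟨0, by rintro r ⟨v, rfl⟩; exact hf0 v⟩
  have hbg : BddBelow (Set.range g) := ⟨0, by rintro r ⟨v, rfl⟩; exact hg0 v⟩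
  have h1 : (⨅ i, f i) ≤ (⨅ i, g i) + ε := by
    have h2 : ∀ i, (⨅ i, f i) - ε ≤ g i := by
      intro i
      have ha : (⨅ i, f i) ≤ f i := ciInf_le hbf i
      have hb := (abs_le.1 (h i)).2
      linarith
    linarith [le_ciInf h2]
  have h2 : (⨅ i, g i) ≤ (⨅ i, f i) + ε := by
    have h2 : ∀ i, (⨅ i, g i) - ε ≤ f i := by
      intro i
      have ha : (⨅ i, g i) ≤ g i := ciInf_le hbg i
      have hb := (abs_le.1 (h i)).1
      linarith
    linarith [le_ciInf h2]
  rw [abs_le]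
  constructor <;> linarith

lemma emp_le_one (n : ℕ) (pts : Fin n → EuclideanSpace ℝ (Fin d)) (s : Set (EuclideanSpace ℝ (Fin d))) :
    (empiricalMeasure n pts) s ≤ 1 := by
  refine le_trans (measure_mono (Set.subset_univ s)) ?_
  rw [empiricalMeasure, Measure.smul_apply, smul_eq_mul, Measure.finset_sum_apply]
  simp only [measure_univ]
  rw [Finset.sum_const, Finset.card_univ, Fintype.card_fin, nsmul_eq_mul, mul_one]
  rcases Nat.eq_zero_or_pos n with hn | hn
  · subst hn; simp
  · rw [ENNReal.inv_mul_cancel (by exact_mod_cast hn.ne') (by simp)]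

lemma depth_nonneg (μ : Measure (EuclideanSpace ℝ (Fin d))) (x : EuclideanSpace ℝ (Fin d)) :
    0 ≤ halfSpaceDepth μ x :=
  Real.iInf_nonneg fun _ => ENNReal.toReal_nonneg

lemma depth_le_one (μ : Measure (EuclideanSpace ℝ (Fin d))) (hμ : ∀ s, μ s ≤ 1)
    (x : EuclideanSpace ℝ (Fin d)) : halfSpaceDepth μ x ≤ 1 := by
  rcases isEmpty_or_nonempty (Metric.sphere (0 : EuclideanSpace ℝ (Fin d)) 1) with h | h
  · rw [halfSpaceDepth, Real.iInf_of_isEmpty]; norm_num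
  · obtain ⟨u⟩ := h
    refine le_trans (ciInf_le ⟨0, ?_⟩ u) ?_
    · rintro r ⟨v, rfl⟩; exact ENNReal.toReal_nonneg
    · exact ENNReal.toReal_le_of_le_ofReal zero_le_one (by simpa using hμ _)

lemma depth_close (μ ρ : Measure (EuclideanSpace ℝ (Fin d))) {ε : ℝ} (hε : 0 ≤ ε)
    (h : ∀ u : EuclideanSpace ℝ (Fin d), ‖u‖ = 1 → ∀ s : ℝ,
      |(μ {y | ⟪u, y⟫ ≤ s}).toReal - (ρ {y | ⟪u, y⟫ ≤ s}).toReal| ≤ ε)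
    (x : EuclideanSpace ℝ (Fin d)) :
    |halfSpaceDepth μ x - halfSpaceDepth ρ x| ≤ ε := by
  rcases isEmpty_or_nonempty (Metric.sphere (0 : EuclideanSpace ℝ (Fin d)) 1) with hemp | hne
  · rw [halfSpaceDepth, halfSpaceDepth, Real.iInf_of_isEmpty, Real.iInf_of_isEmpty]
    simpa using hε
  · rw [halfSpaceDepth, halfSpaceDepth]
    refine abs_ciInf_sub_ciInf_le _ _ (fun _ => ENNReal.toReal_nonneg)
      (fun _ => ENNReal.toReal_nonneg) ?_
    intro u
    exact h _ (mem_sphere_zero_iff_norm.1 u.2) _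

/-- Top-level bracketing for half-spaces. -/
lemma exists_brk_top (ν : Measure (EuclideanSpace ℝ (Fin d))) [IsFiniteMeasure ν]
    {ε : ℝ≥0∞} (hε : 0 < ε) :
    ∃ J : Set (Set (EuclideanSpace ℝ (Fin d)) × Set (EuclideanSpace ℝ (Fin d))),
      J.Finite ∧ (∀ p ∈ J, MeasurableSet p.1 ∧ MeasurableSet p.2 ∧ ν (p.2 \ p.1) ≤ ε) ∧
      ∀ u : EuclideanSpace ℝ (Fin d), ‖u‖ = 1 → ∀ s : ℝ,
        ∃ p ∈ J, p.1 ⊆ {y | ⟪u, y⟫ ≤ s} ∧ {y | ⟪u, y⟫ ≤ s} ⊆ p.2 := by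
  obtain ⟨J, hfin, hcond, hcov⟩ := exists_brk
    (finrank ℝ ((⊤ : AffineSubspace ℝ (EuclideanSpace ℝ (Fin d))).direction)) ν inferInstance
    ⊤ le_rfl (by rw [AffineSubspace.top_coe]; simp) ε hε
  refine ⟨J, hfin, hcond, ?_⟩
  intro u hun s
  obtain ⟨p, hpJ, hp1, hp2⟩ := hcov u (by rw [AffineSubspace.direction_top]; trivial) hun s
  rw [AffineSubspace.top_coe, Set.inter_univ] at hp1 hp2
  exact ⟨p, hpJ, hp1, hp2⟩

/-- Uniform convergence over half-spaces, given convergence on a sequence of bracketings. -/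
lemma unif_conv (F : Measure (EuclideanSpace ℝ (Fin d))) [IsFiniteMeasure F]
    (μs : ℕ → Measure (EuclideanSpace ℝ (Fin d))) (hμs1 : ∀ n s, μs n s ≤ 1)
    (hbrk : ∀ ε : ℝ, 0 < ε → ∃ J : Set (Set (EuclideanSpace ℝ (Fin d)) × Set (EuclideanSpace ℝ (Fin d))),
      J.Finite ∧
      (∀ p ∈ J, (F (p.2 \ p.1)).toReal ≤ ε) ∧
      (∀ p ∈ J, Tendsto (fun n => (μs n p.1).toReal) atTop (𝓝 ((F p.1).toReal)) ∧
                Tendsto (fun n => (μs n p.2).toReal) atTop (𝓝 ((F p.2).toReal))) ∧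
      ∀ u : EuclideanSpace ℝ (Fin d), ‖u‖ = 1 → ∀ s : ℝ,
        ∃ p ∈ J, p.1 ⊆ {y | ⟪u, y⟫ ≤ s} ∧ {y | ⟪u, y⟫ ≤ s} ⊆ p.2) :
    ∀ ε : ℝ, 0 < ε → ∀ᶠ n in atTop, ∀ u : EuclideanSpace ℝ (Fin d), ‖u‖ = 1 → ∀ s : ℝ,
      |(μs n {y | ⟪u, y⟫ ≤ s}).toReal - (F {y | ⟪u, y⟫ ≤ s}).toReal| ≤ ε := by
  intro ε hε
  obtain ⟨J, hfin, hslack, htend, hcov⟩ := hbrk (ε / 3) (by linarith)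
  have hev : ∀ᶠ n in atTop, ∀ p ∈ J,
      |(μs n p.1).toReal - (F p.1).toReal| ≤ ε / 3 ∧
      |(μs n p.2).toReal - (F p.2).toReal| ≤ ε / 3 := by
    rw [eventually_all_finite hfin]
    intro p hp
    obtain ⟨h1, h2⟩ := htend p hp
    have e1 := Metric.tendsto_atTop.1 h1 (ε / 3) (by linarith)
    have e2 := Metric.tendsto_atTop.1 h2 (ε / 3) (by linarith)
    obtain ⟨N1, hN1⟩ := e1
    obtain ⟨N2, hN2⟩ := e2
    filter_upwards [eventually_ge_atTop N1, eventually_ge_atTop N2] with n hn1 hn2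
    simp only [Real.dist_eq] at hN1 hN2
    exact ⟨(hN1 n hn1).le, (hN2 n hn2).le⟩
  filter_upwards [hev] with n hn u hun s
  obtain ⟨p, hpJ, hp1, hp2⟩ := hcov u hun s
  obtain ⟨he1, he2⟩ := hn p hpJ
  set H : Set (EuclideanSpace ℝ (Fin d)) := {y | ⟪u, y⟫ ≤ s} with hH
  have hFfin : ∀ s, F s ≠ ∞ := fun s => measure_ne_top F s
  have hμfin : ∀ s, μs n s ≠ ∞ := fun s => (lt_of_le_of_lt (hμs1 n s) (by norm_num)).ne
  -- F p.2 ≤ F p.1 + slack and monotonicity facts, in ℝ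
  have hsub : (F p.2).toReal ≤ (F p.1).toReal + (F (p.2 \ p.1)).toReal := by
    have hsub0 : p.2 ⊆ p.1 ∪ (p.2 \ p.1) := by
      intro y hy
      by_cases h : y ∈ p.1
      · exact Set.mem_union_left _ h
      · exact Set.mem_union_right _ ⟨hy, h⟩
    have h1 : F p.2 ≤ F p.1 + F (p.2 \ p.1) :=
      le_trans (measure_mono hsub0) (measure_union_le _ _)
    have := ENNReal.toReal_mono (by
      exact ENNReal.add_ne_top.2 ⟨hFfin _, hFfin _⟩) h1
    rwa [ENNReal.toReal_add (hFfin _) (hFfin _)] at this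
  have hm1 : (μs n p.1).toReal ≤ (μs n H).toReal :=
    ENNReal.toReal_mono (hμfin _) (measure_mono hp1)
  have hm2 : (μs n H).toReal ≤ (μs n p.2).toReal :=
    ENNReal.toReal_mono (hμfin _) (measure_mono hp2)
  have hF1 : (F p.1).toReal ≤ (F H).toReal := ENNReal.toReal_mono (hFfin _) (measure_mono hp1)
  have hF2 : (F H).toReal ≤ (F p.2).toReal := ENNReal.toReal_mono (hFfin _) (measure_mono hp2)
  have hsl := hslack p hpJ
  rw [abs_le]
  constructor
  · -- lower bound
    have := (abs_le.1 he1).1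
    linarith
  · have := (abs_le.1 he2).2
    linarith

end Assembly


lemma abs_ciSup_sub_ciSup_le {ι : Type*} [Nonempty ι] (f g : ι → ℝ)
    (hfb : BddAbove (Set.range f)) (hgb : BddAbove (Set.range g)) {ε : ℝ}
    (h : ∀ i, |f i - g i| ≤ ε) : |(⨆ i, f i) - ⨆ i, g i| ≤ ε := by
  have h1 : (⨆ i, f i) ≤ (⨆ i, g i) + ε := by
    refine ciSup_le fun i => ?_
    have ha : g i ≤ ⨆ i, g i := le_ciSup hgb i
    have hb := (abs_le.1 (h i)).2
    linarith
  have h2 : (⨆ i, g i) ≤ (⨆ i, f i) + ε := by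
    refine ciSup_le fun i => ?_
    have ha : f i ≤ ⨆ i, f i := le_ciSup hfb i
    have hb := (abs_le.1 (h i)).1
    linarith
  rw [abs_le]
  constructor <;> linarith

/-- For i.i.d. samples from `F`, the depth-based Kolmogorov–Smirnov distance to `F₀`
converges almost surely: `sup_x |D_{μₙ}(x) − D_{F₀}(x)| → sup_x |D_F(x) − D_{F₀}(x)|`;
in particular, if the depth functions of `F` and `F₀` differ somewhere, the limit is
strictly positive. -/
theorem stmt_19 {d : ℕ} {Ω : Type*} [MeasurableSpace Ω]
    (P : Measure Ω) [IsProbabilityMeasure P]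
    (F F₀ : Measure (EuclideanSpace ℝ (Fin d)))
    [IsProbabilityMeasure F] [IsProbabilityMeasure F₀]
    (X : ℕ → Ω → EuclideanSpace ℝ (Fin d))
    (hmeas : ∀ i, Measurable (X i))
    (hindep : iIndepFun X P)
    (hid : ∀ i, Measure.map (X i) P = F) :
    (∀ᵐ ω ∂P, Tendsto (fun n =>
        ⨆ x : EuclideanSpace ℝ (Fin d),
          |halfSpaceDepth (empiricalMeasure n (fun i => X i ω)) x - halfSpaceDepth F₀ x|)
      atTop (𝓝 (⨆ x : EuclideanSpace ℝ (Fin d),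
        |halfSpaceDepth F x - halfSpaceDepth F₀ x|))) ∧
    ((∃ x, halfSpaceDepth F x ≠ halfSpaceDepth F₀ x) →
      0 < ⨆ x : EuclideanSpace ℝ (Fin d),
        |halfSpaceDepth F x - halfSpaceDepth F₀ x|) := by
  have hFle1 : ∀ s : Set (EuclideanSpace ℝ (Fin d)), F s ≤ 1 := fun s => prob_le_one
  have hF₀le1 : ∀ s : Set (EuclideanSpace ℝ (Fin d)), F₀ s ≤ 1 := fun s => prob_le_one
  -- boundedness of the depth-difference functions
  have hbdd : ∀ (μ : Measure (EuclideanSpace ℝ (Fin d))), (∀ s, μ s ≤ 1) →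
      BddAbove (Set.range fun x => |halfSpaceDepth μ x - halfSpaceDepth F₀ x|) := by
    intro μ hμ
    refine ⟨1, ?_⟩
    rintro r ⟨x, rfl⟩
    have h1 := depth_nonneg μ x
    have h2 := depth_le_one μ hμ x
    have h3 := depth_nonneg F₀ x
    have h4 := depth_le_one F₀ hF₀le1 x
    rw [abs_le]
    constructor <;> linarith
  constructor
  · -- a.s. convergence
    have hbrkm : ∀ m : ℕ, ∃ J : Set (Set (EuclideanSpace ℝ (Fin d)) ×
        Set (EuclideanSpace ℝ (Fin d))),
        J.Finite ∧ (∀ p ∈ J, MeasurableSet p.1 ∧ MeasurableSet p.2 ∧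
          F (p.2 \ p.1) ≤ ENNReal.ofReal (1 / (m + 1))) ∧
        ∀ u : EuclideanSpace ℝ (Fin d), ‖u‖ = 1 → ∀ s : ℝ,
          ∃ p ∈ J, p.1 ⊆ {y | ⟪u, y⟫ ≤ s} ∧ {y | ⟪u, y⟫ ≤ s} ⊆ p.2 :=
      fun m => exists_brk_top F (ENNReal.ofReal_pos.2 (by positivity))
    choose Jm hJfin hJcond hJcov using hbrkm
    have hgood : ∀ᵐ ω ∂P, ∀ m : ℕ, ∀ p ∈ Jm m,
        (Tendsto (fun n => ((empiricalMeasure n (fun i => X i ω)) p.1).toReal) atTop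
          (𝓝 ((F p.1).toReal)) ∧
         Tendsto (fun n => ((empiricalMeasure n (fun i => X i ω)) p.2).toReal) atTop
          (𝓝 ((F p.2).toReal))) := by
      rw [ae_all_iff]
      intro m
      rw [ae_ball_iff ((hJfin m).countable)]
      intro p hp
      exact (tendsto_empirical_set P F X hmeas hindep hid (hJcond m p hp).1).and
        (tendsto_empirical_set P F X hmeas hindep hid (hJcond m p hp).2.1)
    filter_upwards [hgood] with ω hω
    set μs : ℕ → Measure (EuclideanSpace ℝ (Fin d)) :=
      fun n => empiricalMeasure n (fun i => X i ω) with hμs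
    have hμs1 : ∀ n s, μs n s ≤ 1 := fun n s => emp_le_one n _ s
    have huc := unif_conv F μs hμs1 ?_
    · rw [Metric.tendsto_atTop]
      intro ε hε
      obtain ⟨N, hN⟩ := (eventually_atTop.1 (huc (ε / 2) (by linarith)))
      refine ⟨N, fun n hn => ?_⟩
      have hhalf := hN n hn
      have hdc : ∀ x, |halfSpaceDepth (μs n) x - halfSpaceDepth F x| ≤ ε / 2 :=
        depth_close (μs n) F (by linarith) hhalf
      have hptw : ∀ x, |(|halfSpaceDepth (μs n) x - halfSpaceDepth F₀ x|) -
          (|halfSpaceDepth F x - halfSpaceDepth F₀ x|)| ≤ ε / 2 := by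
        intro x
        refine le_trans (abs_abs_sub_abs_le_abs_sub _ _) ?_
        have heq : (halfSpaceDepth (μs n) x - halfSpaceDepth F₀ x) -
            (halfSpaceDepth F x - halfSpaceDepth F₀ x)
            = halfSpaceDepth (μs n) x - halfSpaceDepth F x := by ring
        rw [heq]
        exact hdc x
      have hfin := abs_ciSup_sub_ciSup_le _ _ (hbdd (μs n) (hμs1 n)) (hbdd F hFle1) hptw
      rw [Real.dist_eq]
      exact lt_of_le_of_lt hfin (by linarith)
    · -- the bracketing hypothesis for unif_conv
      intro ε hε
      obtain ⟨m, hm⟩ := exists_nat_one_div_lt hε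
      refine ⟨Jm m, hJfin m, ?_, fun p hp => hω m p hp, hJcov m⟩
      intro p hp
      have h1 := (hJcond m p hp).2.2
      have h2 := ENNReal.toReal_mono ENNReal.ofReal_ne_top h1
      rw [ENNReal.toReal_ofReal (by positivity)] at h2
      exact le_trans h2 hm.le
  · -- positivity of the limit
    rintro ⟨x₀, hx₀⟩
    have h1 : 0 < |halfSpaceDepth F x₀ - halfSpaceDepth F₀ x₀| :=
      abs_pos.2 (sub_ne_zero.2 hx₀)
    exact lt_of_lt_of_le h1 (le_ciSup (hbdd F hFle1) x₀)
end
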